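/- arXiv:math/9808139 — 6 statements merged into one kernel-verified Lean document; each statement's English description precedes it below -/
import Mathlib

section
/- Let G₁ be a subgroup of G₂, both reduced torsion-free abelian groups, and let x ∈ G₁ with x ≠ 0. Then P⁻(x,G₁) ⊆ P⁻(x,G₂). -/
/-- An abelian group is torsion-free: `n • x = 0` implies `n = 0` or `x = 0`. -/
def IsTorsionFreeAb (G : Type*) [AddCommGroup G] : Prop :=
  ∀ (n : ℤ) (x : G), n • x = 0 → n = 0 ∨ x = 0

/-- An abelian group is reduced: `(ℚ,+)` does not embed into it. -/
def IsReducedAb (G : Type*) [AddCommGroup G] : Prop :=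
  ¬ ∃ f : ℚ →+ G, Function.Injective f

/-- `P(x,G)`: the set of primes `p` such that `x` is divisible by `pⁿ` in `G` for every `n`. -/
def PrimesDiv (G : Type*) [AddCommGroup G] (x : G) : Set ℕ :=
  {p | p.Prime ∧ ∀ n : ℕ, ∃ y : G, (p ^ n) • y = x}

/-- `P⁻(x,G)`: the set of primes `p ∉ P(x,G)` such that some `y ≠ 0` is divisible by all
powers of every prime `q ≠ p` and `p ∈ P(x-y,G)`. -/
def PrimesDivNeg (G : Type*) [AddCommGroup G] (x : G) : Set ℕ :=
  {p | p.Prime ∧ p ∉ PrimesDiv G x ∧ ∃ y : G, y ≠ 0 ∧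
    (∀ q : ℕ, q.Prime → q ≠ p → q ∈ PrimesDiv G y) ∧ p ∈ PrimesDiv G (x - y)}

/-- A subgroup `H` of an abelian group `G` is pure if `nG ∩ H = nH` for every integer `n`. -/
def IsPureSubgroup {G : Type*} [AddCommGroup G] (H : AddSubgroup G) : Prop :=
  ∀ (n : ℤ) (h : G), h ∈ H → (∃ g : G, n • g = h) → ∃ h' ∈ H, n • h' = h

lemma aux_div_mul {G : Type*} [AddCommGroup G] (y : G) (a b : ℕ) (hab : Nat.Coprime a b)
    (ha : ∃ z, (a : ℤ) • z = y) (hb : ∃ z, (b : ℤ) • z = y) :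
    ∃ z, ((a * b : ℕ) : ℤ) • z = y := by
  obtain ⟨za, hza⟩ := ha
  obtain ⟨zb, hzb⟩ := hb
  have hcop : IsCoprime (a : ℤ) (b : ℤ) :=
    Int.isCoprime_iff_gcd_eq_one.mpr (by exact_mod_cast hab)
  obtain ⟨u, v, huv⟩ := hcop
  refine ⟨u • zb + v • za, ?_⟩
  push_cast
  have hA : ((a : ℤ) * b) • (u • zb) = (u * a) • y := by
    rw [smul_smul, show (a : ℤ) * b * u = (u * a) * b from by ring, mul_smul, hzb]
  have hB : ((a : ℤ) * b) • (v • za) = (v * b) • y := by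
    rw [smul_smul, show (a : ℤ) * b * v = (v * b) * a from by ring, mul_smul, hza]
  rw [smul_add, hA, hB, ← add_smul, show u * a + v * b = 1 from huv, one_smul]

lemma aux_no_fully_divisible {G : Type*} [AddCommGroup G]
    (htf : IsTorsionFreeAb G) (hred : IsReducedAb G) (y : G) (hy : y ≠ 0)
    (h : ∀ n : ℕ, 0 < n → ∃ z : G, (n : ℤ) • z = y) : False := by
  have cancel : ∀ (N : ℤ) (u v : G), N ≠ 0 → N • u = N • v → u = v := by
    intro N u v hN huv
    have : N • (u - v) = 0 := by rw [smul_sub, huv, sub_self]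
    rcases htf N (u - v) this with h1 | h1
    · exact absurd h1 hN
    · exact sub_eq_zero.mp h1
  set z : ℕ → G := fun n => if hn : 0 < n then (h n hn).choose else 0 with hzdef
  have hz : ∀ n : ℕ, 0 < n → (n : ℤ) • z n = y := by
    intro n hn
    simp only [hzdef, dif_pos hn]
    exact (h n hn).choose_spec
  have hmul : ∀ (c : ℤ) (d : ℕ), 0 < d → (c * d) • z d = c • y := by
    intro c d hd
    rw [mul_smul, hz d hd]
  have hnum : ∀ q : ℚ, (q.num : ℚ) = q * q.den := by
    intro q
    have h := Rat.num_div_den q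
    rw [div_eq_iff (by exact_mod_cast q.den_ne_zero : ((q.den : ℚ)) ≠ 0)] at h
    exact h
  have key2 : ∀ a b : ℚ, (a + b).num * ((a.den : ℤ) * b.den) =
      (a.num * b.den + b.num * a.den) * (a + b).den := by
    intro a b
    apply Int.cast_injective (α := ℚ)
    push_cast
    rw [hnum (a + b), hnum a, hnum b]
    ring
  let f : ℚ →+ G :=
    { toFun := fun q => q.num • z q.den
      map_zero' := by simp
      map_add' := by
        intro a b
        have hd : ∀ q : ℚ, (0 : ℤ) < q.den := fun q => by exact_mod_cast q.pos
        apply cancel (((a + b).den : ℤ) * a.den * b.den)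
        · positivity
        · rw [smul_add, smul_smul, smul_smul, smul_smul]
          have e1 : ((a + b).den : ℤ) * a.den * b.den * (a + b).num
              = ((a + b).num * ((a.den : ℤ) * b.den)) * (a + b).den := by ring
          have e2 : ((a + b).den : ℤ) * a.den * b.den * a.num
              = (a.num * (((a + b).den : ℤ) * b.den)) * a.den := by ring
          have e3 : ((a + b).den : ℤ) * a.den * b.den * b.num
              = (b.num * (((a + b).den : ℤ) * a.den)) * b.den := by ring
          rw [e1, e2, e3, hmul _ _ (a + b).pos, hmul _ _ a.pos, hmul _ _ b.pos,
            key2 a b, ← add_smul]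
          congr 1
          ring }
  have finj : Function.Injective f := by
    rw [injective_iff_map_eq_zero]
    intro q hq0
    by_contra hq
    have h1 : (q.num * q.den) • z q.den = 0 := by
      rw [mul_comm, mul_smul]
      simp only [f, AddMonoidHom.coe_mk, ZeroHom.coe_mk] at hq0
      rw [hq0, smul_zero]
    rw [hmul q.num q.den q.pos] at h1
    rcases htf q.num y h1 with h2 | h2
    · exact hq (Rat.zero_iff_num_zero.mpr h2)
    · exact hy h2
  exact hred ⟨f, finj⟩

/-- If `G₁` is a subgroup of `G₂`, both reduced torsion-free, and `0 ≠ x ∈ G₁`, then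
`P⁻(x,G₁) ⊆ P⁻(x,G₂)`. -/
theorem PrimesDivNeg_subset_of_subgroup (G : Type) [AddCommGroup G]
    (hGtf : IsTorsionFreeAb G) (hGred : IsReducedAb G)
    (H : AddSubgroup G) (hHtf : IsTorsionFreeAb H) (hHred : IsReducedAb H)
    (x : G) (hxH : x ∈ H) (hx : x ≠ 0) :
    PrimesDivNeg (↥H) ⟨x, hxH⟩ ⊆ PrimesDivNeg G x := by
  intro p hp
  obtain ⟨hpp, hpnd, y, hy0, hq, hpdiff⟩ := hp
  -- transfer of PrimesDiv from H to G
  have transfer : ∀ (g : H) (q : ℕ), q ∈ PrimesDiv (↥H) g → q ∈ PrimesDiv G (↑g) := by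
    rintro g q ⟨hq1, hq2⟩
    refine ⟨hq1, fun n => ?_⟩
    obtain ⟨w, hw⟩ := hq2 n
    exact ⟨(w : G), by exact_mod_cast congrArg (Subtype.val) hw⟩
  have hyG : (y : G) ≠ 0 := fun h => hy0 (Subtype.ext h)
  have hqG : ∀ q : ℕ, q.Prime → q ≠ p → q ∈ PrimesDiv G (y : G) := fun q h1 h2 =>
    transfer y q (hq q h1 h2)
  have hpdiffG : p ∈ PrimesDiv G (x - (y : G)) := by
    have := transfer (⟨x, hxH⟩ - y) p hpdiff
    simpa using this
  refine ⟨hpp, ?_, (y : G), hyG, hqG, hpdiffG⟩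
  -- main point : p ∉ PrimesDiv G x
  intro hpx
  -- then y is divisible by every prime power in G
  have hprimepow : ∀ q k : ℕ, q.Prime → ∃ z : G, ((q ^ k : ℕ) : ℤ) • z = (y : G) := by
    intro q k hqprime
    by_cases hqp : q = p
    · subst hqp
      obtain ⟨z1, hz1⟩ := hpdiffG.2 k
      obtain ⟨z2, hz2⟩ := hpx.2 k
      refine ⟨z2 - z1, ?_⟩
      rw [natCast_zsmul, smul_sub, hz1, hz2]
      abel
    · obtain ⟨z, hz⟩ := (hqG q hqprime hqp).2 k
      exact ⟨z, by rw [natCast_zsmul]; exact hz⟩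
  have hall : ∀ n : ℕ, 0 < n → ∃ z : G, (n : ℤ) • z = (y : G) := by
    intro n hn
    induction n using Nat.recOnPosPrimePosCoprime with
    | prime_pow q k hq hk => exact hprimepow q k hq
    | zero => exact absurd hn (lt_irrefl 0)
    | one => exact ⟨(y : G), by simp⟩
    | coprime a b ha hb hab iha ihb =>
        exact aux_div_mul (y : G) a b hab (iha (by omega)) (ihb (by omega))
  exact aux_no_fully_divisible hGtf hGred (y : G) hyG hall
end

section
/- Let G be a reduced torsion-free abelian group, x ∈ G with x ≠ 0, and p a prime with p ∉ P(x,G). Then there exists a reduced torsion-free abelian group G' containing G as a pure subgroup, such that G'/G has rank 1 (i.e. G' is generated over G by countably many elements lying in the divisible hull of a single element over G) and p ∈ P⁻(x,G'). -/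
namespace RankOne

variable {G : Type} [AddCommGroup G]

/-- The submonoid element `p^n`. -/
def pw (p : ℕ) (n : ℕ) : Submonoid.powers ((p : ℤ)) := ⟨(p : ℤ) ^ n, n, rfl⟩

lemma pw_mul (p : ℕ) (n m : ℕ) : pw p n * pw p m = pw p (n + m) :=
  Subtype.ext (by simp [pw, pow_add])

lemma tf_cancel (hGtf : IsTorsionFreeAb G) {c : ℤ} (hc : c ≠ 0) {g g' : G}
    (h : c • g = c • g') : g = g' := by
  have h2 : c • (g - g') = 0 := by rw [smul_sub, h, sub_self]
  rcases hGtf c (g - g') h2 with h3 | h3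
  · exact absurd h3 hc
  · exact sub_eq_zero.mp h3

lemma ppow_ne (p : ℕ) (hp : p.Prime) (n : ℕ) : ((p : ℤ) ^ n) ≠ 0 :=
  pow_ne_zero _ (by exact_mod_cast hp.ne_zero)

/-- transfer equality of fractions to the group. -/
lemma mk_transfer (hGtf : IsTorsionFreeAb G) {p : ℕ} (hp : p.Prime) {a b : G} {n k : ℕ}
    (h : LocalizedModule.mk a (pw p n) = LocalizedModule.mk b (pw p k)) :
    (p : ℤ) ^ k • a = (p : ℤ) ^ n • b := by
  rcases LocalizedModule.mk_eq.mp h with ⟨u, hu⟩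
  obtain ⟨w, hw⟩ := u.2
  simp only [Submonoid.smul_def] at hu
  refine tf_cancel hGtf (c := (u : ℤ)) ?_ ?_
  · rw [← hw]; exact ppow_ne p hp w
  · exact hu

lemma mk_eq_mk_of {p : ℕ} {a b : G} {n k : ℕ}
    (h : (p : ℤ) ^ k • a = (p : ℤ) ^ n • b) :
    LocalizedModule.mk a (pw p n) = LocalizedModule.mk b (pw p k) :=
  LocalizedModule.mk_eq.mpr ⟨1, by simpa [Submonoid.smul_def, pw] using h⟩

lemma mk_zero_transfer (hGtf : IsTorsionFreeAb G) {p : ℕ} (hp : p.Prime) {a : G}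
    {s : Submonoid.powers ((p : ℤ))} (h : LocalizedModule.mk a s = 0) : a = 0 := by
  rw [← LocalizedModule.zero_mk (1 : Submonoid.powers ((p:ℤ)))] at h
  rcases LocalizedModule.mk_eq.mp h with ⟨u, hu⟩
  obtain ⟨w, hw⟩ := u.2
  simp only [Submonoid.smul_def, smul_zero, OneMemClass.coe_one, one_smul] at hu
  rcases hGtf (u : ℤ) a hu with h3 | h3
  · exact absurd (h3 ▸ hw) (ppow_ne p hp w)
  · exact h3

lemma nsmul_mk {p : ℕ} (c : ℕ) (g : G) (s : Submonoid.powers ((p : ℤ))) :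
    c • (LocalizedModule.mk g s) = LocalizedModule.mk (c • g) s := by
  induction c with
  | zero => rw [zero_smul, zero_smul, LocalizedModule.zero_mk]
  | succ k ih =>
      rw [succ_nsmul, ih, succ_nsmul, LocalizedModule.mk_add_mk, ← smul_add,
        LocalizedModule.mk_cancel_common_left]

lemma zsmul_mk {p : ℕ} (c : ℤ) (g : G) (s : Submonoid.powers ((p : ℤ))) :
    c • (LocalizedModule.mk g s) = LocalizedModule.mk (c • g) s := by
  obtain ⟨n, rfl | rfl⟩ := Int.eq_nat_or_neg c
  · rw [natCast_zsmul, nsmul_mk, natCast_zsmul]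
  · rw [neg_smul, neg_smul, natCast_zsmul, natCast_zsmul, nsmul_mk,
      ← LocalizedModule.mk_neg]

/-- denominator of `m / b^n` divides `b^n`. -/
lemma den_div_pow_dvd (m : ℤ) (b : ℕ) (n : ℕ) :
    (((m : ℚ)) / (b : ℚ) ^ n).den ∣ b ^ n := by
  have h := Rat.den_dvd m ((b : ℤ) ^ n)
  rw [Rat.divInt_eq_div] at h
  have hc : (((b : ℤ) ^ n : ℤ) : ℚ) = (b : ℚ) ^ n := by push_cast; ring
  rw [hc] at h
  exact_mod_cast h

lemma den_sub_dvd (a b : ℚ) : (a - b).den ∣ a.den * b.den := by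
  rw [sub_eq_add_neg]
  simpa [Rat.neg_den] using Rat.add_den_dvd a (-b)

lemma exists_int_of {p : ℕ} (n : ℕ) {c : ℚ} (hd : c.den ∣ p ^ n)
    (hcop : c.den.Coprime p) : ∃ M : ℤ, (M : ℚ) = c := by
  have h1 : c.den = 1 := (Nat.Coprime.eq_one_of_dvd (hcop.pow_right n) hd)
  exact ⟨c.num, Rat.coe_int_num_of_den_eq_one h1⟩

lemma pw_coe (p n : ℕ) : ((pw p n : ℤ)) = (p : ℤ) ^ n := rfl

def bigS (p : ℕ) (hp : p.Prime) (x : G) :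
    AddSubgroup (LocalizedModule (Submonoid.powers ((p : ℤ))) G × ℚ) where
  carrier := {w | ∃ (g : G) (m : ℤ) (n : ℕ) (a : ℚ), a.den.Coprime p ∧
      w.1 = LocalizedModule.mk ((p : ℤ) ^ n • g + m • x) (pw p n) ∧
      w.2 = a - (m : ℚ) / (p : ℚ) ^ n}
  zero_mem' := by
    refine ⟨0, 0, 0, 0, by simp [Nat.coprime_one_left], ?_, by norm_num⟩
    simp [LocalizedModule.zero_mk]
  neg_mem' := by
    rintro ⟨v, t⟩ ⟨g, m, n, a, hcop, h1, h2⟩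
    dsimp only at h1 h2 ⊢
    refine ⟨-g, -m, n, -a, by rwa [Rat.neg_den], ?_, ?_⟩
    · show -v = _
      rw [h1, ← LocalizedModule.mk_neg]
      congr 1
      simp [smul_neg, neg_smul]
      abel
    · show -t = _
      rw [h2]; push_cast; ring
  add_mem' := by
    rintro ⟨v1, t1⟩ ⟨v2, t2⟩ ⟨g1, m1, n1, a1, hcop1, h11, h12⟩ ⟨g2, m2, n2, a2, hcop2, h21, h22⟩
    dsimp only at h11 h12 h21 h22 ⊢
    have hpQ : (p : ℚ) ≠ 0 := by exact_mod_cast hp.ne_zero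
    refine ⟨g1 + g2, (p : ℤ) ^ n2 * m1 + (p : ℤ) ^ n1 * m2,
      n1 + n2, a1 + a2, ?_, ?_, ?_⟩
    · exact Nat.Coprime.coprime_dvd_left (Rat.add_den_dvd a1 a2) (hcop1.mul hcop2)
    · show v1 + v2 = _
      rw [h11, h21, LocalizedModule.mk_add_mk]
      have hsd : pw p n1 * pw p n2 = pw p (n1 + n2) := Subtype.ext (by simp [pw, pow_add])
      rw [hsd]
      congr 1
      simp only [Submonoid.smul_def, pw_coe]
      simp only [smul_add, smul_smul, add_smul, ← pow_add]
      rw [add_comm n2 n1]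
      abel
    · show t1 + t2 = _
      rw [h12, h22]
      push_cast
      field_simp
      ring


section Hom

variable {G : Type} [AddCommGroup G] (p : ℕ) (hp : p.Prime) (x : G)

lemma emb_mem (g : G) : ((LocalizedModule.mk g (pw p 0) :
    LocalizedModule (Submonoid.powers ((p : ℤ))) G), (0 : ℚ)) ∈ bigS p hp x := by
  refine ⟨g, 0, 0, 0, by simp, ?_, by norm_num⟩
  dsimp only
  congr 1
  simp

noncomputable def iota : G →+ ↥(bigS p hp x) where
  toFun g := ⟨(LocalizedModule.mk g (pw p 0), 0), emb_mem p hp x g⟩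
  map_zero' := by
    ext : 1
    show (LocalizedModule.mk 0 (pw p 0), (0:ℚ)) = 0
    rw [LocalizedModule.zero_mk]
    rfl
  map_add' g g' := by
    ext : 1
    show (LocalizedModule.mk (g + g') (pw p 0), (0:ℚ)) = _
    have : LocalizedModule.mk (g + g') (pw p 0) =
        LocalizedModule.mk g (pw p 0) + LocalizedModule.mk g' (pw p 0) := by
      rw [LocalizedModule.mk_add_mk]
      apply mk_eq_mk_of (p := p) (n := 0 + 0) (k := 0)
      simp [Submonoid.smul_def, pw_coe, smul_add]
    rw [AddSubgroup.coe_add]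
    show (LocalizedModule.mk (g + g') (pw p 0), (0:ℚ)) =
      (LocalizedModule.mk g (pw p 0), (0:ℚ)) + (LocalizedModule.mk g' (pw p 0), (0:ℚ))
    rw [Prod.mk_add_mk, this, add_zero]

lemma iota_coe (g : G) : ((iota p hp x g : ↥(bigS p hp x)) :
    LocalizedModule (Submonoid.powers ((p : ℤ))) G × ℚ) =
    (LocalizedModule.mk g (pw p 0), 0) := rfl

lemma iota_inj (hGtf : IsTorsionFreeAb G) : Function.Injective (iota p hp x) := by
  intro a b h
  have h1 : LocalizedModule.mk a (pw p 0) = LocalizedModule.mk b (pw p 0) := by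
    have := congrArg (fun w : ↥(bigS p hp x) =>
      (w : LocalizedModule (Submonoid.powers ((p : ℤ))) G × ℚ).1) h
    simpa [iota_coe] using this
  have h2 := mk_transfer hGtf hp h1
  simpa using h2

/-- Kernel analysis: an element of `bigS` whose second coordinate has denominator coprime
to `p` has first coordinate in the image of `G`. -/
lemma exists_preimage {w : LocalizedModule (Submonoid.powers ((p : ℤ))) G × ℚ}
    (hw : w ∈ bigS p hp x) (hden : w.2.den.Coprime p) :
    ∃ g : G, w.1 = LocalizedModule.mk g (pw p 0) := by
  obtain ⟨g, m, n, a, hcop, h1, h2⟩ := hw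
  have hpQ : (p : ℚ) ≠ 0 := by exact_mod_cast hp.ne_zero
  have hc : ((m : ℚ) / (p : ℚ) ^ n) = a - w.2 := by rw [h2]; ring
  have hcop2 : ((m : ℚ) / (p : ℚ) ^ n).den.Coprime p := by
    rw [hc]
    exact Nat.Coprime.coprime_dvd_left (den_sub_dvd a w.2) (hcop.mul hden)
  obtain ⟨M, hM⟩ := exists_int_of n (den_div_pow_dvd m p n) hcop2
  have hm : m = M * (p : ℤ) ^ n := by
    have hq : (m : ℚ) = (M : ℚ) * (p : ℚ) ^ n := by
      rw [eq_div_iff (pow_ne_zero n hpQ)] at hM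
      rw [← hM]
    exact_mod_cast hq
  refine ⟨g + M • x, ?_⟩
  rw [h1]
  apply mk_eq_mk_of
  rw [hm]
  module

/-- The key divisibility analysis for `p`-divisibility of `h₀ + x`. -/
lemma pdiv_step (hGtf : IsTorsionFreeAb G)
    {w : LocalizedModule (Submonoid.powers ((p : ℤ))) G × ℚ}
    (hw : w ∈ bigS p hp x) {k : ℕ} (h2 : w.2 = 1 / (p : ℚ) ^ k)
    {h₀ : G} (h1 : (p : ℤ) ^ k • w.1 = LocalizedModule.mk h₀ (pw p 0)) :
    ∃ u : G, (p : ℤ) ^ k • u = h₀ + x := by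
  obtain ⟨g, m, n, a, hcop, hw1, hw2⟩ := hw
  have hpQ : (p : ℚ) ≠ 0 := by exact_mod_cast hp.ne_zero
  have ha : a = ((m * (p : ℤ) ^ k + (p : ℤ) ^ n : ℤ) : ℚ) / (p : ℚ) ^ (n + k) := by
    have h3 : a = w.2 + (m : ℚ) / (p : ℚ) ^ n := by rw [hw2]; ring
    rw [h3, h2]
    push_cast
    field_simp
    ring
  have hden : a.den ∣ p ^ (n + k) := by rw [ha]; exact den_div_pow_dvd _ p (n + k)
  obtain ⟨A, hA⟩ := exists_int_of (n + k) hden hcop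
  have hmk : m * (p : ℤ) ^ k = A * (p : ℤ) ^ (n + k) - (p : ℤ) ^ n := by
    have hq : (m : ℚ) * (p : ℚ) ^ k = (A : ℚ) * (p : ℚ) ^ (n + k) - (p : ℚ) ^ n := by
      have h4 : (A : ℚ) = ((m * (p : ℤ) ^ k + (p : ℤ) ^ n : ℤ) : ℚ) / (p : ℚ) ^ (n + k) := by
        rw [hA, ha]
      rw [eq_div_iff (pow_ne_zero (n + k) hpQ)] at h4
      push_cast at h4
      linarith [h4]
    exact_mod_cast hq
  rw [hw1, zsmul_mk] at h1
  have h4 := mk_transfer hGtf hp h1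
  -- h4 : (p:ℤ)^0 • ((p:ℤ)^k • ((p:ℤ)^n • g + m • x)) = (p:ℤ)^n • h₀
  refine ⟨g + A • x, ?_⟩
  apply tf_cancel hGtf (c := (p : ℤ) ^ n) (ppow_ne p hp n)
  have h5 : (p : ℤ) ^ (n + k) • g + (m * (p : ℤ) ^ k) • x = (p : ℤ) ^ n • h₀ := by
    rw [← h4]
    module
  calc (p : ℤ) ^ n • ((p : ℤ) ^ k • (g + A • x))
      = (p : ℤ) ^ (n + k) • g + (m * (p : ℤ) ^ k) • x + (p : ℤ) ^ n • x := by
        rw [hmk]; module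
    _ = (p : ℤ) ^ n • h₀ + (p : ℤ) ^ n • x := by rw [h5]
    _ = (p : ℤ) ^ n • (h₀ + x) := by module

end Hom

section TFRed

variable {G : Type} [AddCommGroup G] (p : ℕ) (hp : p.Prime) (x : G)

lemma loc_tf (hp : p.Prime) (hGtf : IsTorsionFreeAb G) {c : ℤ} (hc : c ≠ 0)
    {v : LocalizedModule (Submonoid.powers ((p : ℤ))) G} (h : c • v = 0) : v = 0 := by
  induction v using LocalizedModule.induction_on with
  | _ g s =>
    rw [zsmul_mk] at h
    have h2 := mk_zero_transfer hGtf hp h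
    rcases hGtf c g h2 with h1 | h1
    · exact absurd h1 hc
    · rw [h1, LocalizedModule.zero_mk]

lemma prod_zsmul_fst (c : ℤ) (v : LocalizedModule (Submonoid.powers ((p : ℤ))) G) (t : ℚ) :
    (c • ((v, t) : LocalizedModule (Submonoid.powers ((p : ℤ))) G × ℚ)).1 = c • v := rfl

lemma prod_zsmul_snd (c : ℤ) (v : LocalizedModule (Submonoid.powers ((p : ℤ))) G) (t : ℚ) :
    (c • ((v, t) : LocalizedModule (Submonoid.powers ((p : ℤ))) G × ℚ)).2 = c • t := rfl

lemma bigS_coe_zsmul (c : ℤ) (w : ↥(bigS p hp x)) :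
    ((c • w : ↥(bigS p hp x)) : LocalizedModule (Submonoid.powers ((p : ℤ))) G × ℚ) =
      c • (w : LocalizedModule (Submonoid.powers ((p : ℤ))) G × ℚ) := rfl

lemma bigS_tf (hGtf : IsTorsionFreeAb G) : IsTorsionFreeAb ↥(bigS p hp x) := by
  intro c w h
  by_cases hc : c = 0
  · exact Or.inl hc
  right
  obtain ⟨⟨v, t⟩, hw⟩ := w
  have h0 : c • ((v, t) : LocalizedModule (Submonoid.powers ((p : ℤ))) G × ℚ) = 0 := by
    have := congrArg (fun u : ↥(bigS p hp x) =>
      (u : LocalizedModule (Submonoid.powers ((p : ℤ))) G × ℚ)) h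
    simpa [bigS_coe_zsmul] using this
  have h1 : c • v = 0 := by
    have := congrArg Prod.fst h0
    simpa [prod_zsmul_fst] using this
  have h2 : c • t = 0 := by
    have := congrArg Prod.snd h0
    simpa [prod_zsmul_snd] using this
  have hv : v = 0 := loc_tf p hp hGtf hc h1
  have ht : t = 0 := by
    rcases smul_eq_zero.mp h2 with h3 | h3
    · exact absurd h3 hc
    · exact h3
  apply Subtype.ext
  show (v, t) = 0
  rw [hv, ht]
  rfl

lemma rat_hom_linear (φ : ℚ →+ ℚ) (s : ℚ) : φ s = s * φ 1 := by
  have h := map_smul (AddMonoidHom.toRatLinearMap φ) s 1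
  simpa [AddMonoidHom.coe_toRatLinearMap, smul_eq_mul] using h

end TFRed

section Reduced

variable {G : Type} [AddCommGroup G] (p : ℕ) (hp : p.Prime) (x : G)

lemma bigS_reduced (hGtf : IsTorsionFreeAb G) (hGred : IsReducedAb G)
    (hpx : p ∉ PrimesDiv G x) (hneg : p ∉ PrimesDivNeg G x) :
    IsReducedAb ↥(bigS p hp x) := by
  rintro ⟨f, hf⟩
  let π : ↥(bigS p hp x) →+ ℚ :=
    (AddMonoidHom.snd (LocalizedModule (Submonoid.powers ((p : ℤ))) G) ℚ).comp
      (bigS p hp x).subtype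
  let φ : ℚ →+ ℚ := π.comp f
  have hφ : ∀ s, φ s = s * φ 1 := fun s => rat_hom_linear φ s
  by_cases hr : φ 1 = 0
  · -- `f` lands in the image of `G`; contradiction with `G` reduced.
    have hker : ∀ s : ℚ,
        ∃ g : G, ((f s : ↥(bigS p hp x)) :
          LocalizedModule (Submonoid.powers ((p : ℤ))) G × ℚ) =
          (LocalizedModule.mk g (pw p 0), 0) := by
      intro s
      have h2 : ((f s : ↥(bigS p hp x)) :
          LocalizedModule (Submonoid.powers ((p : ℤ))) G × ℚ).2 = 0 := by
        have h3 := hφ s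
        rw [hr, mul_zero] at h3
        exact h3
      obtain ⟨g, hg⟩ := exists_preimage p hp x (f s).2 (by rw [h2]; simp)
      exact ⟨g, Prod.ext hg h2⟩
    choose gg hgg using hker
    have hemb : ∀ s, iota p hp x (gg s) = f s := by
      intro s
      apply Subtype.ext
      rw [iota_coe, hgg]
    have hadd : ∀ s t, gg (s + t) = gg s + gg t := by
      intro s t
      apply iota_inj p hp x hGtf
      rw [map_add, hemb, hemb, hemb]
      exact map_add f s t
    refine hGred ⟨AddMonoidHom.mk' gg hadd, ?_⟩
    intro s t hst
    apply hf
    rw [← hemb s, ← hemb t]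
    exact congrArg (iota p hp x) hst
  · -- rescale so that the second coordinate is the identity
    set r := φ 1 with hrdef
    let f' : ℚ →+ ↥(bigS p hp x) :=
      f.comp (AddMonoidHom.mk' (fun s => r⁻¹ * s) (by intro a b; ring))
    have hπ' : ∀ s, ((f' s : ↥(bigS p hp x)) :
        LocalizedModule (Submonoid.powers ((p : ℤ))) G × ℚ).2 = s := by
      intro s
      show φ (r⁻¹ * s) = s
      rw [hφ (r⁻¹ * s)]
      field_simp
    have h1den : ((f' 1 : ↥(bigS p hp x)) :
        LocalizedModule (Submonoid.powers ((p : ℤ))) G × ℚ).2.den.Coprime p := by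
      rw [hπ' 1]
      simp [Nat.coprime_one_left]
    obtain ⟨h₀, hh₀⟩ := exists_preimage p hp x (f' 1).2 h1den
    -- q-divisibility of h₀ for every prime q ≠ p
    have hqdiv : ∀ q : ℕ, q.Prime → q ≠ p → ∀ j : ℕ, ∃ u : G, (q : ℤ) ^ j • u = h₀ := by
      intro q hq hqp j
      have hq0 : (q : ℚ) ≠ 0 := by exact_mod_cast hq.ne_zero
      have hscal : ((q : ℤ) ^ j) • ((1 : ℚ) / (q : ℚ) ^ j) = 1 := by
        rw [zsmul_eq_mul]
        push_cast
        field_simp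
      have hkey : ((q : ℤ) ^ j) • f' (1 / (q : ℚ) ^ j) = f' 1 := by
        rw [← map_zsmul, hscal]
      have hwden : ((f' (1 / (q : ℚ) ^ j) : ↥(bigS p hp x)) :
          LocalizedModule (Submonoid.powers ((p : ℤ))) G × ℚ).2.den.Coprime p := by
        rw [hπ']
        have hdvd : ((1 : ℚ) / (q : ℚ) ^ j).den ∣ q ^ j := by
          have h5 := den_div_pow_dvd 1 q j
          simpa using h5
        exact Nat.Coprime.coprime_dvd_left hdvd
          (Nat.Coprime.pow_left j ((Nat.coprime_primes hq hp).mpr hqp))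
      obtain ⟨u, hu⟩ := exists_preimage p hp x (f' (1 / (q : ℚ) ^ j)).2 hwden
      have hco : ((q : ℤ) ^ j) • ((f' (1 / (q : ℚ) ^ j) : ↥(bigS p hp x)) :
          LocalizedModule (Submonoid.powers ((p : ℤ))) G × ℚ).1 =
          LocalizedModule.mk h₀ (pw p 0) := by
        rw [← hh₀, ← hkey, bigS_coe_zsmul]
        rfl
      rw [hu, zsmul_mk] at hco
      have h6 := mk_transfer hGtf hp hco
      refine ⟨u, ?_⟩
      simpa using h6
    -- p-divisibility of h₀ + x
    have hpdiv : ∀ k : ℕ, ∃ u : G, (p : ℤ) ^ k • u = h₀ + x := by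
      intro k
      have hp0 : (p : ℚ) ≠ 0 := by exact_mod_cast hp.ne_zero
      have hscal : ((p : ℤ) ^ k) • ((1 : ℚ) / (p : ℚ) ^ k) = 1 := by
        rw [zsmul_eq_mul]
        push_cast
        field_simp
      have hkey : ((p : ℤ) ^ k) • f' (1 / (p : ℚ) ^ k) = f' 1 := by
        rw [← map_zsmul, hscal]
      have hco : ((p : ℤ) ^ k) • ((f' (1 / (p : ℚ) ^ k) : ↥(bigS p hp x)) :
          LocalizedModule (Submonoid.powers ((p : ℤ))) G × ℚ).1 =
          LocalizedModule.mk h₀ (pw p 0) := by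
        rw [← hh₀, ← hkey, bigS_coe_zsmul]
        rfl
      exact pdiv_step p hp x hGtf (f' (1 / (p : ℚ) ^ k)).2 (hπ' _) hco
    by_cases hh : h₀ = 0
    · refine hpx ⟨hp, fun n => ?_⟩
      obtain ⟨u, hu⟩ := hpdiv n
      rw [hh, zero_add] at hu
      refine ⟨u, ?_⟩
      rw [← natCast_zsmul]
      push_cast
      exact hu
    · refine hneg ⟨hp, hpx, -h₀, neg_ne_zero.mpr hh, ?_, ?_⟩
      · intro q hq hqp
        refine ⟨hq, fun n => ?_⟩
        obtain ⟨u, hu⟩ := hqdiv q hq hqp n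
        refine ⟨-u, ?_⟩
        rw [← natCast_zsmul]
        push_cast
        rw [smul_neg, hu]
      · refine ⟨hp, fun n => ?_⟩
        obtain ⟨u, hu⟩ := hpdiv n
        refine ⟨u, ?_⟩
        rw [← natCast_zsmul]
        push_cast
        rw [hu, sub_neg_eq_add, add_comm]

end Reduced

section CaseA

variable {G : Type} [AddCommGroup G]

lemma rat_to_int_zero (ψ : ℚ →+ ℤ) (s : ℚ) : ψ s = 0 := by
  have key : ∀ n : ℕ, 0 < n → ((n : ℤ)) ∣ ψ s := by
    intro n hn
    have hn0 : ((n : ℚ)) ≠ 0 := by exact_mod_cast hn.ne'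
    have h1 : (n : ℤ) • (s / (n : ℚ)) = s := by
      rw [zsmul_eq_mul]
      push_cast
      field_simp
    have h3 : ψ s = (n : ℤ) • ψ (s / (n : ℚ)) := by rw [← map_zsmul, h1]
    exact ⟨ψ (s / (n : ℚ)), by rw [h3]; simp [zsmul_eq_mul]⟩
  by_contra h
  have hdvd := key ((ψ s).natAbs + 1) (Nat.succ_pos _)
  have habs : |ψ s| < ((ψ s).natAbs + 1 : ℤ) := by
    rw [Int.abs_eq_natAbs]
    push_cast
    omega
  exact h (Int.eq_zero_of_abs_lt_dvd (by exact_mod_cast hdvd) (by exact_mod_cast habs))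

lemma prod_int_reduced (hGred : IsReducedAb G) : IsReducedAb (G × ℤ) := by
  rintro ⟨f, hf⟩
  refine hGred ⟨(AddMonoidHom.fst G ℤ).comp f, ?_⟩
  intro s t h
  apply hf
  have h2 : ((AddMonoidHom.snd G ℤ).comp f) s = ((AddMonoidHom.snd G ℤ).comp f) t := by
    rw [rat_to_int_zero, rat_to_int_zero]
  exact Prod.ext h h2

end CaseA

end RankOne

/-- If `G` is reduced torsion-free, `x ≠ 0`, and `p` is a prime with `p ∉ P(x,G)`, then there
is a reduced torsion-free pure extension `G'` of `G` with `rk(G'/G) = 1` (witnessed by an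
element `z`: no nonzero multiple of `z` lies in `G`, and every element of `G'` has a nonzero
multiple lying in `G + ℤz`) such that `p ∈ P⁻(x,G')`. -/
theorem exists_rank_one_pure_extension (G : Type) [AddCommGroup G]
    (hGtf : IsTorsionFreeAb G) (hGred : IsReducedAb G)
    (x : G) (hx : x ≠ 0) (p : ℕ) (hp : p.Prime) (hpx : p ∉ PrimesDiv G x) :
    ∃ (G' : AddCommGrpCat.{0}) (ι : G →+ G'),
      Function.Injective ι ∧
      IsTorsionFreeAb G' ∧ IsReducedAb G' ∧
      IsPureSubgroup ι.range ∧
      (∃ z : ↥G', (∀ n : ℤ, n ≠ 0 → n • z ∉ Set.range ι) ∧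
        ∀ w : ↥G', ∃ a b : ℤ, b ≠ 0 ∧ b • w - a • z ∈ Set.range ι) ∧
      p ∈ PrimesDivNeg (↥G') (ι x) := by
  classical
  by_cases hneg : p ∈ PrimesDivNeg G x
  · -- `P⁻` is already realized in `G`: the trivial rank-one extension `G × ℤ` works.
    obtain ⟨-, -, y, hy0, hyq, hyp⟩ := hneg
    refine ⟨AddCommGrpCat.of (G × ℤ), AddMonoidHom.inl G ℤ, ?_, ?_, ?_, ?_, ?_, ?_⟩
    · intro a b h
      exact congrArg Prod.fst h
    · rintro c ⟨w1, w2⟩ h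
      by_cases hc : c = 0
      · exact Or.inl hc
      right
      have h1 : c • w1 = 0 := congrArg Prod.fst h
      have h2 : c • w2 = 0 := congrArg Prod.snd h
      have hw1 : w1 = 0 := by
        rcases hGtf c w1 h1 with h3 | h3
        · exact absurd h3 hc
        · exact h3
      have hw2 : w2 = 0 := by
        rcases smul_eq_zero.mp h2 with h3 | h3
        · exact absurd h3 hc
        · exact h3
      rw [hw1, hw2]
      rfl
    · exact RankOne.prod_int_reduced hGred
    · rintro n ⟨h1, h2⟩ hmem hdiv
      by_cases hn : n = 0
      · subst hn
        obtain ⟨g', hg'⟩ := hdiv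
        refine ⟨0, zero_mem _, ?_⟩
        rw [← hg', zero_smul, zero_smul]
      · obtain ⟨w, hw⟩ := hdiv
        have hsnd : n • w.2 = h2 := congrArg Prod.snd hw
        obtain ⟨g, hg⟩ := hmem
        have hg2 : h2 = 0 := (congrArg Prod.snd hg).symm
        have hw2 : w.2 = 0 := by
          rw [hg2] at hsnd
          rcases smul_eq_zero.mp hsnd with h3 | h3
          · exact absurd h3 hn
          · exact h3
        refine ⟨w, ⟨w.1, ?_⟩, ?_⟩
        · exact Prod.ext rfl hw2.symm
        · rw [← hw]
    · refine ⟨((0 : G), (1 : ℤ)), ?_, ?_⟩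
      · rintro n hn ⟨g, hg⟩
        have h2 : (0 : ℤ) = n • (1 : ℤ) := congrArg Prod.snd hg
        rw [smul_eq_mul, mul_one] at h2
        exact hn h2.symm
      · intro w
        refine ⟨w.2, 1, one_ne_zero, ⟨w.1, ?_⟩⟩
        apply Prod.ext
        · show w.1 = (1 : ℤ) • w.1 - w.2 • (0 : G)
          simp
        · show (0 : ℤ) = (1 : ℤ) • w.2 - w.2 • (1 : ℤ)
          simp
    · refine ⟨hp, ?_, ((y, 0) : G × ℤ), ?_, ?_, ?_⟩
      · rintro ⟨-, hdiv⟩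
        refine hpx ⟨hp, fun n => ?_⟩
        obtain ⟨w, hw⟩ := hdiv n
        exact ⟨w.1, congrArg Prod.fst hw⟩
      · simp [Prod.ext_iff, hy0]
      · intro q hq hqp
        obtain ⟨-, hdiv⟩ := hyq q hq hqp
        refine ⟨hq, fun n => ?_⟩
        obtain ⟨u, hu⟩ := hdiv n
        refine ⟨(u, 0), Prod.ext hu ?_⟩
        show (q ^ n) • (0 : ℤ) = (0 : ℤ)
        simp
      · obtain ⟨-, hdiv⟩ := hyp
        refine ⟨hp, fun n => ?_⟩
        obtain ⟨u, hu⟩ := hdiv n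
        refine ⟨(u, 0), Prod.ext ?_ ?_⟩
        · show (p ^ n) • u = x - y
          exact hu
        · show (p ^ n) • (0 : ℤ) = (0 : ℤ) - 0
          simp
  · -- Main construction: adjoin a rank-one system of fractions.
    have hpQ : (p : ℚ) ≠ 0 := by exact_mod_cast hp.ne_zero
    refine ⟨AddCommGrpCat.of ↥(RankOne.bigS p hp x), RankOne.iota p hp x, ?_⟩
    show Function.Injective (RankOne.iota p hp x) ∧
      IsTorsionFreeAb ↥(RankOne.bigS p hp x) ∧ IsReducedAb ↥(RankOne.bigS p hp x) ∧
      IsPureSubgroup (RankOne.iota p hp x).range ∧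
      (∃ z : ↥(RankOne.bigS p hp x),
        (∀ n : ℤ, n ≠ 0 → n • z ∉ Set.range (RankOne.iota p hp x)) ∧
        ∀ w : ↥(RankOne.bigS p hp x), ∃ a b : ℤ, b ≠ 0 ∧
          b • w - a • z ∈ Set.range (RankOne.iota p hp x)) ∧
      p ∈ PrimesDivNeg (↥(RankOne.bigS p hp x)) (RankOne.iota p hp x x)
    refine ⟨?_, ?_, ?_, ?_, ?_, ?_⟩
    · exact RankOne.iota_inj p hp x hGtf
    · exact RankOne.bigS_tf p hp x hGtf
    · exact RankOne.bigS_reduced p hp x hGtf hGred hpx hneg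
    · -- purity
      rintro n h hmem hdiv
      by_cases hn : n = 0
      · subst hn
        obtain ⟨g', hg'⟩ := hdiv
        refine ⟨0, zero_mem _, ?_⟩
        rw [← hg', zero_smul, zero_smul]
      · obtain ⟨w, hw⟩ := hdiv
        obtain ⟨g, hg⟩ := hmem
        have hh2 : ((h : ↥(RankOne.bigS p hp x)) :
            LocalizedModule (Submonoid.powers ((p : ℤ))) G × ℚ).2 = 0 := by
          rw [← hg]
          rfl
        have hsnd : n • ((w : ↥(RankOne.bigS p hp x)) :
            LocalizedModule (Submonoid.powers ((p : ℤ))) G × ℚ).2 = 0 := by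
          rw [← hh2, ← hw]
          rfl
        have hw2 : ((w : ↥(RankOne.bigS p hp x)) :
            LocalizedModule (Submonoid.powers ((p : ℤ))) G × ℚ).2 = 0 := by
          rcases smul_eq_zero.mp hsnd with h3 | h3
          · exact absurd h3 hn
          · exact h3
        obtain ⟨u, hu⟩ := RankOne.exists_preimage p hp x w.2 (by rw [hw2]; simp)
        refine ⟨w, ⟨u, ?_⟩, hw⟩
        exact Subtype.ext (Prod.ext hu hw2).symm
    · -- the rank-one witness z
      have zmem : (((0 : LocalizedModule (Submonoid.powers ((p : ℤ))) G), (1 : ℚ)) :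
          LocalizedModule (Submonoid.powers ((p : ℤ))) G × ℚ) ∈ RankOne.bigS p hp x := by
        refine ⟨0, 0, 0, 1, by simp, ?_, by norm_num⟩
        dsimp only
        rw [show ((p : ℤ) ^ 0 • (0 : G) + (0 : ℤ) • x) = 0 by simp, LocalizedModule.zero_mk]
      refine ⟨⟨_, zmem⟩, ?_, ?_⟩
      · rintro n hn ⟨g, hg⟩
        have h2 : (0 : ℚ) = n • (1 : ℚ) := by
          have h3 := congrArg (fun u : ↥(RankOne.bigS p hp x) =>
            (u : LocalizedModule (Submonoid.powers ((p : ℤ))) G × ℚ).2) hg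
          simpa [RankOne.iota_coe, RankOne.bigS_coe_zsmul] using h3
        rw [zsmul_eq_mul, mul_one] at h2
        exact hn (by exact_mod_cast h2.symm)
      · intro w
        set t : ℚ := ((w : ↥(RankOne.bigS p hp x)) :
          LocalizedModule (Submonoid.powers ((p : ℤ))) G × ℚ).2 with ht
        refine ⟨t.num, (t.den : ℤ), by exact_mod_cast t.den_nz, ?_⟩
        set u : ↥(RankOne.bigS p hp x) := (t.den : ℤ) • w - t.num • ⟨_, zmem⟩ with hudef
        have hu2 : ((u : ↥(RankOne.bigS p hp x)) :
            LocalizedModule (Submonoid.powers ((p : ℤ))) G × ℚ).2 = 0 := by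
          rw [hudef]
          rw [AddSubgroup.coe_sub, RankOne.bigS_coe_zsmul, RankOne.bigS_coe_zsmul]
          show (t.den : ℤ) • t - t.num • (1 : ℚ) = 0
          rw [zsmul_eq_mul, zsmul_eq_mul, mul_one]
          push_cast
          rw [mul_comm, Rat.mul_den_eq_num]
          ring
        obtain ⟨g, hg⟩ := RankOne.exists_preimage p hp x u.2 (by rw [hu2]; simp)
        exact ⟨g, Subtype.ext (Prod.ext hg hu2).symm⟩
    · -- p ∈ P⁻(x, G')
      have zmem : (((0 : LocalizedModule (Submonoid.powers ((p : ℤ))) G), (1 : ℚ)) :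
          LocalizedModule (Submonoid.powers ((p : ℤ))) G × ℚ) ∈ RankOne.bigS p hp x := by
        refine ⟨0, 0, 0, 1, by simp, ?_, by norm_num⟩
        dsimp only
        rw [show ((p : ℤ) ^ 0 • (0 : G) + (0 : ℤ) • x) = 0 by simp, LocalizedModule.zero_mk]
      refine ⟨hp, ?_, ⟨_, zmem⟩, ?_, ?_, ?_⟩
      · -- p ∉ P(ι x)
        rintro ⟨-, hdiv⟩
        refine hpx ⟨hp, fun n => ?_⟩
        obtain ⟨w, hw⟩ := hdiv n
        have hwz : ((p : ℤ) ^ n) • w = RankOne.iota p hp x x := by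
          rw [show ((p : ℤ) ^ n) = ((p ^ n : ℕ) : ℤ) by push_cast; ring, natCast_zsmul]
          exact hw
        have hsnd : ((p : ℤ) ^ n) • ((w : ↥(RankOne.bigS p hp x)) :
            LocalizedModule (Submonoid.powers ((p : ℤ))) G × ℚ).2 = 0 := by
          have h3 := congrArg (fun u : ↥(RankOne.bigS p hp x) =>
            (u : LocalizedModule (Submonoid.powers ((p : ℤ))) G × ℚ).2) hwz
          simpa [RankOne.iota_coe, RankOne.bigS_coe_zsmul] using h3
        have hw2 : ((w : ↥(RankOne.bigS p hp x)) :
            LocalizedModule (Submonoid.powers ((p : ℤ))) G × ℚ).2 = 0 := by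
          rcases smul_eq_zero.mp hsnd with h3 | h3
          · exact absurd h3 (RankOne.ppow_ne p hp n)
          · exact h3
        obtain ⟨u, hu⟩ := RankOne.exists_preimage p hp x w.2 (by rw [hw2]; simp)
        have hfst : ((p : ℤ) ^ n) • ((w : ↥(RankOne.bigS p hp x)) :
            LocalizedModule (Submonoid.powers ((p : ℤ))) G × ℚ).1 =
            LocalizedModule.mk x (RankOne.pw p 0) := by
          have h3 := congrArg (fun u : ↥(RankOne.bigS p hp x) =>
            (u : LocalizedModule (Submonoid.powers ((p : ℤ))) G × ℚ).1) hwz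
          simpa [RankOne.iota_coe, RankOne.bigS_coe_zsmul] using h3
        rw [hu, RankOne.zsmul_mk] at hfst
        have h6 := RankOne.mk_transfer hGtf hp hfst
        refine ⟨u, ?_⟩
        rw [← natCast_zsmul]
        push_cast
        simpa using h6
      · -- z ≠ 0
        intro h
        have h2 := congrArg (fun u : ↥(RankOne.bigS p hp x) =>
          (u : LocalizedModule (Submonoid.powers ((p : ℤ))) G × ℚ).2) h
        simpa using h2
      · -- q-divisibility of z
        intro q hq hqp
        refine ⟨hq, fun j => ?_⟩
        have hq0 : (q : ℚ) ≠ 0 := by exact_mod_cast hq.ne_zero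
        have umem : (((0 : LocalizedModule (Submonoid.powers ((p : ℤ))) G),
            (1 : ℚ) / (q : ℚ) ^ j) :
            LocalizedModule (Submonoid.powers ((p : ℤ))) G × ℚ) ∈ RankOne.bigS p hp x := by
          refine ⟨0, 0, 0, 1 / (q : ℚ) ^ j, ?_, ?_, by norm_num⟩
          · have hdvd : ((1 : ℚ) / (q : ℚ) ^ j).den ∣ q ^ j := by
              have h5 := RankOne.den_div_pow_dvd 1 q j
              simpa using h5
            exact Nat.Coprime.coprime_dvd_left hdvd
              (Nat.Coprime.pow_left j ((Nat.coprime_primes hq hp).mpr hqp))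
          · dsimp only
            rw [show ((p : ℤ) ^ 0 • (0 : G) + (0 : ℤ) • x) = 0 by simp,
              LocalizedModule.zero_mk]
        refine ⟨⟨_, umem⟩, ?_⟩
        apply Subtype.ext
        rw [show ((q ^ j : ℕ) • (⟨_, umem⟩ : ↥(RankOne.bigS p hp x))) =
          ((q : ℤ) ^ j) • (⟨_, umem⟩ : ↥(RankOne.bigS p hp x)) by
            rw [show ((q : ℤ) ^ j) = ((q ^ j : ℕ) : ℤ) by push_cast; ring, natCast_zsmul]]
        rw [RankOne.bigS_coe_zsmul]
        apply Prod.ext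
        · show ((q : ℤ) ^ j) • (0 : LocalizedModule (Submonoid.powers ((p : ℤ))) G) = 0
          rw [← LocalizedModule.zero_mk (1 : Submonoid.powers ((p : ℤ))), RankOne.zsmul_mk, smul_zero]
        · show ((q : ℤ) ^ j) • ((1 : ℚ) / (q : ℚ) ^ j) = 1
          rw [zsmul_eq_mul]
          push_cast
          field_simp
      · -- p-divisibility of ι x - z
        refine ⟨hp, fun n => ?_⟩
        have umem : ((LocalizedModule.mk x (RankOne.pw p n) :
            LocalizedModule (Submonoid.powers ((p : ℤ))) G),
            -((1 : ℚ) / (p : ℚ) ^ n)) ∈ RankOne.bigS p hp x := by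
          refine ⟨0, 1, n, 0, by simp, ?_, ?_⟩
          · dsimp only
            congr 1
            simp
          · dsimp only
            push_cast
            ring
        refine ⟨⟨_, umem⟩, ?_⟩
        apply Subtype.ext
        rw [show ((p ^ n : ℕ) • (⟨_, umem⟩ : ↥(RankOne.bigS p hp x))) =
          ((p : ℤ) ^ n) • (⟨_, umem⟩ : ↥(RankOne.bigS p hp x)) by
            rw [show ((p : ℤ) ^ n) = ((p ^ n : ℕ) : ℤ) by push_cast; ring, natCast_zsmul]]
        rw [RankOne.bigS_coe_zsmul, AddSubgroup.coe_sub]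
        apply Prod.ext
        · show ((p : ℤ) ^ n) • LocalizedModule.mk x (RankOne.pw p n) =
            LocalizedModule.mk x (RankOne.pw p 0) - 0
          rw [sub_zero, RankOne.zsmul_mk]
          apply RankOne.mk_eq_mk_of
          simp
        · show ((p : ℤ) ^ n) • (-((1 : ℚ) / (p : ℚ) ^ n)) = 0 - 1
          rw [zsmul_eq_mul]
          push_cast
          field_simp
          ring
end

section
/- For every infinite reduced torsion-free abelian group G there exists a reduced torsion-free abelian group G' such that G' is full, G is (isomorphic to) a pure subgroup of G', and G' has the same cardinality as G. -/
/-- `G` is full: for every `x ≠ 0` every prime belongs to `P(x,G) ∪ P⁻(x,G)`. -/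
def IsFullAb (G : Type*) [AddCommGroup G] : Prop :=
  ∀ x : G, x ≠ 0 → ∀ p : ℕ, p.Prime → p ∈ PrimesDiv G x ∪ PrimesDivNeg G x


namespace FullExtension
open TensorProduct
variable (G : Type) [AddCommGroup G]
abbrev V : Type := ℚ ⊗[ℤ] G
noncomputable def jL : G →ₗ[ℤ] V G := TensorProduct.mk ℤ ℚ G 1
noncomputable def j : G →+ V G := (jL G).toAddMonoidHom
noncomputable instance : IsLocalizedModule (nonZeroDivisors ℤ) (jL G) :=
  (isLocalizedModule_iff_isBaseChange (nonZeroDivisors ℤ) ℚ (jL G)).mpr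
    (TensorProduct.isBaseChange ℤ G ℚ)
variable {G}

lemma j_nsmul (n : ℕ) (g : G) : j G (n • g) = (n : ℚ) • j G g := by
  rw [map_nsmul, Nat.cast_smul_eq_nsmul]

lemma j_zsmul (n : ℤ) (g : G) : j G (n • g) = (n : ℚ) • j G g := by
  rw [map_zsmul, Int.cast_smul_eq_zsmul]

lemma j_inj (htf : IsTorsionFreeAb G) : Function.Injective (j G) := by
  intro a b hab
  obtain ⟨c, hc⟩ := (IsLocalizedModule.eq_iff_exists (nonZeroDivisors ℤ) (jL G)).mp hab
  have h0 : (c : ℤ) • (a - b) = 0 := by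
    rw [smul_sub, sub_eq_zero]
    simpa [Submonoid.smul_def] using hc
  rcases htf _ _ h0 with h | h
  · exact absurd h (nonZeroDivisors.coe_ne_zero c)
  · exact sub_eq_zero.mp h

lemma j_denom (v : V G) : ∃ n : ℕ, 0 < n ∧ ∃ g : G, (n : ℚ) • v = j G g := by
  obtain ⟨⟨g, s⟩, hs⟩ := IsLocalizedModule.surj (nonZeroDivisors ℤ) (jL G) v
  have hsne : (s : ℤ) ≠ 0 := nonZeroDivisors.coe_ne_zero s
  have hs' : ((s : ℤ) : ℚ) • v = j G g := by
    rw [Int.cast_smul_eq_zsmul]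
    have hs2 : (s : ℤ) • v = jL G g := by simpa [Submonoid.smul_def] using hs
    exact hs2
  rcases hsne.lt_or_gt with hneg | hpos
  · refine ⟨(-(s : ℤ)).toNat, by omega, -g, ?_⟩
    have hc : (((-(s : ℤ)).toNat : ℤ) : ℚ) = -(((s : ℤ)) : ℚ) := by
      have h1 : ((-(s : ℤ)).toNat : ℤ) = -(s : ℤ) := Int.toNat_of_nonneg (by omega)
      exact_mod_cast congrArg (fun z : ℤ => (z : ℚ)) h1
    rw [show ((((-(s : ℤ)).toNat : ℕ)) : ℚ) = (((-(s : ℤ)).toNat : ℤ) : ℚ) by push_cast; ring,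
      hc, neg_smul, hs', ← map_neg]
  · refine ⟨((s : ℤ)).toNat, by omega, g, ?_⟩
    have hc : ((((s : ℤ)).toNat : ℤ) : ℚ) = (((s : ℤ)) : ℚ) := by
      have h1 : (((s : ℤ)).toNat : ℤ) = (s : ℤ) := Int.toNat_of_nonneg (by omega)
      exact_mod_cast congrArg (fun z : ℤ => (z : ℚ)) h1
    rw [show (((((s : ℤ)).toNat : ℕ)) : ℚ) = ((((s : ℤ)).toNat : ℤ) : ℚ) by push_cast; ring,
      hc, hs']

variable (G)

def Cq (q : Nat.Primes) : AddSubgroup (V G) where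
  carrier := {v | ∃ n : ℕ, 0 < n ∧ ¬((q : ℕ) ∣ n) ∧ ∃ g : G, (n : ℚ) • v = j G g}
  zero_mem' := ⟨1, one_pos, by simpa using q.2.one_lt.ne', 0, by simp⟩
  add_mem' := by
    rintro v w ⟨n, hn, hnd, g, hg⟩ ⟨m, hm, hmd, g', hg'⟩
    refine ⟨n * m, Nat.mul_pos hn hm, ?_, m • g + n • g', ?_⟩
    · rw [q.2.dvd_mul]; tauto
    · rw [map_add, j_nsmul, j_nsmul, ← hg, ← hg', smul_smul, smul_smul, smul_add]
      push_cast
      rw [mul_comm ((m:ℕ):ℚ) ((n:ℕ):ℚ)]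
  neg_mem' := by
    rintro v ⟨n, hn, hnd, g, hg⟩
    exact ⟨n, hn, hnd, -g, by rw [map_neg, ← hg, smul_neg]⟩

def dq (q : Nat.Primes) : AddSubgroup (V G) where
  carrier := {v | ∀ m : ℕ, 0 < m → ((m : ℚ))⁻¹ • v ∈ Cq G q}
  zero_mem' := fun m hm => by simpa using (Cq G q).zero_mem
  add_mem' := by
    intro v w hv hw m hm
    rw [smul_add]
    exact (Cq G q).add_mem (hv m hm) (hw m hm)
  neg_mem' := by
    intro v hv m hm
    rw [smul_neg]
    exact (Cq G q).neg_mem (hv m hm)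

variable {G}

lemma j_mem_Cq (g : G) (q : Nat.Primes) : j G g ∈ Cq G q :=
  ⟨1, one_pos, by simpa using q.2.one_lt.ne', g, by simp⟩

lemma dq_le_Cq {q : Nat.Primes} {v : V G} (h : v ∈ dq G q) : v ∈ Cq G q := by
  simpa using h 1 one_pos

lemma smul_mem_Cq_of_mem_dq {q : Nat.Primes} {v : V G} (h : v ∈ dq G q) (s : ℚ) :
    s • v ∈ Cq G q := by
  have h1 : ((s.den : ℚ))⁻¹ • v ∈ Cq G q := h s.den s.pos
  have h2 : s • v = s.num • (((s.den : ℚ))⁻¹ • v) := by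
    rw [← Int.cast_smul_eq_zsmul ℚ, smul_smul]
    congr 1
    rw [← div_eq_mul_inv, Rat.num_div_den]
  rw [h2]
  exact (Cq G q).zsmul_mem h1 _

lemma rat_smul_mem_dq {q : Nat.Primes} {v : V G} (h : v ∈ dq G q) (s : ℚ) :
    s • v ∈ dq G q := by
  intro m hm
  rw [smul_smul]
  exact smul_mem_Cq_of_mem_dq h _

lemma inv_smul_mem_Cq {q : Nat.Primes} {m : ℕ} (hm : 0 < m) (hqm : ¬ (q : ℕ) ∣ m)
    {v : V G} (h : v ∈ Cq G q) : ((m : ℚ))⁻¹ • v ∈ Cq G q := by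
  obtain ⟨n, hn, hnd, g, hg⟩ := h
  refine ⟨n * m, Nat.mul_pos hn hm, by rw [q.2.dvd_mul]; tauto, g, ?_⟩
  rw [← hg, smul_smul]
  congr 1
  push_cast
  field_simp

lemma inv_pow_smul_mem_Cq {q r : Nat.Primes} (hne : r ≠ q) (k : ℕ)
    {v : V G} (h : v ∈ Cq G q) : (((r : ℕ) ^ k : ℕ) : ℚ)⁻¹ • v ∈ Cq G q := by
  refine inv_smul_mem_Cq (pow_pos r.2.pos k) ?_ h
  intro hdvd
  exact hne (Subtype.ext ((Nat.prime_dvd_prime_iff_eq q.2 r.2).mp (q.2.dvd_of_dvd_pow hdvd)).symm)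



variable (G)

abbrev Wq (q : Nat.Primes) : Type := V G ⧸ dq G q

noncomputable def pq (q : Nat.Primes) : V G →+ Wq G q := QuotientAddGroup.mk' (dq G q)

variable {G}

lemma pq_eq_iff {q : Nat.Primes} {a b : V G} : pq G q a = pq G q b ↔ a - b ∈ dq G q :=
  QuotientAddGroup.eq_iff_sub_mem

lemma pq_zero_iff {q : Nat.Primes} {a : V G} : pq G q a = 0 ↔ a ∈ dq G q :=
  QuotientAddGroup.eq_zero_iff a

variable (G)

noncomputable def DD : AddSubgroup (Π q : Nat.Primes, Wq G q) where
  carrier := {x | (∀ q, ∃ c ∈ Cq G q, pq G q c = x q) ∧ ∃ d : V G, {q | x q ≠ pq G q d}.Finite}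
  zero_mem' := by
    refine ⟨fun q => ⟨0, (Cq G q).zero_mem, map_zero _⟩, 0, ?_⟩
    simp only [Pi.zero_apply, map_zero, ne_eq, not_true_eq_false, Set.setOf_false]
    exact Set.finite_empty
  add_mem' := by
    rintro x y ⟨hx, dx, hdx⟩ ⟨hy, dy, hdy⟩
    refine ⟨fun q => ?_, dx + dy, ?_⟩
    · obtain ⟨c, hc, hce⟩ := hx q
      obtain ⟨c', hc', hce'⟩ := hy q
      exact ⟨c + c', (Cq G q).add_mem hc hc', by rw [map_add, hce, hce']; rfl⟩
    · refine (hdx.union hdy).subset ?_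
      intro q hq
      by_contra hmem
      simp only [Set.mem_union, Set.mem_setOf_eq, not_or, not_not] at hmem
      exact hq (by simp only [Pi.add_apply, map_add, hmem.1, hmem.2])
  neg_mem' := by
    rintro x ⟨hx, dx, hdx⟩
    refine ⟨fun q => ?_, -dx, ?_⟩
    · obtain ⟨c, hc, hce⟩ := hx q
      exact ⟨-c, (Cq G q).neg_mem hc, by rw [map_neg, hce]; rfl⟩
    · refine hdx.subset ?_
      intro q hq
      by_contra hmem
      simp only [Set.mem_setOf_eq, not_not] at hmem
      exact hq (by simp only [Pi.neg_apply, map_neg, hmem])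

noncomputable def iota : G →+ DD G where
  toFun g := ⟨fun q => pq G q (j G g),
    ⟨fun q => ⟨j G g, j_mem_Cq g q, rfl⟩, ⟨j G g, by simp⟩⟩⟩
  map_zero' := by
    apply Subtype.ext
    funext q
    simp
  map_add' a b := by
    apply Subtype.ext
    funext q
    simp

variable {G}

lemma iota_coord (g : G) (q : Nat.Primes) : (iota G g).val q = pq G q (j G g) := rfl

lemma mem_range_j_of_forall_Cq {v : V G} (hv : ∀ q, v ∈ Cq G q) : ∃ g, j G g = v := by
  classical
  have hP : ∃ n : ℕ, 0 < n ∧ ∃ g, (n : ℚ) • v = j G g := j_denom v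
  obtain ⟨hn, g₁, hg₁⟩ := Nat.find_spec hP
  set n := Nat.find hP with hn_def
  by_cases h1 : n = 1
  · exact ⟨g₁, by rw [← hg₁, h1]; simp⟩
  · exfalso
    have hq : (n.minFac).Prime := Nat.minFac_prime h1
    set q : Nat.Primes := ⟨n.minFac, hq⟩
    obtain ⟨m, hm, hmd, g₂, hg₂⟩ := hv q
    set d := Nat.gcd n m with hd_def
    have hd_pos : 0 < d := Nat.gcd_pos_of_pos_left _ hn
    have hdn : d ∣ n := Nat.gcd_dvd_left _ _
    have hdlt : d < n := by
      rcases lt_or_eq_of_le (Nat.le_of_dvd hn hdn) with h | h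
      · exact h
      · exfalso
        have hqd : (q : ℕ) ∣ d := by rw [h]; exact Nat.minFac_dvd n
        exact hmd (dvd_trans hqd (Nat.gcd_dvd_right n m))
    have hbez := Nat.gcd_eq_gcd_ab n m
    refine Nat.find_min hP hdlt ⟨hd_pos, Nat.gcdA n m • g₁ + Nat.gcdB n m • g₂, ?_⟩
    have hcast : ((d : ℕ) : ℚ) = (n : ℚ) * (Nat.gcdA n m : ℚ) + (m : ℚ) * (Nat.gcdB n m : ℚ) := by
      exact_mod_cast congrArg (fun z : ℤ => (z : ℚ)) hbez
    rw [map_add, j_zsmul, j_zsmul, ← hg₁, ← hg₂, hcast, add_smul, smul_smul, smul_smul]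
    ring_nf

lemma coord_reduced {q : Nat.Primes} {x : Wq G q} (hx : ∃ c ∈ Cq G q, pq G q c = x)
    (h : ∀ m : ℕ, 0 < m → ∃ y : Wq G q, (∃ c ∈ Cq G q, pq G q c = y) ∧ m • y = x) :
    x = 0 := by
  obtain ⟨c, hc, rfl⟩ := hx
  rw [pq_zero_iff]
  intro m hm
  obtain ⟨y, ⟨c', hc', rfl⟩, hmy⟩ := h m hm
  have hδ : (m • c' : V G) - c ∈ dq G q := by
    rw [← pq_eq_iff, map_nsmul]
    exact hmy
  have hkey : ((m : ℚ))⁻¹ • c = c' - ((m : ℚ))⁻¹ • ((m • c' : V G) - c) := by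
    rw [smul_sub, ← Nat.cast_smul_eq_nsmul ℚ m c', smul_smul,
      inv_mul_cancel₀ (by exact_mod_cast hm.ne' : (m : ℚ) ≠ 0), one_smul]
    abel
  rw [hkey]
  exact (Cq G q).sub_mem hc' (smul_mem_Cq_of_mem_dq hδ _)



lemma eq_zero_of_forall_dq (htf : IsTorsionFreeAb G) (hred : IsReducedAb G) {g₀ : G}
    (h : ∀ q : Nat.Primes, j G g₀ ∈ dq G q) : g₀ = 0 := by
  by_contra hne
  have hv0 : j G g₀ ≠ 0 := fun h0 => hne (j_inj htf (by rw [h0, map_zero]))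
  have key : ∀ m : ℕ, 0 < m → ∃ g, j G g = ((m : ℚ))⁻¹ • j G g₀ := by
    intro m
    induction m using Nat.strong_induction_on with
    | _ m IH =>
      intro hm
      rcases eq_or_ne m 1 with h1 | h1
      · exact ⟨g₀, by rw [h1]; simp⟩
      · have hqp : (m.minFac).Prime := Nat.minFac_prime h1
        set q : Nat.Primes := ⟨m.minFac, hqp⟩
        set k := m.factorization m.minFac with hk
        set m' := m / (m.minFac) ^ k with hm'def
        have hmeq : (m.minFac) ^ k * m' = m := Nat.ordProj_mul_ordCompl_eq_self m m.minFac
        have hm'_pos : 0 < m' := Nat.ordCompl_pos m.minFac hm.ne'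
        have hndvd : ¬ m.minFac ∣ m' := Nat.not_dvd_ordCompl hqp hm.ne'
        have hqk1 : 1 < (m.minFac) ^ k := by
          have hk1 : 0 < k := hqp.factorization_pos_of_dvd hm.ne' (Nat.minFac_dvd m)
          calc 1 < m.minFac := hqp.one_lt
          _ ≤ m.minFac ^ k := Nat.le_self_pow hk1.ne' _
        have hklt : m' < m := Nat.div_lt_self hm hqk1
        obtain ⟨g₁, hg₁⟩ := IH m' hklt hm'_pos
        obtain ⟨n, hn, hnd, g₂, hg₂⟩ := h q ((m.minFac) ^ k) (pow_pos hqp.pos k)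
        have hcop : Nat.Coprime (n * m') ((m.minFac) ^ k) := by
          refine Nat.Coprime.pow_right _ (Nat.Coprime.mul ?_ ?_)
          · exact (Nat.coprime_comm.mp ((hqp.coprime_iff_not_dvd).mpr hnd))
          · exact (Nat.coprime_comm.mp ((hqp.coprime_iff_not_dvd).mpr hndvd))
        have hbez := Nat.gcd_eq_gcd_ab (n * m') ((m.minFac) ^ k)
        rw [hcop] at hbez
        have hbezq := congrArg (fun z : ℤ => (z : ℚ)) hbez
        push_cast at hbezq
        refine ⟨Nat.gcdA (n * m') ((m.minFac) ^ k) • g₂ + Nat.gcdB (n * m') ((m.minFac) ^ k) • g₁, ?_⟩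
        rw [map_add, j_zsmul, j_zsmul, hg₁, ← hg₂, smul_smul, smul_smul, smul_smul, ← add_smul]
        congr 1
        have hmq : (m : ℚ) = ((m.minFac ^ k : ℕ) : ℚ) * ((m' : ℕ) : ℚ) := by exact_mod_cast hmeq.symm
        have hα : ((m.minFac ^ k : ℕ) : ℚ) ≠ 0 := by positivity
        have hβ : ((m' : ℕ) : ℚ) ≠ 0 := by exact_mod_cast hm'_pos.ne'
        rw [hmq, mul_inv]
        have hα2 : ((m.minFac : ℚ)) ^ k ≠ 0 := pow_ne_zero _ (by exact_mod_cast hqp.pos.ne')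
        field_simp
        push_cast
        linarith [hbezq]
  have key2 : ∀ t : ℚ, ∃ g, j G g = t • j G g₀ := by
    intro t
    obtain ⟨g, hg⟩ := key t.den t.pos
    refine ⟨t.num • g, ?_⟩
    rw [j_zsmul, hg, smul_smul]
    congr 1
    rw [← div_eq_mul_inv, Rat.num_div_den]
  choose F hF using key2
  have hFadd : ∀ s t : ℚ, F (s + t) = F s + F t := by
    intro s t
    apply j_inj htf
    rw [map_add, hF, hF, hF, add_smul]
  have hFinj : Function.Injective F := by
    intro s t hst
    have h1 : s • j G g₀ = t • j G g₀ := by rw [← hF, ← hF, hst]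
    by_contra hne'
    have h2 : (s - t) • j G g₀ = 0 := by rw [sub_smul, h1, sub_self]
    have h3 : j G g₀ = 0 := by
      have := congrArg (fun w => (s - t)⁻¹ • w) h2
      simpa [smul_smul, inv_mul_cancel₀ (sub_ne_zero.mpr hne')] using this
    exact hv0 h3
  exact hred ⟨AddMonoidHom.mk' F hFadd, hFinj⟩



lemma iota_injective (htf : IsTorsionFreeAb G) (hred : IsReducedAb G) :
    Function.Injective (iota G) := by
  intro a b hab
  have h2 : ∀ q, j G (a - b) ∈ dq G q := by
    intro q
    have h := congrFun (congrArg Subtype.val hab) q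
    have := pq_eq_iff.mp (h : pq G q (j G a) = pq G q (j G b))
    rwa [← map_sub] at this
  exact sub_eq_zero.mp (eq_zero_of_forall_dq htf hred h2)

lemma DD_torsionfree : IsTorsionFreeAb (DD G) := by
  intro n x hnx
  rcases eq_or_ne n 0 with h | h
  · exact Or.inl h
  · right
    apply Subtype.ext
    funext q
    obtain ⟨c, hc, hce⟩ := x.2.1 q
    have h1 : pq G q (n • c) = 0 := by
      rw [map_zsmul, hce]
      simpa using congrFun (congrArg Subtype.val hnx) q
    have h2 : (n • c : V G) ∈ dq G q := pq_zero_iff.mp h1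
    have h3 : c ∈ dq G q := by
      have h4 := rat_smul_mem_dq h2 (((n : ℚ))⁻¹)
      rwa [← Int.cast_smul_eq_zsmul ℚ, smul_smul,
        inv_mul_cancel₀ (by exact_mod_cast h : (n : ℚ) ≠ 0), one_smul] at h4
    show x.val q = 0
    rw [← hce]
    exact pq_zero_iff.mpr h3

lemma DD_reduced : IsReducedAb (DD G) := by
  rintro ⟨f, hf⟩
  have h0 : f 1 = 0 := by
    apply Subtype.ext
    funext q
    show (f 1).val q = 0
    apply coord_reduced ((f 1).2.1 q)
    intro m hm
    refine ⟨(f (1/(m : ℚ))).val q, (f (1/(m : ℚ))).2.1 q, ?_⟩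
    have hfm : m • f (1/(m : ℚ)) = f 1 := by
      rw [← map_nsmul]
      congr 1
      rw [nsmul_eq_mul]
      field_simp
    calc m • (f (1/(m : ℚ))).val q = ((m • f (1/(m : ℚ)) : DD G)).val q := rfl
    _ = (f 1).val q := by rw [hfm]
  exact one_ne_zero (hf (h0.trans (map_zero f).symm))

variable (G)

noncomputable def sing (p : Nat.Primes) (c : V G) (hc : c ∈ Cq G p) : DD G :=
  ⟨fun q => if q = p then pq G q c else 0, by
    constructor
    · intro q
      by_cases hq : q = p
      · subst hq
        exact ⟨c, hc, by simp⟩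
      · exact ⟨0, (Cq G q).zero_mem, by simp [hq]⟩
    · refine ⟨0, (Set.finite_singleton p).subset ?_⟩
      intro q hq
      simp only [Set.mem_setOf_eq] at hq
      by_contra hqp
      simp only [Set.mem_singleton_iff] at hqp
      exact hq (by simp [hqp])⟩

variable {G}

lemma sing_val (p : Nat.Primes) (c : V G) (hc : c ∈ Cq G p) (q : Nat.Primes) :
    (sing G p c hc).val q = if q = p then pq G q c else 0 := rfl

lemma div_pow_of_coord_zero (p : Nat.Primes) (x : DD G) (hx : x.val p = 0) (k : ℕ) :
    ∃ u : DD G, ((p : ℕ) ^ k) • u = x := by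
  classical
  obtain ⟨hcoords, d, hfin⟩ := x.2
  choose c hcmem hceq using hcoords
  have hpk0 : (((p : ℕ) ^ k : ℕ) : ℚ) ≠ 0 := by
    exact_mod_cast (pow_pos p.2.pos k).ne'
  refine ⟨⟨fun q => if q = p then 0 else pq G q (((((p : ℕ) ^ k : ℕ) : ℚ))⁻¹ • c q),
    ⟨?_, ?_⟩⟩, ?_⟩
  · intro q
    by_cases hq : q = p
    · exact ⟨0, (Cq G q).zero_mem, by simp [hq]⟩
    · exact ⟨((((p : ℕ) ^ k : ℕ) : ℚ))⁻¹ • c q,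
        inv_pow_smul_mem_Cq (fun h => hq (h ▸ rfl) : p ≠ q) k (hcmem q), by simp [hq]⟩
  · refine ⟨((((p : ℕ) ^ k : ℕ) : ℚ))⁻¹ • d, ((hfin.union (Set.finite_singleton p)).subset ?_)⟩
    intro q hq
    simp only [Set.mem_setOf_eq] at hq
    by_contra hq2
    simp only [Set.mem_union, Set.mem_setOf_eq, Set.mem_singleton_iff, not_or, not_not] at hq2
    obtain ⟨hxd, hqp⟩ := hq2
    apply hq
    rw [if_neg hqp]
    have hdq : c q - d ∈ dq G q := pq_eq_iff.mp ((hceq q).trans hxd)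
    have := rat_smul_mem_dq hdq (((((p : ℕ) ^ k : ℕ) : ℚ))⁻¹)
    rw [smul_sub] at this
    exact pq_eq_iff.mpr this
  · apply Subtype.ext
    funext q
    show ((p : ℕ) ^ k) • (if q = p then (0 : Wq G q) else pq G q (((((p : ℕ) ^ k : ℕ) : ℚ))⁻¹ • c q)) = x.val q
    by_cases hq : q = p
    · rw [if_pos hq, smul_zero, hq, hx]
    · rw [if_neg hq, ← map_nsmul, ← Nat.cast_smul_eq_nsmul ℚ, smul_smul,
        mul_inv_cancel₀ hpk0, one_smul, hceq q]

lemma sing_div (p : Nat.Primes) {c : V G} (hc : c ∈ Cq G p) {q : Nat.Primes} (hqp : q ≠ p)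
    (k : ℕ) : ∃ u : DD G, ((q : ℕ) ^ k) • u = sing G p c hc := by
  have hqk0 : (((q : ℕ) ^ k : ℕ) : ℚ) ≠ 0 := by
    exact_mod_cast (pow_pos q.2.pos k).ne'
  refine ⟨sing G p (((((q : ℕ) ^ k : ℕ) : ℚ))⁻¹ • c) (inv_pow_smul_mem_Cq hqp k hc), ?_⟩
  apply Subtype.ext
  funext r
  show ((q : ℕ) ^ k) • (sing G p _ _).val r = (sing G p c hc).val r
  rw [sing_val, sing_val]
  by_cases hr : r = p
  · rw [if_pos hr, if_pos hr, ← map_nsmul, ← Nat.cast_smul_eq_nsmul ℚ, smul_smul,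
      mul_inv_cancel₀ hqk0, one_smul]
  · rw [if_neg hr, if_neg hr, smul_zero]

lemma DD_full : IsFullAb (DD G) := by
  intro x hx p hp
  set p' : Nat.Primes := ⟨p, hp⟩
  by_cases hxp : x.val p' = 0
  · exact Or.inl ⟨hp, fun n => div_pow_of_coord_zero p' x hxp n⟩
  · by_cases hP : p ∈ PrimesDiv (DD G) x
    · exact Or.inl hP
    · right
      obtain ⟨c, hcmem, hceq⟩ := x.2.1 p'
      refine ⟨hp, hP, sing G p' c hcmem, ?_, ?_, ?_⟩
      · intro h0
        apply hxp
        have h1 := congrFun (congrArg Subtype.val h0) p'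
        rw [sing_val, if_pos rfl] at h1
        rw [← hceq]
        simpa using h1
      · intro qn hqn hqnp
        refine ⟨hqn, fun n => ?_⟩
        exact sing_div p' hcmem (q := ⟨qn, hqn⟩) (fun h => hqnp (congrArg Subtype.val h)) n
      · refine ⟨hp, fun n => ?_⟩
        have hsub : (x - sing G p' c hcmem).val p' = 0 := by
          show x.val p' - (sing G p' c hcmem).val p' = 0
          rw [sing_val, if_pos rfl, ← hceq, sub_self]
        exact div_pow_of_coord_zero p' _ hsub n

lemma DD_pure (htf : IsTorsionFreeAb G) : IsPureSubgroup (iota G).range := by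
  rintro n h hmem ⟨w, hw⟩
  obtain ⟨g, rfl⟩ := hmem
  rcases eq_or_ne n 0 with h0 | h0
  · refine ⟨iota G g, ⟨g, rfl⟩, ?_⟩
    rw [h0, zero_zsmul] at hw ⊢
    exact hw
  · have hn0 : (n : ℚ) ≠ 0 := by exact_mod_cast h0
    have hcoord : ∀ q, (((n : ℚ))⁻¹ • j G g) ∈ Cq G q := by
      intro q
      obtain ⟨c, hc, hce⟩ := w.2.1 q
      have h1 : pq G q ((n • c : V G)) = pq G q (j G g) := by
        rw [map_zsmul, hce]
        exact congrFun (congrArg Subtype.val hw) q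
      have h2 : (n • c : V G) - j G g ∈ dq G q := pq_eq_iff.mp h1
      have h3 : ((n : ℚ))⁻¹ • j G g = c - ((n : ℚ))⁻¹ • ((n • c : V G) - j G g) := by
        rw [smul_sub, ← Int.cast_smul_eq_zsmul ℚ n c, smul_smul,
          inv_mul_cancel₀ hn0, one_smul]
        abel
      rw [h3]
      exact (Cq G q).sub_mem hc (smul_mem_Cq_of_mem_dq h2 _)
    obtain ⟨g', hg'⟩ := mem_range_j_of_forall_Cq hcoord
    have hng : n • g' = g := by
      apply j_inj htf
      rw [j_zsmul, hg', smul_smul, mul_inv_cancel₀ hn0, one_smul]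
    exact ⟨iota G g', ⟨g', rfl⟩, by rw [← map_zsmul (iota G) n g', hng]⟩

lemma card_V_le [Infinite G] : Cardinal.mk (V G) ≤ Cardinal.mk G := by
  have hsurj : Function.Surjective
      (fun l : List (ℚ × G) => (l.map (fun e : ℚ × G => e.1 • j G e.2)).sum) := by
    intro v
    induction v using TensorProduct.induction_on with
    | zero => exact ⟨[], rfl⟩
    | tmul a g =>
      refine ⟨[(a, g)], ?_⟩
      show a • j G g + 0 = a ⊗ₜ[ℤ] g
      rw [add_zero]
      show a • ((1 : ℚ) ⊗ₜ[ℤ] g) = a ⊗ₜ[ℤ] g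
      rw [TensorProduct.smul_tmul', smul_eq_mul, mul_one]
    | add v w ihv ihw =>
      obtain ⟨lv, hv⟩ := ihv
      obtain ⟨lw, hw⟩ := ihw
      refine ⟨lv ++ lw, ?_⟩
      dsimp only at hv hw ⊢
      rw [List.map_append, List.sum_append, hv, hw]
  calc Cardinal.mk (V G) ≤ Cardinal.mk (List (ℚ × G)) := Cardinal.mk_le_of_surjective hsurj
  _ = Cardinal.mk (ℚ × G) := Cardinal.mk_list_eq_mk _
  _ ≤ Cardinal.mk G := by
      rw [Cardinal.mk_prod, Cardinal.mkRat, Cardinal.lift_id, Cardinal.lift_id,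
        Cardinal.aleph0_mul_mk_eq]

lemma card_DD [Infinite G] (htf : IsTorsionFreeAb G) (hred : IsReducedAb G) :
    Cardinal.mk (DD G) = Cardinal.mk G := by
  classical
  have hVG : Cardinal.mk (V G) ≤ Cardinal.mk G := card_V_le
  have hVinf : Infinite (V G) := Infinite.of_injective (j G) (j_inj htf)
  refine le_antisymm ?_ (Cardinal.mk_le_of_injective (iota_injective htf hred))
  set A : V G × List (Nat.Primes × V G) → Π q : Nat.Primes, Wq G q :=
    fun z q => pq G q (z.1 + ((z.2.map (fun e => if e.1 = q then e.2 else 0)).sum)) with hA_def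
  set τ : V G × List (Nat.Primes × V G) → DD G :=
    fun z => if h : A z ∈ DD G then ⟨A z, h⟩ else 0 with hτ_def
  have hsurj : Function.Surjective τ := by
    intro x
    obtain ⟨hcoords, d, hfin⟩ := x.2
    choose c hcmem hceq using hcoords
    refine ⟨(d, hfin.toFinset.toList.map (fun q => (q, c q - d))), ?_⟩
    have hAx : A (d, hfin.toFinset.toList.map (fun q => (q, c q - d))) = x.val := by
      funext q
      have hsum : ((((hfin.toFinset.toList.map (fun q => (q, c q - d))) : List (Nat.Primes × V G)).map
          (fun e => if e.1 = q then e.2 else 0)).sum)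
          = if q ∈ hfin.toFinset then c q - d else 0 := by
        rw [List.map_map]
        have hfun : ((fun e : Nat.Primes × V G => if e.1 = q then e.2 else 0) ∘
            (fun r : Nat.Primes => (r, c r - d))) = fun r => if r = q then c r - d else 0 := rfl
        rw [hfun, Finset.sum_map_toList, Finset.sum_ite_eq' hfin.toFinset q (fun r => c r - d)]
      show pq G q (d + _) = x.val q
      rw [hsum]
      by_cases hq : q ∈ hfin.toFinset
      · rw [if_pos hq, add_sub_cancel, hceq]
      · rw [if_neg hq, add_zero]
        have : ¬ (x.val q ≠ pq G q d) := by
          simpa using (fun hh => hq (hfin.mem_toFinset.mpr hh))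
        push_neg at this
        exact this.symm
    rw [hτ_def]
    simp only
    rw [dif_pos (hAx.symm ▸ x.2)]
    exact Subtype.ext hAx
  calc Cardinal.mk (DD G) ≤ Cardinal.mk (V G × List (Nat.Primes × V G)) :=
        Cardinal.mk_le_of_surjective hsurj
  _ = Cardinal.mk (V G) * Cardinal.mk (Nat.Primes × V G) := by
        rw [Cardinal.mk_prod, Cardinal.lift_id, Cardinal.lift_id, Cardinal.mk_list_eq_mk]
  _ = Cardinal.mk (V G) * (Cardinal.aleph0 * Cardinal.mk (V G)) := by
        rw [Cardinal.mk_prod, Cardinal.lift_id, Cardinal.lift_id, Cardinal.mk_eq_aleph0 Nat.Primes]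
  _ ≤ Cardinal.mk G * (Cardinal.aleph0 * Cardinal.mk G) := by
        gcongr
  _ = Cardinal.mk G := by
        rw [Cardinal.aleph0_mul_mk_eq, Cardinal.mul_eq_self (Cardinal.aleph0_le_mk G)]

end FullExtension

/-- Every infinite reduced torsion-free abelian group is a pure subgroup of a full reduced
torsion-free abelian group of the same cardinality. -/
theorem exists_full_pure_extension (G : Type) [AddCommGroup G] [Infinite G]
    (hGtf : IsTorsionFreeAb G) (hGred : IsReducedAb G) :
    ∃ (G' : AddCommGrpCat.{0}) (ι : G →+ G'),
      Function.Injective ι ∧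
      IsTorsionFreeAb G' ∧ IsReducedAb G' ∧ IsFullAb G' ∧
      IsPureSubgroup ι.range ∧
      Cardinal.mk G' = Cardinal.mk G := by
  exact ⟨AddCommGrpCat.of (FullExtension.DD G), FullExtension.iota G,
    FullExtension.iota_injective hGtf hGred, FullExtension.DD_torsionfree,
    FullExtension.DD_reduced, FullExtension.DD_full, FullExtension.DD_pure hGtf,
    FullExtension.card_DD hGtf hGred⟩
end

section
/- Let G₁ be a full reduced torsion-free abelian group, G₂ a reduced torsion-free abelian group, and h an injective group homomorphism from G₁ into G₂. Then for every x ∈ G₁ with x ≠ 0 one has P(x,G₁) = P(h(x),G₂). -/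
section Aux
variable {G : Type*} [AddCommGroup G]

lemma tf_cancel (htf : IsTorsionFreeAb G) {n : ℤ} (hn : n ≠ 0) {a b : G}
    (hab : n • a = n • b) : a = b := by
  have h0 : n • (a - b) = 0 := by rw [smul_sub, hab, sub_self]
  rcases htf n _ h0 with h | h
  · exact absurd h hn
  · exact sub_eq_zero.mp h

lemma div_mul_of_coprime {y : G} {a b : ℕ} (hco : Nat.Coprime a b)
    (ha : ∃ z : G, a • z = y) (hb : ∃ z : G, b • z = y) : ∃ z : G, (a * b) • z = y := by
  obtain ⟨z, hz⟩ := ha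
  obtain ⟨w, hw⟩ := hb
  have hz' : (a : ℤ) • z = y := by rw [natCast_zsmul]; exact hz
  have hw' : (b : ℤ) • w = y := by rw [natCast_zsmul]; exact hw
  have hic : IsCoprime (a : ℤ) (b : ℤ) := Int.isCoprime_iff_gcd_eq_one.mpr hco
  obtain ⟨s, t, hst⟩ := hic
  refine ⟨s • w + t • z, ?_⟩
  have : ((a * b : ℕ) : ℤ) • (s • w + t • z) = y := by
    push_cast
    rw [smul_add, smul_smul, smul_smul]
    have e1 : ((a:ℤ) * b * s) • w = (s * a) • ((b:ℤ) • w) := by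
      rw [smul_smul]; congr 1; ring
    have e2 : ((a:ℤ) * b * t) • z = (t * b) • ((a:ℤ) • z) := by
      rw [smul_smul]; congr 1; ring
    rw [e1, e2, hz', hw', ← add_smul]
    rw [hst, one_smul]
  rw [← natCast_zsmul]
  exact this

lemma div_all {y : G} (hdiv : ∀ p : ℕ, p.Prime → ∀ n : ℕ, ∃ z : G, (p ^ n) • z = y) :
    ∀ n : ℕ, 0 < n → ∃ z : G, n • z = y := by
  intro n
  induction n using Nat.recOnPosPrimePosCoprime with
  | prime_pow p k hp hk => exact fun _ => hdiv p hp k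
  | zero => exact fun h => absurd h (lt_irrefl 0)
  | one => exact fun _ => ⟨y, one_smul _ _⟩
  | coprime a b ha hb hco iha ihb =>
    intro _
    exact div_mul_of_coprime hco (iha (by omega)) (ihb (by omega))

lemma exists_rat_embedding (htf : IsTorsionFreeAb G) {y : G} (hy : y ≠ 0)
    (hdiv : ∀ n : ℕ, 0 < n → ∃ z : G, n • z = y) :
    ∃ f : ℚ →+ G, Function.Injective f := by
  classical
  set z : ℕ → G := fun n => if h : 0 < n then Classical.choose (hdiv n h) else 0 with hzdef
  have hz : ∀ n : ℕ, 0 < n → (n : ℤ) • z n = y := by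
    intro n hn
    simp only [hzdef, dif_pos hn]
    rw [natCast_zsmul]
    exact Classical.choose_spec (hdiv n hn)
  have key : ∀ (a : ℤ) (b : ℕ), 0 < b → ∀ (c : ℤ) (d : ℕ), 0 < d →
      a * d = c * b → a • z b = c • z d := by
    intro a b hb c d hd habcd
    have hbd : ((b : ℤ) * d) ≠ 0 := by positivity
    apply tf_cancel htf hbd
    calc ((b:ℤ)*d) • (a • z b) = (a * d) • ((b:ℤ) • z b) := by
          rw [smul_smul, smul_smul]; congr 1; ring
      _ = (a*d) • y := by rw [hz b hb]
      _ = (c*b) • y := by rw [habcd]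
      _ = (c * b) • ((d:ℤ) • z d) := by rw [hz d hd]
      _ = ((b:ℤ)*d) • (c • z d) := by rw [smul_smul, smul_smul]; congr 1; ring
  set f0 : ℚ → G := fun q => q.num • z q.den with hf0
  have hadd : ∀ p q : ℚ, f0 (p + q) = f0 p + f0 q := by
    intro p q
    have hp0 : ((p.den : ℚ)) ≠ 0 := by exact_mod_cast p.den_nz
    have hq0 : ((q.den : ℚ)) ≠ 0 := by exact_mod_cast q.den_nz
    have hpq0 : (((p+q).den : ℚ)) ≠ 0 := by exact_mod_cast (p+q).den_nz
    have hrelQ : ((p+q).num : ℚ) * ((p.den : ℚ) * q.den)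
        = ((p.num : ℚ) * q.den + (q.num : ℚ) * p.den) * ((p+q).den : ℚ) := by
      have e : ((p+q).num : ℚ) / ((p+q).den : ℚ) = (p.num:ℚ)/p.den + (q.num:ℚ)/q.den := by
        rw [Rat.num_div_den, Rat.num_div_den, Rat.num_div_den]
      field_simp at e
      linear_combination e
    have hrel : (p+q).num * ((p.den * q.den : ℕ) : ℤ)
        = (p.num * q.den + q.num * p.den) * ((p+q).den : ℤ) := by
      exact_mod_cast hrelQ
    have h1 : f0 (p + q) = (p.num * q.den + q.num * p.den) • z (p.den * q.den) :=
      key _ _ (p+q).pos _ _ (Nat.mul_pos p.pos q.pos) hrel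
    rw [h1, add_smul]
    congr 1
    · exact key _ _ (Nat.mul_pos p.pos q.pos) _ _ p.pos (by push_cast; ring)
    · exact key _ _ (Nat.mul_pos p.pos q.pos) _ _ q.pos (by push_cast; ring)
  let f : ℚ →+ G := AddMonoidHom.mk' f0 hadd
  refine ⟨f, ?_⟩
  rw [injective_iff_map_eq_zero]
  intro q hq
  have hq' : q.num • z q.den = 0 := hq
  have : q.num • y = 0 := by
    rw [← hz q.den q.pos, smul_comm, hq', smul_zero]
  rcases htf _ _ this with h | h
  · exact Rat.num_eq_zero.mp h
  · exact absurd h hy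

end Aux
/-- If `G₁` is full reduced torsion-free, `G₂` is reduced torsion-free and `h : G₁ → G₂` is an
embedding, then `P(x,G₁) = P(h(x),G₂)` for every `x ≠ 0`. -/
theorem PrimesDiv_eq_of_embedding_of_full (G₁ G₂ : Type) [AddCommGroup G₁] [AddCommGroup G₂]
    (h1tf : IsTorsionFreeAb G₁) (h1red : IsReducedAb G₁) (h1full : IsFullAb G₁)
    (h2tf : IsTorsionFreeAb G₂) (h2red : IsReducedAb G₂)
    (h : G₁ →+ G₂) (hinj : Function.Injective h) (x : G₁) (hx : x ≠ 0) :
    PrimesDiv G₁ x = PrimesDiv G₂ (h x) := by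
  ext p
  constructor
  · rintro ⟨hp, hd⟩
    refine ⟨hp, fun n => ?_⟩
    obtain ⟨w, hw⟩ := hd n
    exact ⟨h w, by rw [← map_nsmul, hw]⟩
  · rintro ⟨hp, hd⟩
    rcases h1full x hx p hp with hmem | ⟨_, _, y, hy0, hq, hpxy⟩
    · exact hmem
    · exfalso
      -- h y is divisible by all prime powers in G₂
      have hdiv2 : ∀ r : ℕ, r.Prime → ∀ n : ℕ, ∃ z : G₂, (r ^ n) • z = h y := by
        intro r hr n
        by_cases hrp : r = p
        · subst hrp
          obtain ⟨z, hz⟩ := hd n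
          obtain ⟨w, hw⟩ := hpxy.2 n
          refine ⟨z - h w, ?_⟩
          rw [smul_sub, hz, ← map_nsmul, hw, map_sub, sub_sub_cancel]
        · obtain ⟨w, hw⟩ := (hq r hr hrp).2 n
          exact ⟨h w, by rw [← map_nsmul, hw]⟩
      have hhy : h y ≠ 0 := fun h0 => hy0 (hinj (by rw [h0, map_zero]))
      obtain ⟨f, hf⟩ := exists_rat_embedding h2tf hhy (div_all hdiv2)
      exact h2red ⟨f, hf⟩
end

section
/- Let θ be an infinite cardinal, t̄ = ⟨t_ℓ : ℓ < ω⟩ a sequence of natural numbers with 1 < t_ℓ < ω, and λ̄ = ⟨λ_ℓ : ℓ < ω⟩ a sequence of cardinals with λ_ℓ > beth_{t_ℓ − 1}(θ) for every ℓ. Then the ideal J⁴_{t̄,λ̄,θ} is proper; that is, the full set ∏_{ℓ<ω} [λ_ℓ]^{t_ℓ} cannot be written as a union of at most θ many members of J⁴_{t̄,λ̄}. -/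
set_option maxHeartbeats 1000000

/-- Relative beth numbers: `beth₀(θ) = θ`, `beth_{n+1}(θ) = 2^{beth_n(θ)}`. -/
def bethRel (θ : Cardinal) : ℕ → Cardinal
  | 0 => θ
  | n + 1 => 2 ^ bethRel θ n

/-- The set `∏_{ℓ<ω} [λ_ℓ]^{t_ℓ}` of sequences `ν` with `ν ℓ` a subset of `λ_ℓ`
(represented by the canonical type of order type `λ_ℓ.ord`) of size exactly `t ℓ`. -/
def FullProd (t : ℕ → ℕ) (lam : ℕ → Cardinal) : Set (∀ ℓ, Set (lam ℓ).ord.ToType) :=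
  {ν | ∀ ℓ, (ν ℓ).Finite ∧ (ν ℓ).ncard = t ℓ}

/-- `η` is a legitimate index: a member of `∏_{i∈[ℓ,k)} [ω]^{t_i}`
(only the coordinates in `[ℓ,k)` matter). -/
def SeqIdx (t : ℕ → ℕ) (ℓ k : ℕ) (η : ℕ → Set ℕ) : Prop :=
  ∀ i, ℓ ≤ i → i < k → (η i).Finite ∧ (η i).ncard = t i

/-- The system `⟨ν_η : η ∈ ∏_{i∈[ℓ,k)}[ω]^{t_i}⟩` witnessing clauses (a),(b),(c) of the
definition of `J⁴_{t̄,λ̄}` for the countably infinite set `B ⊆ λ_ℓ`. -/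
def IsJ4System (t : ℕ → ℕ) (lam : ℕ → Cardinal) (A : Set (∀ ℓ, Set (lam ℓ).ord.ToType))
    (ℓ k : ℕ) (B : Set (lam ℓ).ord.ToType)
    (ν : (ℕ → Set ℕ) → (∀ j, Set (lam j).ord.ToType)) : Prop :=
  -- (a)
  (∀ η, SeqIdx t ℓ k η → ν η ∈ A) ∧
  -- (b)
  (∀ η₁ η₂, SeqIdx t ℓ k η₁ → SeqIdx t ℓ k η₂ → ∀ m, ℓ ≤ m → m ≤ k →
    (∀ i, ℓ ≤ i → i < m → η₁ i = η₂ i) → ∀ j, j < m → ν η₁ j = ν η₂ j) ∧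
  -- (c) for `m = ℓ`, with `E = B`
  (∀ η₀, SeqIdx t ℓ k η₀ → ℓ < k →
    {u : Set (lam ℓ).ord.ToType | u ⊆ B ∧ u.Finite ∧ u.ncard = t ℓ} =
      {v | ∃ η, SeqIdx t ℓ k η ∧ v = ν η ℓ}) ∧
  -- (c) for `ℓ ≤ m < k`
  (∀ η₀, SeqIdx t ℓ k η₀ → ∀ m, ℓ ≤ m → m < k →
    ∃ E : Set (lam m).ord.ToType, E.Countable ∧ E.Infinite ∧
      {u : Set (lam m).ord.ToType | u ⊆ E ∧ u.Finite ∧ u.ncard = t m} =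
        {v | ∃ η, SeqIdx t ℓ k η ∧ (∀ i, ℓ ≤ i → i < m → η i = η₀ i) ∧ v = ν η m})

/-- Membership in the ideal `J⁴_{t̄,λ̄}`: for every large enough `ℓ`, for every countably
infinite `B ⊆ λ_ℓ`, for some `k ∈ (ℓ,ω)` one cannot find a system as above. -/
def InJ4 (t : ℕ → ℕ) (lam : ℕ → Cardinal) (A : Set (∀ ℓ, Set (lam ℓ).ord.ToType)) : Prop :=
  ∃ L : ℕ, ∀ ℓ, L ≤ ℓ → ∀ B : Set (lam ℓ).ord.ToType, B.Countable → B.Infinite →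
    ∃ k, ℓ < k ∧ ¬ ∃ ν, IsJ4System t lam A ℓ k B ν


namespace J4P

universe u

open Cardinal Set

lemma bethRel_succ (θ : Cardinal) (n : ℕ) : bethRel θ (n+1) = 2 ^ bethRel θ n := rfl

lemma le_bethRel (θ : Cardinal) (hθ : ℵ₀ ≤ θ) (n : ℕ) : θ ≤ bethRel θ n := by
  induction n with
  | zero => exact le_rfl
  | succ n ih => exact ih.trans (le_of_lt (Cardinal.cantor _))

lemma aleph0_le_bethRel (θ : Cardinal) (hθ : ℵ₀ ≤ θ) (n : ℕ) : ℵ₀ ≤ bethRel θ n :=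
  hθ.trans (le_bethRel θ hθ n)

/-- enumeration of a countably infinite set -/
lemma exists_nat_enum {X : Type u} {E : Set X} (hc : E.Countable) (hi : E.Infinite) :
    ∃ f : ℕ → X, Function.Injective f ∧ Set.range f = E := by
  have : Countable E := hc.to_subtype
  have : Infinite E := hi.to_subtype
  obtain ⟨d⟩ := nonempty_denumerable_iff.2 ⟨‹Countable E›, ‹Infinite E›⟩
  refine ⟨fun n => ((Denumerable.eqv E).symm n : X), ?_, ?_⟩
  · intro a b hab
    have := Subtype.val_injective hab
    exact (Denumerable.eqv E).symm.injective this
  · ext x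
    constructor
    · rintro ⟨n, rfl⟩; exact ((Denumerable.eqv E).symm n).2
    · intro hx
      exact ⟨Denumerable.eqv E ⟨x, hx⟩, by simp⟩

/-- an infinite set has a countably infinite subset -/
lemma exists_countable_infinite_subset {X : Type u} {A : Set X} (hA : A.Infinite) :
    ∃ W ⊆ A, W.Countable ∧ W.Infinite := by
  let e := hA.natEmbedding
  refine ⟨Set.range (fun n => (e n : X)), ?_, Set.countable_range _, ?_⟩
  · rintro x ⟨n, rfl⟩; exact (e n).2
  · exact Set.infinite_range_of_injective (fun a b hab =>
      e.injective (Subtype.val_injective hab))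


section Branch

variable {X : Type u} [LinearOrder X] [WellFoundedLT X] {C : Type u}

/-- the greedy compatible branch below `y`: `z ∈ branch` iff `z < y` and for every
`tt`-sized subset `s` of earlier branch elements, `c (insert z s) = c (insert y s)`. -/
noncomputable def branch (c : Set X → C) (tt : ℕ) (y : X) : X → Prop :=
  (wellFounded_lt (α := X)).fix
    (fun z ih => z < y ∧ ∀ s : Set X, s.Finite → s.ncard = tt →
      (∀ z' ∈ s, ∃ h : z' < z, ih z' h) → c (insert z s) = c (insert y s))

lemma branch_iff (c : Set X → C) (tt : ℕ) (y z : X) :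
    branch c tt y z ↔ z < y ∧ ∀ s : Set X, s.Finite → s.ncard = tt →
      (∀ z' ∈ s, z' < z ∧ branch c tt y z') → c (insert z s) = c (insert y s) := by
  have h := (wellFounded_lt (α := X)).fix_eq
    (fun z (ih : ∀ z' : X, z' < z → Prop) => z < y ∧ ∀ s : Set X, s.Finite → s.ncard = tt →
      (∀ z' ∈ s, ∃ h : z' < z, ih z' h) → c (insert z s) = c (insert y s)) z
  rw [branch, h]
  constructor
  · rintro ⟨h1, h2⟩
    refine ⟨h1, fun s hf hn hs => h2 s hf hn (fun z' hz' => ?_)⟩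
    obtain ⟨hlt, hb⟩ := hs z' hz'
    exact ⟨hlt, hb⟩
  · rintro ⟨h1, h2⟩
    refine ⟨h1, fun s hf hn hs => h2 s hf hn (fun z' hz' => ?_)⟩
    obtain ⟨hlt, hb⟩ := hs z' hz'
    exact ⟨hlt, hb⟩

lemma branch_lt {c : Set X → C} {tt : ℕ} {y z : X} (h : branch c tt y z) : z < y :=
  ((branch_iff c tt y z).1 h).1

lemma branch_color {c : Set X → C} {tt : ℕ} {y z : X} (h : branch c tt y z)
    {s : Set X} (hf : s.Finite) (hn : s.ncard = tt)
    (hs : ∀ z' ∈ s, z' < z ∧ branch c tt y z') :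
    c (insert z s) = c (insert y s) :=
  ((branch_iff c tt y z).1 h).2 s hf hn hs


/-- the branch of `y` as a set -/
def Bset (c : Set X → C) (tt : ℕ) (y : X) : Set X := {z | branch c tt y z}

lemma mem_Bset {c : Set X → C} {tt : ℕ} {y z : X} : z ∈ Bset c tt y ↔ branch c tt y z := Iff.rfl

/-- order type of the branch -/
noncomputable def otp (c : Set X → C) (tt : ℕ) (y : X) : Ordinal :=
  Ordinal.type ((· < ·) : ↥(Bset c tt y) → ↥(Bset c tt y) → Prop)

open Classical in
/-- ordinal position of an element in the branch of `y` (0 if not on the branch) -/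
noncomputable def posOrd (c : Set X → C) (tt : ℕ) (y z : X) : Ordinal :=
  if hz : branch c tt y z then
    Ordinal.typein ((· < ·) : ↥(Bset c tt y) → ↥(Bset c tt y) → Prop) ⟨z, hz⟩
  else 0

lemma posOrd_lt_otp {c : Set X → C} {tt : ℕ} {y z : X} (h : branch c tt y z) :
    posOrd c tt y z < otp c tt y := by
  rw [posOrd]
  rw [dif_pos h]
  exact Ordinal.typein_lt_type _ _

lemma typein_subtype_eq {A : Set X} {z : X} (hz : z ∈ A) :
    Ordinal.typein ((· < ·) : ↥A → ↥A → Prop) ⟨z, hz⟩ =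
      Ordinal.type ((· < ·) : ↥(A ∩ Set.Iio z) → ↥(A ∩ Set.Iio z) → Prop) := by
  rw [← Ordinal.type_subrel]
  apply Ordinal.type_eq.2
  constructor
  refine RelIso.ofSurjective
    ⟨⟨fun p => (⟨p.1.1, p.1.2, Subtype.coe_lt_coe.2 p.2⟩ : ↥(A ∩ Set.Iio z)), ?_⟩, ?_⟩ ?_
  · rintro ⟨⟨a, ha⟩, ha2⟩ ⟨⟨b, hb⟩, hb2⟩ hab
    simp only [Subtype.mk.injEq] at hab ⊢
    exact congrArg Subtype.val hab
  · rintro ⟨⟨a, ha⟩, ha2⟩ ⟨⟨b, hb⟩, hb2⟩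
    exact Iff.rfl
  · rintro ⟨a, ha, ha2⟩
    exact ⟨⟨⟨a, ha⟩, Subtype.coe_lt_coe.1 ha2⟩, rfl⟩

lemma posOrd_eq {c : Set X → C} {tt : ℕ} {y z : X} (h : branch c tt y z) :
    posOrd c tt y z =
      Ordinal.type ((· < ·) : ↥(Bset c tt y ∩ Set.Iio z) → ↥(Bset c tt y ∩ Set.Iio z) → Prop) := by
  rw [posOrd]
  rw [dif_pos h]
  exact typein_subtype_eq h

/-- reconstruction: if colors of `tt`-sets against `y` and `y'` agree along common branch
positions, the branches agree below `y`. -/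
lemma branch_recon {c : Set X → C} {tt : ℕ} {y y' : X} (hyy : y < y')
    (HTR : ∀ s : Set X, s ⊆ Bset c tt y → s ⊆ Bset c tt y' →
      (∀ z ∈ s, posOrd c tt y z = posOrd c tt y' z) → s.Finite → s.ncard = tt →
      c (insert y s) = c (insert y' s)) :
    ∀ z, z < y → ((branch c tt y z ↔ branch c tt y' z) ∧
      (branch c tt y z → posOrd c tt y z = posOrd c tt y' z)) := by
  intro z
  induction z using (wellFounded_lt (α := X)).induction with
  | _ z IH =>
  intro hzy
  have h_inter : Bset c tt y ∩ Set.Iio z = Bset c tt y' ∩ Set.Iio z := by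
    ext w
    simp only [Set.mem_inter_iff, Set.mem_Iio, mem_Bset]
    constructor
    · rintro ⟨hb, hw⟩
      exact ⟨((IH w hw (hw.trans hzy)).1).1 hb, hw⟩
    · rintro ⟨hb, hw⟩
      exact ⟨((IH w hw (hw.trans hzy)).1).2 hb, hw⟩
  have hmem : branch c tt y z ↔ branch c tt y' z := by
    constructor
    · intro hb
      rw [branch_iff]
      refine ⟨hzy.trans hyy, fun s hf hn hs => ?_⟩
      have hsS : ∀ w ∈ s, w < z ∧ branch c tt y w := by
        intro w hw
        obtain ⟨hw1, hw2⟩ := hs w hw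
        have : w ∈ Bset c tt y ∩ Set.Iio z := by
          rw [h_inter]; exact ⟨hw2, hw1⟩
        exact ⟨hw1, this.1⟩
      have h1 : c (insert z s) = c (insert y s) := branch_color hb hf hn hsS
      have h2 : c (insert y s) = c (insert y' s) := by
        refine HTR s (fun w hw => (hsS w hw).2) (fun w hw => (hs w hw).2)
          (fun w hw => (IH w (hsS w hw).1 ((hsS w hw).1.trans hzy)).2 (hsS w hw).2) hf hn
      rw [h1, h2]
    · intro hb
      rw [branch_iff]
      refine ⟨hzy, fun s hf hn hs => ?_⟩
      have hsS : ∀ w ∈ s, w < z ∧ branch c tt y' w := by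
        intro w hw
        obtain ⟨hw1, hw2⟩ := hs w hw
        have : w ∈ Bset c tt y' ∩ Set.Iio z := by
          rw [← h_inter]; exact ⟨hw2, hw1⟩
        exact ⟨hw1, this.1⟩
      have h1 : c (insert z s) = c (insert y' s) := branch_color hb hf hn hsS
      have h2 : c (insert y s) = c (insert y' s) := by
        refine HTR s (fun w hw => (hs w hw).2) (fun w hw => (hsS w hw).2)
          (fun w hw => (IH w (hsS w hw).1 ((hsS w hw).1.trans hzy)).2 (hs w hw).2) hf hn
      rw [h1, ← h2]
  refine ⟨hmem, fun hb => ?_⟩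
  have hb' : branch c tt y' z := hmem.1 hb
  rw [posOrd_eq hb, posOrd_eq hb', h_inter]

/-- no `y < y'` can have equal order types and matching traces -/
lemma branch_no_ext {c : Set X → C} {tt : ℕ} {y y' : X} (hyy : y < y')
    (hotp : otp c tt y = otp c tt y')
    (HTR : ∀ s : Set X, s ⊆ Bset c tt y → s ⊆ Bset c tt y' →
      (∀ z ∈ s, posOrd c tt y z = posOrd c tt y' z) → s.Finite → s.ncard = tt →
      c (insert y s) = c (insert y' s)) : False := by
  have R := branch_recon hyy HTR
  have hBeq : Bset c tt y' ∩ Set.Iio y = Bset c tt y := by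
    ext w
    simp only [Set.mem_inter_iff, Set.mem_Iio, mem_Bset]
    constructor
    · rintro ⟨hb, hw⟩
      exact ((R w hw).1).2 hb
    · intro hb
      exact ⟨((R w (branch_lt hb)).1).1 hb, branch_lt hb⟩
  have hyb : branch c tt y' y := by
    rw [branch_iff]
    refine ⟨hyy, fun s hf hn hs => ?_⟩
    have hsY : ∀ w ∈ s, branch c tt y w := by
      intro w hw
      obtain ⟨hw1, hw2⟩ := hs w hw
      have : w ∈ Bset c tt y' ∩ Set.Iio y := ⟨hw2, hw1⟩
      rw [hBeq] at this
      exact this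
    exact HTR s (fun w hw => hsY w hw) (fun w hw => (hs w hw).2)
      (fun w hw => (R w (hs w hw).1).2 (hsY w hw)) hf hn
  have h1 : Ordinal.typein ((· < ·) : ↥(Bset c tt y') → ↥(Bset c tt y') → Prop) ⟨y, hyb⟩ <
      otp c tt y' := Ordinal.typein_lt_type _ _
  have h3 := typein_subtype_eq (A := Bset c tt y') (z := y) hyb
  have h4 : Ordinal.type ((· < ·) : ↥(Bset c tt y' ∩ Set.Iio y) → ↥(Bset c tt y' ∩ Set.Iio y) → Prop)
      = otp c tt y := by
    rw [otp, hBeq]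
  rw [h3, h4, hotp] at h1
  exact lt_irrefl _ h1


section Encode

/-- position map into `κo.ToType` -/
noncomputable def ptF (c : Set X → C) (tt : ℕ) (κo : Ordinal) (hpos : ∀ y z : X, posOrd c tt y z < κo) (y z : X) : κo.ToType :=
  Ordinal.ToType.mk (o := κo) ⟨posOrd c tt y z, hpos y z⟩

/-- order type of the branch as an element of `κo.ToType` -/
noncomputable def bbF (c : Set X → C) (tt : ℕ) (κo : Ordinal) (hotp : ∀ y : X, otp c tt y < κo) (y : X) : κo.ToType :=
  Ordinal.ToType.mk (o := κo) ⟨otp c tt y, hotp y⟩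

open Classical in
/-- the encoding of a point by the order type of its branch and its positional trace -/
noncomputable def encF (c : Set X → C) (tt : ℕ) (κo : Ordinal)
    (hpos : ∀ y z : X, posOrd c tt y z < κo)
    (hotp : ∀ y : X, otp c tt y < κo) (y : X) :
    Σ _b : κo.ToType, ({σ : Finset κo.ToType // σ.card = tt ∧ ∀ x ∈ σ, x < _b} → Option C) :=
  ⟨bbF c tt κo hotp y, fun σd =>
    if h : ∃ s : Set X, s ⊆ Bset c tt y ∧ s.Finite ∧ s.ncard = tt ∧
        (ptF c tt κo hpos y) '' s = ↑σd.val then some (c (insert y h.choose)) else none⟩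

open Classical in
/-- non-dependent evaluation of the encoding -/
noncomputable def evalF {C : Type u} (tt : ℕ) (κo : Ordinal)
    (p : Σ _b : κo.ToType, ({σ : Finset κo.ToType // σ.card = tt ∧ ∀ x ∈ σ, x < _b} → Option C))
    (σ : Finset κo.ToType) : Option C :=
  if h : σ.card = tt ∧ ∀ x ∈ σ, x < p.1 then p.2 ⟨σ, h⟩ else none

variable {c : Set X → C} {tt : ℕ} {κo : Ordinal}
variable (hpos : ∀ y z : X, posOrd c tt y z < κo) (hotp : ∀ y : X, otp c tt y < κo)

lemma ptF_lt_bbF {y z : X} (h : branch c tt y z) : ptF c tt κo hpos y z < bbF c tt κo hotp y := by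
  apply (Ordinal.ToType.mk (o := κo)).lt_iff_lt.2
  exact Subtype.mk_lt_mk.2 (posOrd_lt_otp h)

lemma ptF_injOn (y : X) : Set.InjOn (ptF c tt κo hpos y) (Bset c tt y) := by
  intro a ha b hb hab
  have h1 : posOrd c tt y a = posOrd c tt y b :=
    congrArg Subtype.val ((Ordinal.ToType.mk (o := κo)).injective hab)
  rw [posOrd] at h1
  rw [posOrd] at h1
  rw [dif_pos (mem_Bset.1 ha), dif_pos (mem_Bset.1 hb)] at h1
  have := Ordinal.typein_injective ((· < ·) : ↥(Bset c tt y) → ↥(Bset c tt y) → Prop) h1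
  exact congrArg Subtype.val this

lemma ptF_imgUnique (y : X) {s₁ s₂ : Set X} (h₁ : s₁ ⊆ Bset c tt y) (h₂ : s₂ ⊆ Bset c tt y)
    (himg : (ptF c tt κo hpos y) '' s₁ = (ptF c tt κo hpos y) '' s₂) : s₁ = s₂ := by
  ext w
  constructor
  · intro hw
    have : ptF c tt κo hpos y w ∈ (ptF c tt κo hpos y) '' s₂ :=
      himg ▸ Set.mem_image_of_mem _ hw
    obtain ⟨w', hw', he⟩ := this
    rwa [← ptF_injOn hpos y (h₂ hw') (h₁ hw) he]
  · intro hw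
    have : ptF c tt κo hpos y w ∈ (ptF c tt κo hpos y) '' s₁ :=
      himg.symm ▸ Set.mem_image_of_mem _ hw
    obtain ⟨w', hw', he⟩ := this
    rwa [← ptF_injOn hpos y (h₁ hw') (h₂ hw) he]

lemma evalF_encF {y : X} {s : Set X} (hsub : s ⊆ Bset c tt y) (hf : s.Finite)
    (hn : s.ncard = tt) :
    evalF tt κo (encF c tt κo hpos hotp y) (hf.image (ptF c tt κo hpos y)).toFinset =
      some (c (insert y s)) := by
  have hσcoe : ((hf.image (ptF c tt κo hpos y)).toFinset : Set κo.ToType) =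
      (ptF c tt κo hpos y) '' s := Set.Finite.coe_toFinset _
  have hcard : (hf.image (ptF c tt κo hpos y)).toFinset.card = tt := by
    rw [← Set.ncard_coe_finset, hσcoe,
      Set.ncard_image_of_injOn ((ptF_injOn hpos y).mono hsub), hn]
  have hbd : ∀ x ∈ (hf.image (ptF c tt κo hpos y)).toFinset, x < bbF c tt κo hotp y := by
    intro x hx
    have hx' : x ∈ (ptF c tt κo hpos y) '' s := by
      rwa [Set.Finite.mem_toFinset] at hx
    obtain ⟨z, hz, rfl⟩ := hx'
    exact ptF_lt_bbF hpos hotp (mem_Bset.1 (hsub hz))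
  have hex : ∃ s' : Set X, s' ⊆ Bset c tt y ∧ s'.Finite ∧ s'.ncard = tt ∧
      (ptF c tt κo hpos y) '' s' = ↑(hf.image (ptF c tt κo hpos y)).toFinset :=
    ⟨s, hsub, hf, hn, hσcoe.symm⟩
  dsimp only [evalF, encF]
  rw [dif_pos ⟨hcard, hbd⟩, dif_pos hex]
  have hch : hex.choose = s := by
    obtain ⟨hc1, hc2, hc3, hc4⟩ := hex.choose_spec
    exact ptF_imgUnique hpos y hc1 hsub (hc4.trans hσcoe)
  rw [hch]

lemma encF_otp {y y' : X} (henc : encF c tt κo hpos hotp y = encF c tt κo hpos hotp y') :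
    otp c tt y = otp c tt y' := by
  have hb : bbF c tt κo hotp y = bbF c tt κo hotp y' := congrArg Sigma.fst henc
  exact congrArg Subtype.val ((Ordinal.ToType.mk (o := κo)).injective hb)

lemma encF_transfer {y y' : X} (henc : encF c tt κo hpos hotp y = encF c tt κo hpos hotp y') :
    ∀ s : Set X, s ⊆ Bset c tt y → s ⊆ Bset c tt y' →
      (∀ z ∈ s, posOrd c tt y z = posOrd c tt y' z) → s.Finite → s.ncard = tt →
      c (insert y s) = c (insert y' s) := by
  intro s hs hs' hposeq hf hn
  have hptEq : ∀ z ∈ s, ptF c tt κo hpos y z = ptF c tt κo hpos y' z := by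
    intro z hz
    exact congrArg (Ordinal.ToType.mk (o := κo)) (Subtype.ext (hposeq z hz))
  have himg : (ptF c tt κo hpos y) '' s = (ptF c tt κo hpos y') '' s := by
    apply Set.image_congr hptEq
  have h1 := evalF_encF hpos hotp hs hf hn
  have h2 := evalF_encF hpos hotp hs' hf hn
  have h12 : (hf.image (ptF c tt κo hpos y)).toFinset =
      (hf.image (ptF c tt κo hpos y')).toFinset := by
    apply Finset.coe_injective
    rw [Set.Finite.coe_toFinset, Set.Finite.coe_toFinset]
    exact himg
  rw [← henc, ← h12] at h2
  rw [h2] at h1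
  exact (Option.some_injective _ h1).symm

lemma encF_injective : Function.Injective (encF c tt κo hpos hotp) := by
  intro y y' henc
  by_contra hne
  rcases lt_or_gt_of_ne hne with hlt | hlt
  · exact branch_no_ext hlt (encF_otp hpos hotp henc)
      (encF_transfer hpos hotp henc)
  · exact branch_no_ext hlt (encF_otp hpos hotp henc.symm)
      (encF_transfer hpos hotp henc.symm)

end Encode

end Branch

/-- Erdős–Rado: a coloring of the `(n+1)`-element subsets of `X` with at most `θ` colors,
where `#X > bethRel θ n`, admits a countably infinite homogeneous set. -/
theorem erdosRado (θ : Cardinal) (hθ : ℵ₀ ≤ θ) :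
    ∀ n : ℕ, ∀ (X : Type u) (_ : LinearOrder X) (_ : WellFoundedLT X) (C : Type u),
      #C ≤ θ → bethRel θ n < #X → ∀ c : Set X → C,
      ∃ W : Set X, W.Countable ∧ W.Infinite ∧
        ∃ γ : C, ∀ u ⊆ W, u.Finite → u.ncard = n + 1 → c u = γ := by
  intro n
  induction n with
  | zero =>
    intro X _ _ C hC hX c
    -- exponent 1 : pigeonhole
    by_cases hfib : ∃ γ : C, {x : X | c {x} = γ}.Infinite
    · obtain ⟨γ, hγ⟩ := hfib
      obtain ⟨W, hWsub, hWc, hWi⟩ := exists_countable_infinite_subset hγ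
      refine ⟨W, hWc, hWi, γ, fun u hu hf hn => ?_⟩
      obtain ⟨x, rfl⟩ := Set.ncard_eq_one.1 hn
      exact hWsub (hu rfl)
    · exfalso
      push_neg at hfib
      have hXle : #X ≤ θ := by
        have he : #X = Cardinal.sum (fun γ : C => #{x : X // c {x} = γ}) := by
          rw [← Cardinal.mk_sigma]
          exact Cardinal.mk_congr (Equiv.sigmaFiberEquiv (fun x : X => c {x})).symm
        rw [he]
        calc Cardinal.sum (fun γ : C => #{x : X // c {x} = γ})
            ≤ Cardinal.sum (fun _ : C => ℵ₀) := by
              apply Cardinal.sum_le_sum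
              intro γ
              have hfin : {x : X | c {x} = γ}.Finite := hfib γ
              exact @Cardinal.mk_le_aleph0 _ hfin.countable.to_subtype
          _ = #C * ℵ₀ := Cardinal.sum_const' _ _
          _ ≤ θ * θ := mul_le_mul' hC hθ
          _ = θ := Cardinal.mul_eq_self hθ
      exact absurd hX (not_lt.2 (hXle.trans (le_bethRel θ hθ 0)))
  | succ n ih =>
    intro X _ _ C hC hX c
    have hμθ : θ ≤ bethRel θ n := le_bethRel θ hθ n
    have hμ0 : ℵ₀ ≤ bethRel θ n := hθ.trans hμθ
    set tt := n + 1 with htt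
    set By : X → Set X := fun y => {z | branch c tt y z} with hBy
    by_cases hcase : ∃ y : X, bethRel θ n < #(By y)
    -- Case A : some branch is long enough, apply the inductive hypothesis inside it
    · obtain ⟨y, hy⟩ := hcase
      obtain ⟨W', hW'c, hW'i, γ, hγ⟩ := ih (By y) inferInstance inferInstance C hC hy
        (fun σ => c (insert y (Subtype.val '' σ)))
      have hsub_branch : Subtype.val '' W' ⊆ By y := by
        rintro _ ⟨x, _, rfl⟩; exact x.2
      refine ⟨Subtype.val '' W', hW'c.image _,
        hW'i.image Subtype.val_injective.injOn, γ, ?_⟩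
      intro u hu hf hn
      have hne : u.Nonempty := by
        apply Set.nonempty_of_ncard_ne_zero
        rw [hn]
        omega
      obtain ⟨z₀, hz₀u, hz₀max⟩ := hf.exists_maximalFor id u hne
      have hmax : ∀ w ∈ u, w ≤ z₀ := by
        intro w hw
        rcases le_total w z₀ with h | h
        · exact h
        · exact hz₀max hw h
      set s := u \ {z₀} with hsdef
      have hssubu : s ⊆ u := Set.diff_subset
      have hs_sub : s ⊆ By y := fun w hw => hsub_branch (hu (hssubu hw))
      have hslt : ∀ w ∈ s, w < z₀ := fun w hw =>
        lt_of_le_of_ne (hmax w hw.1) (by simpa using hw.2)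
      have hsf : s.Finite := hf.diff
      have hsn : s.ncard = n + 1 := by
        rw [hsdef, Set.ncard_diff_singleton_of_mem hz₀u, hn]
        omega
      have hz₀b : branch c tt y z₀ := hsub_branch (hu hz₀u)
      have h1 : c (insert z₀ s) = c (insert y s) :=
        branch_color hz₀b hsf hsn (fun z' hz' => ⟨hslt z' hz', hs_sub hz'⟩)
      have hins : insert z₀ s = u := by
        rw [hsdef, Set.insert_diff_singleton, Set.insert_eq_self.2 hz₀u]
      set σ := (Subtype.val : By y → X) ⁻¹' s with hσdef
      have hσval : Subtype.val '' σ = s := by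
        apply Set.image_preimage_eq_of_subset
        intro w hw
        rw [Subtype.range_coe]
        exact hs_sub hw
      have hσW' : σ ⊆ W' := by
        intro x hx
        have hxs : (x : X) ∈ s := hx
        obtain ⟨x', hx', hxx⟩ := hssubu hxs |> hu
        have hxe : x' = x := Subtype.val_injective hxx
        rwa [hxe] at hx'
      have hσf : σ.Finite := hsf.preimage Subtype.val_injective.injOn
      have hσn : σ.ncard = n + 1 := by
        rw [← Set.ncard_image_of_injective σ Subtype.val_injective, hσval] at *
        exact hsn
      have h2 : c (insert y s) = γ := by
        rw [← hσval]
        exact hγ σ hσW' hσf hσn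
      rw [← hins, h1, h2]
    -- Case B : all branches are short; count them to get a contradiction
    · push_neg at hcase
      exfalso
      classical
      set μp := bethRel θ n with hμp
      set κ := Order.succ μp with hκdef
      set κo := κ.ord with hκo
      have hκμ : κ ≤ 2 ^ μp := Order.succ_le_of_lt (Cardinal.cantor μp)
      have h2μ : ℵ₀ ≤ (2 : Cardinal) ^ μp := hμ0.trans (le_of_lt (Cardinal.cantor μp))
      haveI : IsWellOrder κo.ToType ((· < ·) : κo.ToType → κo.ToType → Prop) := isWellOrder_lt
      have hotp_lt : ∀ y : X, otp c tt y < κo := by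
        intro y
        rw [hκo, Cardinal.lt_ord]
        have hcard : (otp c tt y).card = #↥(Bset c tt y) := Ordinal.card_type _
        rw [hcard]
        exact lt_of_le_of_lt (hcase y) (Order.lt_succ μp)
      have hposlt : ∀ y z : X, posOrd c tt y z < κo := by
        intro y z
        by_cases h : branch c tt y z
        · exact (posOrd_lt_otp h).trans (hotp_lt y)
        · rw [posOrd]
          rw [dif_neg h, hκo, Cardinal.lt_ord, Ordinal.card_zero]
          exact lt_of_lt_of_le (lt_of_lt_of_le Cardinal.aleph0_pos hμ0) (le_of_lt (Order.lt_succ μp))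
      -- injectivity of the encoding
      have hinj := encF_injective (c := c) (tt := tt) (κo := κo) hposlt hotp_lt
      have hXle : #X ≤ #(Σ _b : κo.ToType,
          ({σ : Finset κo.ToType // σ.card = tt ∧ ∀ x ∈ σ, x < _b} → Option C)) :=
        Cardinal.mk_le_of_injective hinj
      -- counting
      have hsummand : ∀ _b : κo.ToType,
          #({σ : Finset κo.ToType // σ.card = tt ∧ ∀ x ∈ σ, x < _b} → Option C) ≤ 2 ^ μp := by
        intro b
        have hYle : #{x : κo.ToType // x < b} ≤ μp := by
          have h1 := Ordinal.card_typein (r := ((· < ·) : κo.ToType → κo.ToType → Prop)) b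
          have h2 : ((Ordinal.typein ((· < ·) : κo.ToType → κo.ToType → Prop)) b).card < κ :=
            Cardinal.card_typein_toType_lt κ b
          rw [h1] at h2
          exact Order.lt_succ_iff.1 h2
        have hD : #{σ : Finset κo.ToType // σ.card = tt ∧ ∀ x ∈ σ, x < b} ≤ μp := by
          classical
          have hmap : Function.Injective
              (fun σd : {σ : Finset κo.ToType // σ.card = tt ∧ ∀ x ∈ σ, x < b} =>
                (σd.val.subtype (fun x => x < b) : Finset {x : κo.ToType // x < b})) := by
            rintro ⟨σ₁, hc₁, hb₁⟩ ⟨σ₂, hc₂, hb₂⟩ h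
            dsimp only at h
            simp only [Subtype.mk.injEq]
            ext x
            constructor
            · intro hx
              have : (⟨x, hb₁ x hx⟩ : {x : κo.ToType // x < b}) ∈ σ₁.subtype (fun x => x < b) := by
                simp [Finset.mem_subtype, hx]
              rw [h] at this
              simpa [Finset.mem_subtype] using this
            · intro hx
              have : (⟨x, hb₂ x hx⟩ : {x : κo.ToType // x < b}) ∈ σ₂.subtype (fun x => x < b) := by
                simp [Finset.mem_subtype, hx]
              rw [← h] at this
              simpa [Finset.mem_subtype] using this
          have h3 : #{σ : Finset κo.ToType // σ.card = tt ∧ ∀ x ∈ σ, x < b} ≤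
              #(Finset {x : κo.ToType // x < b}) := Cardinal.mk_le_of_injective hmap
          refine h3.trans ?_
          by_cases hfin : Finite {x : κo.ToType // x < b}
          · haveI := hfin
            haveI := Fintype.ofFinite {x : κo.ToType // x < b}
            exact (Cardinal.lt_aleph0_of_finite _).le.trans hμ0
          · have : Infinite {x : κo.ToType // x < b} := not_finite_iff_infinite.1 hfin
            rw [Cardinal.mk_finset_of_infinite]
            exact hYle
        have hOC : #(Option C) ≤ θ := by
          rw [Cardinal.mk_option]
          calc #C + 1 ≤ θ + 1 := add_le_add hC le_rfl
            _ = θ := Cardinal.add_one_eq hθ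
        calc #({σ : Finset κo.ToType // σ.card = tt ∧ ∀ x ∈ σ, x < b} → Option C)
            = #(Option C) ^ #{σ : Finset κo.ToType // σ.card = tt ∧ ∀ x ∈ σ, x < b} := by
              rw [Cardinal.mk_arrow, Cardinal.lift_id, Cardinal.lift_id]
          _ ≤ θ ^ #{σ : Finset κo.ToType // σ.card = tt ∧ ∀ x ∈ σ, x < b} :=
              Cardinal.power_le_power_right hOC
          _ ≤ θ ^ μp := by
              apply Cardinal.power_le_power_left (lt_of_lt_of_le Cardinal.aleph0_pos hθ).ne'
              exact hD
          _ ≤ (2 ^ μp) ^ μp := Cardinal.power_le_power_right (hμθ.trans (Cardinal.cantor μp).le)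
          _ = 2 ^ (μp * μp) := (Cardinal.power_mul).symm
          _ = 2 ^ μp := by rw [Cardinal.mul_eq_self hμ0]
      have hK : #(Σ _b : κo.ToType,
          ({σ : Finset κo.ToType // σ.card = tt ∧ ∀ x ∈ σ, x < _b} → Option C)) ≤ 2 ^ μp := by
        rw [Cardinal.mk_sigma]
        calc Cardinal.sum (fun _b : κo.ToType =>
              #({σ : Finset κo.ToType // σ.card = tt ∧ ∀ x ∈ σ, x < _b} → Option C))
            ≤ Cardinal.sum (fun _ : κo.ToType => 2 ^ μp) := Cardinal.sum_le_sum _ _ hsummand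
          _ = #κo.ToType * 2 ^ μp := Cardinal.sum_const' _ _
          _ ≤ 2 ^ μp * 2 ^ μp := by
              apply mul_le_mul' _ le_rfl
              rw [Cardinal.mk_toType, hκo, Cardinal.card_ord]
              exact hκμ
          _ = 2 ^ μp := Cardinal.mul_eq_self h2μ
      have : #X ≤ 2 ^ μp := hXle.trans hK
      have hcontra : bethRel θ (n + 1) < #X := by rw [← htt]; exact hX
      rw [bethRel_succ] at hcontra
      exact absurd this (not_le.2 hcontra)


/-! ### Main construction -/

section Main

/-- points of the product space -/
abbrev Pt (lam : ℕ → Cardinal.{u}) := ∀ ℓ : ℕ, Set (lam ℓ).ord.ToType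

/-- some member of `A` extends the prefix `w ↾ m` -/
def ExtA (lam : ℕ → Cardinal.{u}) (A : Set (Pt lam)) (m : ℕ) (w : Pt lam) : Prop :=
  ∃ ζ ∈ A, ∀ j < m, ζ j = w j

/-- ordinal-ranked badness of a node `(m, w)` for the set `A` -/
noncomputable def BadR (t : ℕ → ℕ) (lam : ℕ → Cardinal.{u}) (A : Set (Pt lam)) :
    Ordinal.{u} → ℕ → Pt lam → Prop :=
  Ordinal.lt_wf.fix (fun o ih => fun m w => ¬ ExtA lam A m w ∨
    (∀ E : Set (lam m).ord.ToType, E.Countable → E.Infinite →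
      ∃ u, u ⊆ E ∧ u.Finite ∧ u.ncard = t m ∧
        ∃ o' : Ordinal.{u}, ∃ h : o' < o, ih o' h (m+1) (Function.update w m u)))

variable (t : ℕ → ℕ) (lam : ℕ → Cardinal.{u})

lemma badR_iff (A : Set (Pt lam)) (o : Ordinal.{u}) (m : ℕ) (w : Pt lam) :
    BadR t lam A o m w ↔ ¬ ExtA lam A m w ∨
      (∀ E : Set (lam m).ord.ToType, E.Countable → E.Infinite →
        ∃ u, u ⊆ E ∧ u.Finite ∧ u.ncard = t m ∧
          ∃ o' : Ordinal.{u}, o' < o ∧ BadR t lam A o' (m+1) (Function.update w m u)) := by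
  have h : BadR t lam A o = fun (m : ℕ) (w : Pt lam) => ¬ ExtA lam A m w ∨
      (∀ E : Set (lam m).ord.ToType, E.Countable → E.Infinite →
        ∃ u, u ⊆ E ∧ u.Finite ∧ u.ncard = t m ∧
          ∃ o' : Ordinal.{u}, ∃ _ : o' < o, BadR t lam A o' (m+1) (Function.update w m u)) :=
    Ordinal.lt_wf.fix_eq (fun o (ih : ∀ o' : Ordinal, o' < o → ℕ → Pt lam → Prop) =>
      fun m w => ¬ ExtA lam A m w ∨
      (∀ E : Set (lam m).ord.ToType, E.Countable → E.Infinite →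
        ∃ u, u ⊆ E ∧ u.Finite ∧ u.ncard = t m ∧
          ∃ o' : Ordinal.{u}, ∃ h : o' < o, ih o' h (m+1) (Function.update w m u))) o
  rw [show BadR t lam A o m w = _ from congrFun (congrFun h m) w]
  simp only [exists_prop]

lemma extA_of_not_badR {A : Set (Pt lam)} {m : ℕ} {w : Pt lam}
    (h : ¬ ∃ o, BadR t lam A o m w) : ExtA lam A m w := by
  by_contra hext
  exact h ⟨0, (badR_iff t lam A 0 m w).2 (Or.inl hext)⟩

lemma spread_of_not_badR {A : Set (Pt lam)} {m : ℕ} {w : Pt lam}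
    (h : ¬ ∃ o, BadR t lam A o m w) :
    ∃ E : Set (lam m).ord.ToType, E.Countable ∧ E.Infinite ∧
      ∀ u, u ⊆ E → u.Finite → u.ncard = t m →
        ¬ ∃ o, BadR t lam A o (m+1) (Function.update w m u) := by
  by_contra hE
  push_neg at hE
  apply h
  classical
  set G : Set (Set (lam m).ord.ToType) :=
    {u | ∃ o, BadR t lam A o (m+1) (Function.update w m u)} with hG
  refine ⟨(⨆ u : G, sInf {o | BadR t lam A o (m+1) (Function.update w m u.1)}) + 1, ?_⟩
  apply (badR_iff t lam A _ m w).2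
  refine Or.inr (fun E hEc hEi => ?_)
  obtain ⟨u, huE, huf, hun, ho⟩ := hE E hEc hEi
  refine ⟨u, huE, huf, hun, sInf {o | BadR t lam A o (m+1) (Function.update w m u)}, ?_, ?_⟩
  · apply lt_of_le_of_lt _ (Order.lt_succ _)
    exact le_ciSup (Ordinal.bddAbove_range _) (⟨u, ho⟩ : G)
  · exact csInf_mem ho

/-- a canonical countably infinite subset of an infinite type -/
noncomputable def junkSet (hinf : ∀ m : ℕ, Infinite (lam m).ord.ToType) (m : ℕ) :
    Set (lam m).ord.ToType := by
  haveI := hinf m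
  exact (exists_countable_infinite_subset (Set.infinite_univ
    (α := (lam m).ord.ToType))).choose

lemma junkSet_spec (hinf : ∀ m : ℕ, Infinite (lam m).ord.ToType) (m : ℕ) :
    (junkSet lam hinf m).Countable ∧ (junkSet lam hinf m).Infinite := by
  haveI := hinf m
  obtain ⟨_, h2, h3⟩ := (exists_countable_infinite_subset (Set.infinite_univ
    (α := (lam m).ord.ToType))).choose_spec
  exact ⟨h2, h3⟩

open Classical in
/-- the canonical spread set at a node -/
noncomputable def Ech (A : Set (Pt lam)) (hinf : ∀ m : ℕ, Infinite (lam m).ord.ToType)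
    (m : ℕ) (w : Pt lam) : Set (lam m).ord.ToType :=
  if h : ∃ E : Set (lam m).ord.ToType, E.Countable ∧ E.Infinite ∧
      ∀ u, u ⊆ E → u.Finite → u.ncard = t m →
        ¬ ∃ o, BadR t lam A o (m+1) (Function.update w m u) then
    h.choose
  else junkSet lam hinf m

lemma Ech_countable (A : Set (Pt lam)) (hinf : ∀ m : ℕ, Infinite (lam m).ord.ToType)
    (m : ℕ) (w : Pt lam) : (Ech t lam A hinf m w).Countable := by
  rw [Ech]
  split
  · next h => exact h.choose_spec.1
  · exact (junkSet_spec lam hinf m).1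

lemma Ech_infinite (A : Set (Pt lam)) (hinf : ∀ m : ℕ, Infinite (lam m).ord.ToType)
    (m : ℕ) (w : Pt lam) : (Ech t lam A hinf m w).Infinite := by
  rw [Ech]
  split
  · next h => exact h.choose_spec.2.1
  · exact (junkSet_spec lam hinf m).2

lemma Ech_spec {A : Set (Pt lam)} (hinf : ∀ m : ℕ, Infinite (lam m).ord.ToType)
    {m : ℕ} {w : Pt lam} (h : ¬ ∃ o, BadR t lam A o m w) :
    ∀ u, u ⊆ Ech t lam A hinf m w → u.Finite → u.ncard = t m →
      ¬ ∃ o, BadR t lam A o (m+1) (Function.update w m u) := by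
  have hex := spread_of_not_badR t lam h
  rw [Ech, dif_pos hex]
  exact hex.choose_spec.2.2

/-- enumeration of the canonical spread set -/
noncomputable def EchEnum (A : Set (Pt lam)) (hinf : ∀ m : ℕ, Infinite (lam m).ord.ToType)
    (m : ℕ) (w : Pt lam) : ℕ → (lam m).ord.ToType :=
  (exists_nat_enum (Ech_countable t lam A hinf m w) (Ech_infinite t lam A hinf m w)).choose

lemma EchEnum_inj (A : Set (Pt lam)) (hinf : ∀ m : ℕ, Infinite (lam m).ord.ToType)
    (m : ℕ) (w : Pt lam) : Function.Injective (EchEnum t lam A hinf m w) :=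
  (exists_nat_enum (Ech_countable t lam A hinf m w) (Ech_infinite t lam A hinf m w)).choose_spec.1

lemma EchEnum_range (A : Set (Pt lam)) (hinf : ∀ m : ℕ, Infinite (lam m).ord.ToType)
    (m : ℕ) (w : Pt lam) : Set.range (EchEnum t lam A hinf m w) = Ech t lam A hinf m w :=
  (exists_nat_enum (Ech_countable t lam A hinf m w) (Ech_infinite t lam A hinf m w)).choose_spec.2

open Classical in
/-- extension of a prefix to a member of `A` (or the prefix itself if impossible) -/
noncomputable def extPt (lam : ℕ → Cardinal.{u}) (A : Set (Pt lam)) (m : ℕ) (w : Pt lam) : Pt lam :=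
  if h : ExtA lam A m w then h.choose else w

lemma extPt_agree (A : Set (Pt lam)) (m : ℕ) (w : Pt lam) :
    ∀ j < m, extPt lam A m w j = w j := by
  intro j hj
  rw [extPt]
  split
  · next h => exact h.choose_spec.2 j hj
  · rfl

lemma extPt_mem {A : Set (Pt lam)} {m : ℕ} {w : Pt lam} (h : ExtA lam A m w) :
    extPt lam A m w ∈ A := by
  rw [extPt, dif_pos h]
  exact h.choose_spec.1

end Main

section Systems

variable (t : ℕ → ℕ) (lam : ℕ → Cardinal.{u}) (A : Set (Pt lam))
variable (hinf : ∀ m : ℕ, Infinite (lam m).ord.ToType)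

/-- the tree of nodes above a base node -/
noncomputable def nodeW (ℓ : ℕ) (w0 : Pt lam) (η : ℕ → Set ℕ) : ℕ → Pt lam
  | 0 => w0
  | k+1 => Function.update (nodeW ℓ w0 η k) (ℓ+k)
      ((EchEnum t lam A hinf (ℓ+k) (nodeW ℓ w0 η k)) '' η (ℓ+k))

lemma nodeW_low (ℓ : ℕ) (w0 : Pt lam) (η : ℕ → Set ℕ) (k : ℕ) :
    ∀ j, (j < ℓ ∨ ℓ + k ≤ j) → nodeW t lam A hinf ℓ w0 η k j = w0 j := by
  induction k with
  | zero => intro j _; rfl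
  | succ k ih =>
    intro j hj
    have hne : j ≠ ℓ + k := by omega
    rw [nodeW, Function.update_of_ne hne]
    exact ih j (by omega)

lemma nodeW_congr (ℓ : ℕ) (w0 : Pt lam) (η₁ η₂ : ℕ → Set ℕ) (k : ℕ)
    (h : ∀ i, ℓ ≤ i → i < ℓ + k → η₁ i = η₂ i) :
    nodeW t lam A hinf ℓ w0 η₁ k = nodeW t lam A hinf ℓ w0 η₂ k := by
  induction k with
  | zero => rfl
  | succ k ih =>
    have h1 : nodeW t lam A hinf ℓ w0 η₁ k = nodeW t lam A hinf ℓ w0 η₂ k :=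
      ih (fun i h2 h3 => h i h2 (by omega))
    rw [nodeW, nodeW, h1, h (ℓ+k) (by omega) (by omega)]

lemma nodeW_val (ℓ : ℕ) (w0 : Pt lam) (η : ℕ → Set ℕ) (k : ℕ) :
    ∀ j, ℓ ≤ j → j < ℓ + k →
      nodeW t lam A hinf ℓ w0 η k j =
        (EchEnum t lam A hinf j (nodeW t lam A hinf ℓ w0 η (j - ℓ))) '' η j := by
  induction k with
  | zero => intro j h1 h2; omega
  | succ k ih =>
    intro j h1 h2
    by_cases hj : j = ℓ + k
    · subst hj
      rw [nodeW, Function.update_self, Nat.add_sub_cancel_left]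
    · rw [nodeW, Function.update_of_ne hj]
      exact ih j h1 (by omega)

lemma nodeW_NB (ℓ : ℕ) (w0 : Pt lam) (η : ℕ → Set ℕ) (k : ℕ)
    (hnb : ¬ ∃ o, BadR t lam A o ℓ w0)
    (hη : ∀ i, ℓ ≤ i → i < ℓ + k → (η i).Finite ∧ (η i).ncard = t i) :
    ¬ ∃ o, BadR t lam A o (ℓ + k) (nodeW t lam A hinf ℓ w0 η k) := by
  induction k with
  | zero => exact hnb
  | succ k ih =>
    have hprev : ¬ ∃ o, BadR t lam A o (ℓ + k) (nodeW t lam A hinf ℓ w0 η k) :=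
      ih (fun i h1 h2 => hη i h1 (by omega))
    have hmem : (η (ℓ+k)).Finite ∧ (η (ℓ+k)).ncard = t (ℓ+k) := hη (ℓ+k) (by omega) (by omega)
    have := Ech_spec t lam hinf hprev
      ((EchEnum t lam A hinf (ℓ+k) (nodeW t lam A hinf ℓ w0 η k)) '' η (ℓ+k))
      (by rw [← EchEnum_range t lam A hinf (ℓ+k) (nodeW t lam A hinf ℓ w0 η k)]
          exact Set.image_subset_range _ _)
      (hmem.1.image _)
      (by rw [Set.ncard_image_of_injective _ (EchEnum_inj t lam A hinf (ℓ+k) _)]; exact hmem.2)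
    rw [nodeW]
    exact this

/-- default index -/
def defIdx (i : ℕ) : Set ℕ := ↑(Finset.range (t i))

lemma defIdx_spec (i : ℕ) : (defIdx t i).Finite ∧ (defIdx t i).ncard = t i := by
  constructor
  · exact (Finset.range (t i)).finite_toSet
  · rw [defIdx, Set.ncard_coe_finset, Finset.card_range]

/-- the system -/
noncomputable def sysNu (ℓ k : ℕ) (w0 : Pt lam) : (ℕ → Set ℕ) → Pt lam :=
  fun η => extPt lam A k (nodeW t lam A hinf ℓ w0 η (k - ℓ))

lemma sysNu_val (ℓ k : ℕ) (hℓk : ℓ < k) (w0 : Pt lam) (η : ℕ → Set ℕ) :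
    ∀ j < k, sysNu t lam A hinf ℓ k w0 η j = nodeW t lam A hinf ℓ w0 η (k - ℓ) j := by
  intro j hj
  exact extPt_agree lam A k _ j hj

lemma isJ4System_of_not_badR (ℓ k : ℕ) (w0 : Pt lam) (hℓk : ℓ < k)
    (hnb : ¬ ∃ o, BadR t lam A o ℓ w0) :
    IsJ4System t lam A ℓ k (Ech t lam A hinf ℓ w0) (sysNu t lam A hinf ℓ k w0) := by
  have hlk : ℓ + (k - ℓ) = k := by omega
  refine ⟨?_, ?_, ?_, ?_⟩
  -- (a)
  · intro η hη
    have hnb2 : ¬ ∃ o, BadR t lam A o (ℓ + (k - ℓ)) (nodeW t lam A hinf ℓ w0 η (k - ℓ)) :=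
      nodeW_NB t lam A hinf ℓ w0 η (k - ℓ) hnb (fun i h1 h2 => hη i h1 (by omega))
    rw [hlk] at hnb2
    exact extPt_mem lam (extA_of_not_badR t lam hnb2)
  -- (b)
  · intro η₁ η₂ hη₁ hη₂ m hℓm hmk hagree j hj
    rw [sysNu_val t lam A hinf ℓ k hℓk w0 η₁ j (by omega),
        sysNu_val t lam A hinf ℓ k hℓk w0 η₂ j (by omega)]
    by_cases hjl : j < ℓ
    · rw [nodeW_low t lam A hinf ℓ w0 η₁ (k-ℓ) j (Or.inl hjl),
          nodeW_low t lam A hinf ℓ w0 η₂ (k-ℓ) j (Or.inl hjl)]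
    · push_neg at hjl
      have h9 : j < ℓ + (k - ℓ) := by omega
      rw [nodeW_val t lam A hinf ℓ w0 η₁ (k-ℓ) j hjl h9,
          nodeW_val t lam A hinf ℓ w0 η₂ (k-ℓ) j hjl h9]
      have hnn : nodeW t lam A hinf ℓ w0 η₁ (j - ℓ) = nodeW t lam A hinf ℓ w0 η₂ (j - ℓ) :=
        nodeW_congr t lam A hinf ℓ w0 η₁ η₂ (j - ℓ) (fun i h1 h2 => hagree i h1 (by omega))
      rw [hnn, hagree j hjl hj]
  -- (c1)
  · intro η₀ hη₀ _
    ext u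
    simp only [Set.mem_setOf_eq]
    have hval : ∀ η : ℕ → Set ℕ, sysNu t lam A hinf ℓ k w0 η ℓ =
        (EchEnum t lam A hinf ℓ w0) '' η ℓ := by
      intro η
      have h9 : ℓ < ℓ + (k - ℓ) := by omega
      rw [sysNu_val t lam A hinf ℓ k hℓk w0 η ℓ hℓk,
          nodeW_val t lam A hinf ℓ w0 η (k-ℓ) ℓ le_rfl h9, Nat.sub_self]
      rfl
    constructor
    · rintro ⟨huB, huf, hun⟩
      set f := EchEnum t lam A hinf ℓ w0 with hf
      have hur : u ⊆ Set.range f := by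
        rw [hf, EchEnum_range]; exact huB
      refine ⟨Function.update (defIdx t) ℓ (f ⁻¹' u), ?_, ?_⟩
      · intro i h1 h2
        by_cases hi : i = ℓ
        · rw [hi, Function.update_self]
          constructor
          · exact huf.preimage (EchEnum_inj t lam A hinf ℓ w0).injOn
          · have himg : f '' (f ⁻¹' u) = u := Set.image_preimage_eq_of_subset hur
            have := Set.ncard_image_of_injective (f ⁻¹' u) (EchEnum_inj t lam A hinf ℓ w0)
            rw [himg] at this
            rw [this] at hun
            exact hun
        · rw [Function.update_of_ne hi]
          exact defIdx_spec t i
      · rw [hval, Function.update_self]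
        exact (Set.image_preimage_eq_of_subset hur).symm
    · rintro ⟨η, hη, rfl⟩
      rw [hval]
      have hmem := hη ℓ le_rfl hℓk
      refine ⟨?_, hmem.1.image _, ?_⟩
      · rw [← EchEnum_range t lam A hinf ℓ w0]
        exact Set.image_subset_range _ _
      · rw [Set.ncard_image_of_injective _ (EchEnum_inj t lam A hinf ℓ w0)]
        exact hmem.2
  -- (c2)
  · intro η₀ hη₀ m hℓm hmk
    set wm := nodeW t lam A hinf ℓ w0 η₀ (m - ℓ) with hwm
    refine ⟨Ech t lam A hinf m wm, Ech_countable t lam A hinf m wm,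
      Ech_infinite t lam A hinf m wm, ?_⟩
    ext u
    simp only [Set.mem_setOf_eq]
    have hval : ∀ η : ℕ → Set ℕ, (∀ i, ℓ ≤ i → i < m → η i = η₀ i) →
        sysNu t lam A hinf ℓ k w0 η m = (EchEnum t lam A hinf m wm) '' η m := by
      intro η hagree
      have h9 : m < ℓ + (k - ℓ) := by omega
      rw [sysNu_val t lam A hinf ℓ k hℓk w0 η m hmk,
          nodeW_val t lam A hinf ℓ w0 η (k-ℓ) m hℓm h9]
      have hnn : nodeW t lam A hinf ℓ w0 η (m - ℓ) = wm := by
        rw [hwm]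
        exact nodeW_congr t lam A hinf ℓ w0 η η₀ (m - ℓ) (fun i h1 h2 => hagree i h1 (by omega))
      rw [hnn]
    constructor
    · rintro ⟨huB, huf, hun⟩
      set f := EchEnum t lam A hinf m wm with hf
      have hur : u ⊆ Set.range f := by
        rw [hf, EchEnum_range]; exact huB
      refine ⟨Function.update η₀ m (f ⁻¹' u), ?_, ?_, ?_⟩
      · intro i h1 h2
        by_cases hi : i = m
        · rw [hi, Function.update_self]
          constructor
          · exact huf.preimage (EchEnum_inj t lam A hinf m wm).injOn
          · have himg : f '' (f ⁻¹' u) = u := Set.image_preimage_eq_of_subset hur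
            have := Set.ncard_image_of_injective (f ⁻¹' u) (EchEnum_inj t lam A hinf m wm)
            rw [himg] at this
            rw [this] at hun
            exact hun
        · rw [Function.update_of_ne hi]
          exact hη₀ i h1 h2
      · intro i h1 h2
        rw [Function.update_of_ne (by omega)]
      · rw [hval _ (fun i h1 h2 => Function.update_of_ne (Nat.ne_of_lt h2) (f ⁻¹' u) η₀),
          Function.update_self]
        exact (Set.image_preimage_eq_of_subset hur).symm
    · rintro ⟨η, hη, hagree, rfl⟩
      rw [hval η hagree]
      have hmem := hη m hℓm hmk
      refine ⟨?_, hmem.1.image _, ?_⟩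
      · rw [← EchEnum_range t lam A hinf m wm]
        exact Set.image_subset_range _ _
      · rw [Set.ncard_image_of_injective _ (EchEnum_inj t lam A hinf m wm)]
        exact hmem.2

lemma badR_all {A : Set (Pt lam)} (hinf : ∀ m : ℕ, Infinite (lam m).ord.ToType)
    (hA : InJ4 t lam A) : ∀ (m : ℕ) (w : Pt lam), ∃ o, BadR t lam A o m w := by
  by_contra h
  push_neg at h
  obtain ⟨m, w, hnb1⟩ := h
  have hnb : ¬ ∃ o, BadR t lam A o m w := by
    rintro ⟨o, ho⟩; exact hnb1 o ho
  obtain ⟨L, hL⟩ := hA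
  set ℓ := max m L with hldef
  have hmℓ : m ≤ ℓ := le_max_left m L
  set w' := nodeW t lam A hinf m w (defIdx t) (ℓ - m) with hw'
  have hnb' : ¬ ∃ o, BadR t lam A o ℓ w' := by
    have := nodeW_NB t lam A hinf m w (defIdx t) (ℓ - m) hnb
      (fun i _ _ => defIdx_spec t i)
    rwa [show m + (ℓ - m) = ℓ by omega] at this
  obtain ⟨k, hk, hnosys⟩ := hL ℓ (le_max_right m L) (Ech t lam A hinf ℓ w')
    (Ech_countable t lam A hinf ℓ w') (Ech_infinite t lam A hinf ℓ w')
  exact hnosys ⟨sysNu t lam A hinf ℓ k w',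
    isJ4System_of_not_badR t lam A hinf ℓ k w' hk hnb'⟩

end Systems



section Final

variable (t : ℕ → ℕ) (lam : ℕ → Cardinal.{u})

/-- the least bad rank -/
noncomputable def rk (A : Set (Pt lam)) (m : ℕ) (w : Pt lam) : Ordinal :=
  sInf {o | BadR t lam A o m w}

lemma rk_badR {A : Set (Pt lam)} {m : ℕ} {w : Pt lam} (h : ∃ o, BadR t lam A o m w) :
    BadR t lam A (rk t lam A m w) m w := csInf_mem h

lemma rk_dec {A : Set (Pt lam)} {m : ℕ} {w : Pt lam} {o : Ordinal}
    (hb : BadR t lam A o m w) (hext : ExtA lam A m w) :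
    ∀ E : Set (lam m).ord.ToType, E.Countable → E.Infinite →
      ∃ u, u ⊆ E ∧ u.Finite ∧ u.ncard = t m ∧
        rk t lam A (m+1) (Function.update w m u) < o := by
  intro E hc hi
  rcases (badR_iff t lam A o m w).1 hb with h1 | h1
  · exact absurd hext h1
  · obtain ⟨u, h2, h3, h4, o', ho', hB⟩ := h1 E hc hi
    exact ⟨u, h2, h3, h4, lt_of_le_of_lt (csInf_le' hB) ho'⟩

end Final

end J4P


/-- If `λ_ℓ > beth_{t_ℓ - 1}(θ)` for every `ℓ` (`1 < t_ℓ < ω`, `θ` infinite), then the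
ideal `J⁴_{t̄,λ̄,θ}` is proper: `∏_{ℓ<ω}[λ_ℓ]^{t_ℓ}` is not the union of at most `θ`
many members of `J⁴_{t̄,λ̄}`. -/
theorem J4_ideal_proper (θ : Cardinal) (hθ : Cardinal.aleph0 ≤ θ)
    (t : ℕ → ℕ) (ht : ∀ ℓ, 1 < t ℓ)
    (lam : ℕ → Cardinal) (hlam : ∀ ℓ, bethRel θ (t ℓ - 1) < lam ℓ) :
    ¬ ∃ S : Set (Set (∀ ℓ, Set (lam ℓ).ord.ToType)),
      Cardinal.mk S ≤ θ ∧ (∀ A ∈ S, InJ4 t lam A) ∧ FullProd t lam ⊆ ⋃₀ S := by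
  rintro ⟨S, hS, hIn, hcover⟩
  classical
  have hlamX : ∀ m : ℕ, Cardinal.mk ((lam m).ord.ToType) = lam m := fun m => by
    rw [Cardinal.mk_toType, Cardinal.card_ord]
  have hbig : ∀ m : ℕ, bethRel θ (t m - 1) < Cardinal.mk ((lam m).ord.ToType) := fun m => by
    rw [hlamX]; exact hlam m
  have hinf : ∀ m : ℕ, Infinite (lam m).ord.ToType := by
    intro m
    rw [Cardinal.infinite_iff, hlamX]
    calc Cardinal.aleph0 ≤ θ := hθ
      _ ≤ bethRel θ (t m - 1) := J4P.le_bethRel θ hθ _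
      _ ≤ lam m := (hlam m).le
  have hq0 : ∀ m : ℕ, ∃ u : Set (lam m).ord.ToType, u.Finite ∧ u.ncard = t m := by
    intro m
    haveI := hinf m
    obtain ⟨u, _, h2, h3⟩ := Set.Infinite.exists_subset_ncard_eq
      (Set.infinite_univ (α := (lam m).ord.ToType)) (t m)
    exact ⟨u, h2, h3⟩
  obtain ⟨A₀, hA₀⟩ : ∃ A, A ∈ S := by
    choose q0 hq0f hq0n using hq0
    obtain ⟨A, hA, _⟩ := hcover (show q0 ∈ FullProd t lam from fun m => ⟨hq0f m, hq0n m⟩)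
    exact ⟨A, hA⟩
  haveI : Nonempty ↥S := ⟨⟨A₀, hA₀⟩⟩
  have hball : ∀ A ∈ S, ∀ (m : ℕ) (w : J4P.Pt lam), ∃ o, J4P.BadR t lam A o m w :=
    fun A hA => J4P.badR_all t lam hinf (hIn A hA)
  -- the simultaneous rank-decrease step, via Erdős–Rado
  have hstep : ∀ (m : ℕ) (w : J4P.Pt lam), ∃ u : Set (lam m).ord.ToType,
      u.Finite ∧ u.ncard = t m ∧ ∀ A, A ∈ S → J4P.ExtA lam A m w →
        J4P.rk t lam A (m+1) (Function.update w m u) < J4P.rk t lam A m w := by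
    intro m w
    by_contra hno
    push_neg at hno
    have hcol : ∀ u : Set (lam m).ord.ToType, ∃ A : ↥S,
        (u.Finite → u.ncard = t m → (J4P.ExtA lam A.1 m w ∧
          ¬ J4P.rk t lam A.1 (m+1) (Function.update w m u) < J4P.rk t lam A.1 m w)) := by
      intro u
      by_cases hu : u.Finite ∧ u.ncard = t m
      · obtain ⟨A, hA, hA2, hA3⟩ := hno u hu.1 hu.2
        exact ⟨⟨A, hA⟩, fun _ _ => ⟨hA2, not_lt.2 hA3⟩⟩
      · exact ⟨⟨A₀, hA₀⟩, fun h1 h2 => absurd ⟨h1, h2⟩ hu⟩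
    choose col hcolspec using hcol
    have h1tm : 1 ≤ t m := le_of_lt (ht m)
    obtain ⟨W, hWc, hWi, γ, hγ⟩ := J4P.erdosRado θ hθ (t m - 1) ((lam m).ord.ToType)
      inferInstance inferInstance ↥S hS (hbig m) col
    obtain ⟨u₀, hu₀W, hu₀f, hu₀n⟩ := hWi.exists_subset_ncard_eq (t m)
    have hcol0 := hγ u₀ hu₀W hu₀f (by omega)
    have hγprop := hcolspec u₀
    rw [hcol0] at hγprop
    obtain ⟨hγext, -⟩ := hγprop hu₀f hu₀n
    obtain ⟨u, huW, huf, hun, hdec⟩ := J4P.rk_dec t lam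
      (J4P.rk_badR t lam (hball γ.1 γ.2 m w)) hγext W hWc hWi
    have hcolu := hγ u huW huf (by omega)
    have hprop := hcolspec u
    rw [hcolu] at hprop
    exact (hprop huf hun).2 hdec
  choose ustep hufin huncard hudec using hstep
  -- the diagonal sequence
  let w0 : J4P.Pt lam := fun _ => ∅
  let wseq : ℕ → J4P.Pt lam :=
    fun m => Nat.rec w0 (fun m wm => Function.update wm m (ustep m wm)) m
  have hwsucc : ∀ m, wseq (m+1) = Function.update (wseq m) m (ustep m (wseq m)) :=
    fun m => rfl
  let q : J4P.Pt lam := fun i => ustep i (wseq i)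
  have hqw : ∀ m j, j < m → wseq m j = q j := by
    intro m
    induction m with
    | zero => intro j hj; omega
    | succ m ih =>
      intro j hj
      rw [hwsucc]
      by_cases hjm : j = m
      · subst hjm; rw [Function.update_self]
      · rw [Function.update_of_ne hjm]
        exact ih j (by omega)
  have hqFull : q ∈ FullProd t lam := fun m => ⟨hufin m (wseq m), huncard m (wseq m)⟩
  obtain ⟨Astar, hAstarS, hqAstar⟩ := hcover hqFull
  have hext : ∀ m, J4P.ExtA lam Astar m (wseq m) :=
    fun m => ⟨q, hqAstar, fun j hj => (hqw m j hj).symm⟩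
  have hdec : ∀ m, J4P.rk t lam Astar (m+1) (wseq (m+1)) < J4P.rk t lam Astar m (wseq m) := by
    intro m
    rw [hwsucc]
    exact hudec m (wseq m) Astar hAstarS (hext m)
  obtain ⟨x, ⟨n, rfl⟩, hxmin⟩ := Ordinal.lt_wf.has_min
    (Set.range (fun m => J4P.rk t lam Astar m (wseq m))) ⟨_, ⟨0, rfl⟩⟩
  exact hxmin _ ⟨n+1, rfl⟩ (hdec n)
end

section
/- There is no universal member in the class of countable reduced torsion-free abelian groups: for every countable reduced torsion-free abelian group G there exists a countable reduced torsion-free abelian group H that admits no injective group homomorphism into G. -/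
section basic
variable {G : Type*} [AddCommGroup G]

lemma tf_cancel_s16 (htf : IsTorsionFreeAb G) {m : ℤ} (hm : m ≠ 0) {x y : G}
    (h : m • x = m • y) : x = y := by
  have : m • (x - y) = 0 := by rw [smul_sub, h, sub_self]
  rcases htf m (x - y) this with h' | h'
  · exact absurd h' hm
  · exact sub_eq_zero.mp h'

/-- Bezout extraction: coprime r q, r•u = q•g implies u divisible by q. -/
lemma coprime_extract {r q : ℤ} (h : IsCoprime r q) {u g : G}
    (he : r • u = q • g) : ∃ z : G, q • z = u := by
  obtain ⟨α, β, hab⟩ := h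
  refine ⟨α • g + β • u, ?_⟩
  have h1 : (α * r + β * q) • u = u := by rw [hab, one_smul]
  calc q • (α • g + β • u) = α • (q • g) + (β * q) • u := by
        rw [smul_add, smul_comm q α, mul_smul, smul_comm β q]
  _ = α • (r • u) + (β * q) • u := by rw [he]
  _ = u := by rw [smul_smul, ← add_smul, hab, one_smul]

/-- Division by any positive integer, staying among fully divisible elements. -/
lemma divisible_all (htf : IsTorsionFreeAb G) :
    ∀ m : ℕ, 0 < m → ∀ u : G,
      (∀ p : ℕ, p.Prime → ∀ c : ℕ, ∃ g : G, ((p : ℤ) ^ c) • g = u) →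
      ∃ g : G, (m : ℤ) • g = u ∧
        (∀ p : ℕ, p.Prime → ∀ c : ℕ, ∃ g' : G, ((p : ℤ) ^ c) • g' = g) := by
  intro m
  induction m using Nat.strong_induction_on with
  | _ m ih =>
    intro hm u h
    rcases eq_or_lt_of_le (show 1 ≤ m from hm) with h1 | h2
    · exact ⟨u, by rw [← h1]; simp, h⟩
    · have hm2 : 2 ≤ m := h2
      set p := m.minFac with hp
      have hpp : p.Prime := Nat.minFac_prime (by omega)
      obtain ⟨m', hm'⟩ := Nat.minFac_dvd m
      have hm'pos : 0 < m' := by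
        rcases Nat.eq_zero_or_pos m' with h0 | h0
        · subst h0; omega
        · exact h0
      have hm'lt : m' < m := by
        have : 1 < p := hpp.one_lt
        calc m' < p * m' := by nlinarith
        _ = m := hm'.symm
      obtain ⟨y, hy⟩ := h p hpp 1
      rw [pow_one] at hy
      have hpne : (p : ℤ) ≠ 0 := Int.natCast_ne_zero.mpr hpp.ne_zero
      have hyD : ∀ q : ℕ, q.Prime → ∀ c : ℕ, ∃ g' : G, ((q : ℤ) ^ c) • g' = y := by
        intro q hq c
        by_cases hqp : q = p
        · subst hqp
          obtain ⟨w, hw⟩ := h p hpp (c + 1)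
          refine ⟨w, tf_cancel_s16 htf hpne ?_⟩
          rw [← mul_smul, ← pow_succ', hw, hy]
        · obtain ⟨w, hw⟩ := h q hq c
          have hcop : IsCoprime ((p:ℤ)) ((q:ℤ)^c) := by
            apply IsCoprime.pow_right
            rw [Int.isCoprime_iff_gcd_eq_one]
            have := (Nat.coprime_primes hpp hq).mpr (fun hh => hqp hh.symm)
            simpa [Int.gcd] using this
          exact coprime_extract hcop (hy.trans hw.symm)
      obtain ⟨g, hg, hgD⟩ := ih m' hm'lt hm'pos y hyD
      refine ⟨g, ?_, hgD⟩
      rw [hm']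
      push_cast
      rw [mul_smul, hg, hy]

/-- From a nonzero element divisible by every positive integer, build an embedding of ℚ. -/
lemma embed_rat (htf : IsTorsionFreeAb G) {u : G} (hu : u ≠ 0)
    (hdiv : ∀ m : ℕ, 0 < m → ∃ g : G, (m : ℤ) • g = u) :
    ∃ f : ℚ →+ G, Function.Injective f := by
  have key : ∀ q : ℚ, ∃ x : G, ((q.den : ℤ)) • x = q.num • u := by
    intro q
    obtain ⟨g, hg⟩ := hdiv q.den q.den_pos
    exact ⟨q.num • g, by rw [smul_comm, hg]⟩
  choose F hF using key
  have hdenz : ∀ q : ℚ, ((q.den : ℤ)) ≠ 0 := fun q => by exact_mod_cast q.den_nz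
  have helper : ∀ (c : ℤ) (q : ℚ), ((q.den : ℤ) * c) • F q = (q.num * c) • u := by
    intro c q
    rw [mul_comm, mul_smul, hF, smul_smul, mul_comm]
  have char : ∀ (q : ℚ) (a b : ℤ) (x : G), b ≠ 0 → ((a : ℚ) / b = q) →
      b • x = a • u → x = F q := by
    intro q a b x hb hab hx
    have hbq : (b : ℚ) ≠ 0 := Int.cast_ne_zero.mpr hb
    have h1 : a * (q.den : ℤ) = q.num * b := by
      have h2 : (a : ℚ) * (q.den : ℚ) = (q.num : ℚ) * b := by
        rw [← q.num_div_den] at hab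
        rw [div_eq_div_iff hbq (by exact_mod_cast q.den_nz)] at hab
        exact_mod_cast hab
      exact_mod_cast h2
    apply tf_cancel_s16 htf hb
    apply tf_cancel_s16 htf (hdenz q)
    rw [hx, smul_smul, smul_comm (q.den:ℤ) b, hF, smul_smul]
    rw [show (q.den:ℤ) * a = b * q.num by linarith]
  have hadd : ∀ q r : ℚ, F (q + r) = F q + F r := by
    intro q r
    symm
    apply char (q + r) (q.num * r.den + r.num * q.den) (q.den * r.den)
      (F q + F r) (by positivity)
    · rw [div_eq_iff (by push_cast; positivity)]
      push_cast
      linear_combination (-(r.den : ℚ)) * Rat.mul_den_eq_num q + (-(q.den : ℚ)) * Rat.mul_den_eq_num r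
    · rw [smul_add]
      have e1 : ((q.den:ℤ)*(r.den:ℤ)) • F q = ((q.num*r.den)) • u := helper _ q
      have e2 : ((q.den:ℤ)*(r.den:ℤ)) • F r = ((r.num*q.den)) • u := by
        rw [mul_comm]; exact helper _ r
      push_cast at e1 e2 ⊢
      rw [e1, e2, ← add_smul]
  refine ⟨AddMonoidHom.mk' F hadd, ?_⟩
  rw [injective_iff_map_eq_zero]
  intro q hq
  simp only [AddMonoidHom.mk'_apply] at hq
  have := hF q
  rw [hq, smul_zero] at this
  have hnum : q.num = 0 := by
    rcases htf q.num u this.symm with h | h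
    · exact h
    · exact absurd h hu
  exact Rat.num_eq_zero.mp hnum

/-- An embedding of ℚ yields a nonzero element divisible by every positive integer. -/
lemma div_of_embed {f : ℚ →+ G} (hf : Function.Injective f) :
    f 1 ≠ 0 ∧ ∀ m : ℕ, 0 < m → ∃ g : G, (m : ℤ) • g = f 1 := by
  constructor
  · intro h
    have := hf (a₁ := 1) (a₂ := 0) (by simpa using h)
    norm_num at this
  · intro m hm
    refine ⟨f (1 / m), ?_⟩
    rw [← map_zsmul]
    congr 1
    have : (m : ℚ) ≠ 0 := by positivity
    push_cast
    field_simp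
    simp [nsmul_eq_mul, zsmul_eq_mul, this]
lemma exists_prime_bound (htf : IsTorsionFreeAb G) (hred : IsReducedAb G)
    {u : G} (hu : u ≠ 0) :
    ∃ p : ℕ, p.Prime ∧ ∃ c : ℕ, ¬ ∃ g : G, ((p:ℤ)^c) • g = u := by
  by_contra h
  push_neg at h
  apply hred
  apply embed_rat htf hu
  intro m hm
  obtain ⟨g, hg, -⟩ := divisible_all htf m hm u (fun p hp c => h p hp c)
  exact ⟨g, hg⟩

end basic

section seq
open Finset Nat

def Z01 (ε : ℕ → ℤ) : Prop := ∀ j, ε j = 0 ∨ ε j = 1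

def sfun (ε : ℕ → ℤ) (n : ℕ) : ℤ := ∑ j ∈ Finset.range n, ε j * (j ! : ℤ)

lemma sfun_coh (ε : ℕ → ℤ) {n m : ℕ} (h : n ≤ m) :
    ((n ! : ℤ)) ∣ sfun ε m - sfun ε n := by
  rw [sfun, sfun, ← Finset.sum_Ico_eq_sub _ h]
  apply Finset.dvd_sum
  intro j hj
  rw [Finset.mem_Ico] at hj
  exact Dvd.dvd.mul_left (by exact_mod_cast Nat.factorial_dvd_factorial hj.1) _

lemma sfun_agree {ε ε' : ℕ → ℤ} {n : ℕ} (h : ∀ j < n, ε j = ε' j) {k : ℕ} (hk : k ≤ n) :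
    sfun ε k = sfun ε' k := by
  apply Finset.sum_congr rfl
  intro j hj
  rw [Finset.mem_range] at hj
  rw [h j (lt_of_lt_of_le hj hk)]

lemma fact_div_succ {n j : ℕ} (h : n + 1 ≤ j) : (n + 1) ∣ j ! / n ! := by
  refine ⟨j ! / (n+1)!, ?_⟩
  have h1 : n ! ∣ j ! := Nat.factorial_dvd_factorial (by omega)
  have h2 : (n+1)! ∣ j ! := Nat.factorial_dvd_factorial h
  have hn : 0 < n ! := Nat.factorial_pos n
  apply Nat.eq_of_mul_eq_mul_right hn
  rw [Nat.div_mul_cancel h1]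
  rw [mul_assoc, mul_comm (j ! / (n+1)!), ← mul_assoc, ← Nat.factorial_succ]
  rw [mul_comm (n+1)!, Nat.div_mul_cancel h2]

lemma sfun_diff {ε ε' : ℕ → ℤ} (hε : Z01 ε) (hε' : Z01 ε') {n : ℕ}
    (hag : ∀ j < n, ε j = ε' j) (hne : ε n ≠ ε' n) {m : ℕ} (hm : n + 1 ≤ m) :
    ∃ t : ℤ, sfun ε m - sfun ε' m = (n ! : ℤ) * t ∧
      ((n + 1 : ℕ) : ℤ) ∣ t - (ε n - ε' n) ∧ (ε n - ε' n = 1 ∨ ε n - ε' n = -1) := by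
  have hδ : ε n - ε' n = 1 ∨ ε n - ε' n = -1 := by
    rcases hε n with h1 | h1 <;> rcases hε' n with h2 | h2 <;> omega
  refine ⟨(ε n - ε' n) + ∑ j ∈ Finset.Ico (n+1) m, (ε j - ε' j) * ((j ! / n ! : ℕ) : ℤ),
    ?_, ?_, hδ⟩
  · have e0 : sfun ε m - sfun ε' m = ∑ j ∈ Finset.range m, (ε j - ε' j) * (j ! : ℤ) := by
      rw [sfun, sfun, ← Finset.sum_sub_distrib]
      congr 1; ext j; ring
    rw [e0]
    rw [Finset.range_eq_Ico, ← Finset.sum_Ico_consecutive _ (Nat.zero_le n) (by omega : n ≤ m)]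
    have e1 : ∑ j ∈ Finset.Ico 0 n, (ε j - ε' j) * (j ! : ℤ) = 0 := by
      apply Finset.sum_eq_zero
      intro j hj
      rw [Finset.mem_Ico] at hj
      rw [hag j hj.2]; ring
    rw [e1, zero_add]
    rw [← Finset.sum_Ico_consecutive _ (by omega : n ≤ n + 1) hm]
    rw [Finset.sum_Ico_eq_sum_range]
    simp only [Nat.add_sub_cancel_left]
    rw [Finset.sum_range_one]
    rw [mul_add]
    congr 1
    · ring
    · rw [Finset.mul_sum]
      apply Finset.sum_congr rfl
      intro j hj
      rw [Finset.mem_Ico] at hj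
      have hd : n ! ∣ j ! := Nat.factorial_dvd_factorial (by omega)
      rw [← mul_assoc, mul_comm ((n !: ℤ)), mul_assoc]
      congr 1
      rw [← Nat.cast_mul, Nat.mul_div_cancel' hd]
  · rw [add_sub_cancel_left]
    apply Finset.dvd_sum
    intro j hj
    rw [Finset.mem_Ico] at hj
    exact Dvd.dvd.mul_left (by exact_mod_cast fact_div_succ hj.1) _

end seq

section kill
open Nat
variable {G : Type*} [AddCommGroup G]

/-- Realization of the sequence by a pair (u,v) in G. -/
def Bad1 (ε : ℕ → ℤ) (u v : G) : Prop :=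
  ∀ m : ℕ, ∃ w : G, ((m ! : ℕ) : ℤ) • w = sfun ε m • u + v

def Bad2 (ε : ℕ → ℤ) (n₀ : ℕ) (a d : ℤ) : Prop :=
  ∀ m : ℕ, 0 < m → ∀ K : ℕ, ∃ k : ℕ, K ≤ k ∧ n₀ ≤ k ∧
    ((m : ℤ) * (n₀ ! : ℤ)) ∣ (a * (n₀ ! : ℤ) - d * (sfun ε k - sfun ε n₀))

lemma kill1 (htf : IsTorsionFreeAb G) {u v : G} {p c : ℕ} (hp : p.Prime)
    (hu : ¬ ∃ g : G, ((p:ℤ)^c) • g = u) {n : ℕ} (hn : 1 ≤ n) (hpn : p ∣ n + 1)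
    {ε ε' : ℕ → ℤ} (hε : Z01 ε) (hε' : Z01 ε') (hag : ∀ j < n, ε j = ε' j)
    (hne : ε n ≠ ε' n) : ¬ (Bad1 ε u v ∧ Bad1 ε' u v) := by
  rintro ⟨B, B'⟩
  set m := n ! * p ^ (c + n + 1) with hm
  have hmpos : 0 < m := Nat.mul_pos (Nat.factorial_pos n) (Nat.pow_pos hp.pos)
  have hmn : n + 1 ≤ m := by
    have h1 : n + 1 < 2 ^ (n + 1) := Nat.lt_two_pow_self
    have h2 : 2 ^ (n + 1) ≤ p ^ (c + n + 1) :=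
      Nat.pow_le_pow_left hp.two_le (n+1) |>.trans (Nat.pow_le_pow_right hp.pos (by omega))
    have h3 : p ^ (c + n + 1) ≤ m := Nat.le_mul_of_pos_left _ (Nat.factorial_pos n)
    omega
  obtain ⟨w, hw⟩ := B m
  obtain ⟨w', hw'⟩ := B' m
  obtain ⟨t, ht, htd, hδ⟩ := sfun_diff hε hε' hag hne hmn
  have hsub : ((m ! : ℕ) : ℤ) • (w - w') = ((n ! : ℤ) * t) • u := by
    rw [smul_sub, hw, hw', ← ht]
    push_cast
    rw [sub_smul]
    abel
  obtain ⟨R, hR⟩ : m ∣ m ! := Nat.dvd_factorial hmpos le_rfl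
  have hfacteq : ((m ! : ℕ) : ℤ) = (n ! : ℤ) * ((p:ℤ)^(c+n+1) * (R : ℤ)) := by
    rw [hR, hm]; push_cast; ring
  have hcancel : ((p:ℤ)^(c+n+1) * (R : ℤ)) • (w - w') = t • u := by
    apply tf_cancel_s16 htf (show ((n ! : ℕ) : ℤ) ≠ 0 by exact_mod_cast (Nat.factorial_pos n).ne')
    rw [smul_smul, ← hfacteq, hsub, smul_smul]
  have hpt : ¬ ((p : ℤ) ∣ t) := by
    intro hdvd
    have h1 : (p : ℤ) ∣ ((n + 1 : ℕ) : ℤ) := by exact_mod_cast hpn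
    have h2 : (p : ℤ) ∣ (ε n - ε' n) := by
      have := _root_.dvd_sub hdvd (h1.trans htd)
      simpa using this
    have h3 : (p : ℤ) ∣ 1 := by
      rcases hδ with h | h <;> rw [h] at h2
      · exact h2
      · exact (dvd_neg.mp h2)
    have h4 := Int.le_of_dvd one_pos h3
    have h5 := hp.two_le
    have : (2 : ℤ) ≤ (p : ℤ) := by exact_mod_cast h5
    omega
  have hcop : IsCoprime t ((p:ℤ)^(c+n+1)) := by
    apply IsCoprime.pow_right
    exact ((Int.prime_iff_natAbs_prime.mpr (by simpa using hp)).coprime_iff_not_dvd.mpr hpt).symm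
  have : t • u = ((p:ℤ)^(c+n+1)) • ((R:ℤ) • (w - w')) := by
    rw [← hcancel, smul_smul]
  obtain ⟨z, hz⟩ := coprime_extract hcop this
  apply hu
  refine ⟨((p:ℤ)^(n+1)) • z, ?_⟩
  rw [smul_smul, ← pow_add]
  rw [show c + (n + 1) = c + n + 1 by ring] at *
  exact hz

lemma kill2 {n₀ : ℕ} {a d : ℤ} (hd : d ≠ 0) {n : ℕ} (hn1 : 1 ≤ n) (hn0 : n₀ ≤ n)
    (hnd : d.natAbs ≤ n) {ε ε' : ℕ → ℤ} (hε : Z01 ε) (hε' : Z01 ε')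
    (hag : ∀ j < n, ε j = ε' j) (hne : ε n ≠ ε' n) :
    ¬ (Bad2 ε n₀ a d ∧ Bad2 ε' n₀ a d) := by
  rintro ⟨B, B'⟩
  obtain ⟨k, hk1, hk2, hk3⟩ := B ((n+2)!) (Nat.factorial_pos _) (n+2)
  obtain ⟨k', hk1', hk2', hk3'⟩ := B' ((n+2)!) (Nat.factorial_pos _) (n+2)
  have hs0 : sfun ε n₀ = sfun ε' n₀ := sfun_agree hag hn0
  have hdd : (((n+2)! : ℕ) : ℤ) ∣ d * (sfun ε k - sfun ε' k') := by
    have h1 := dvd_sub hk3' hk3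
    rw [hs0] at h1
    have h2 : (a * (n₀ ! : ℤ) - d * (sfun ε' k' - sfun ε' n₀)) -
        (a * (n₀ ! : ℤ) - d * (sfun ε k - sfun ε' n₀)) = d * (sfun ε k - sfun ε' k') := by ring
    rw [h2] at h1
    exact (Dvd.intro (n₀ ! : ℤ) rfl).trans h1
  have hc1 : (((n+2)! : ℕ) : ℤ) ∣ sfun ε k - sfun ε (n+2) := sfun_coh ε (by omega)
  have hc2 : (((n+2)! : ℕ) : ℤ) ∣ sfun ε' k' - sfun ε' (n+2) := sfun_coh ε' (by omega)
  have hdd2 : (((n+2)! : ℕ) : ℤ) ∣ d * (sfun ε (n+2) - sfun ε' (n+2)) := by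
    have := dvd_sub hdd (dvd_sub (hc1.mul_left d) (hc2.mul_left d))
    have he : d * (sfun ε k - sfun ε' k') -
        (d * (sfun ε k - sfun ε (n+2)) - d * (sfun ε' k' - sfun ε' (n+2))) =
        d * (sfun ε (n+2) - sfun ε' (n+2)) := by ring
    rwa [he] at this
  -- explicit computation of the difference at n+2
  have hdiff : sfun ε (n+2) - sfun ε' (n+2) =
      (n ! : ℤ) * ((ε n - ε' n) + (ε (n+1) - ε' (n+1)) * (n+1)) := by
    have e1 : sfun ε (n+2) = sfun ε n + ε n * (n ! : ℤ) + ε (n+1) * ((n+1)! : ℤ) := by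
      rw [sfun, sfun, Finset.sum_range_succ, Finset.sum_range_succ]
    have e2 : sfun ε' (n+2) = sfun ε' n + ε' n * (n ! : ℤ) + ε' (n+1) * ((n+1)! : ℤ) := by
      rw [sfun, sfun, Finset.sum_range_succ, Finset.sum_range_succ]
    have e3 : sfun ε n = sfun ε' n := sfun_agree hag le_rfl
    rw [e1, e2, e3, Nat.factorial_succ]
    push_cast
    ring
  set T : ℤ := (ε n - ε' n) + (ε (n+1) - ε' (n+1)) * (n+1) with hT
  have hfact : (((n+2)! : ℕ) : ℤ) = (n ! : ℤ) * ((n+1) * (n+2)) := by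
    rw [Nat.factorial_succ, Nat.factorial_succ]
    push_cast
    ring
  have hdvdT : ((n+1 : ℤ) * (n+2)) ∣ d * T := by
    have h1 : (n ! : ℤ) * ((n+1) * (n+2)) ∣ (n ! : ℤ) * (d * T) := by
      rw [← hfact]
      have : d * (sfun ε (n+2) - sfun ε' (n+2)) = (n ! : ℤ) * (d * T) := by
        rw [hdiff]; ring
      rwa [this] at hdd2
    exact (mul_dvd_mul_iff_left (show (n ! : ℤ) ≠ 0 by
      exact_mod_cast (Nat.factorial_pos n).ne')).mp h1
  have hδ0 : ε n - ε' n = 1 ∨ ε n - ε' n = -1 := by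
    rcases hε n with h1 | h1 <;> rcases hε' n with h2 | h2 <;> omega
  have hδ1 : ε (n+1) - ε' (n+1) = 0 ∨ ε (n+1) - ε' (n+1) = 1 ∨ ε (n+1) - ε' (n+1) = -1 := by
    rcases hε (n+1) with h1 | h1 <;> rcases hε' (n+1) with h2 | h2 <;> omega
  have hTne : T ≠ 0 := by
    rw [hT]
    rcases hδ1 with h | h | h <;> rw [h] <;> rcases hδ0 with h' | h' <;> omega
  have hTbound : |T| ≤ (n : ℤ) + 2 := by
    rw [hT]
    rcases hδ1 with h | h | h <;> rw [h] <;> rcases hδ0 with h' | h' <;> rw [h'] <;>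
      simp [abs_le] <;> omega
  have hdbound : |d| ≤ (n : ℤ) := by
    rw [Int.abs_eq_natAbs]
    exact_mod_cast hnd
  have hdT : d * T ≠ 0 := mul_ne_zero hd hTne
  have hle := Int.le_of_dvd (abs_pos.mpr hdT) ((dvd_abs _ _).mpr hdvdT)
  rw [abs_mul] at hle
  have h1 : |d| * |T| ≤ (n : ℤ) * ((n:ℤ) + 2) := by
    apply mul_le_mul hdbound hTbound (abs_nonneg _) (by positivity)
  nlinarith [hle, h1]
end kill

section diag

open Classical in
noncomputable def diagStep (P : ℕ → (ℕ → ℤ) → Prop) (nf : ℕ → ℕ → ℕ)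
    (i : ℕ) (Na : ℕ × (ℕ → ℤ)) : ℕ × (ℕ → ℤ) :=
  (nf i Na.1 + 1, fun j => if j = nf i Na.1 then
    (if ∃ δ : ℕ → ℤ, Z01 δ ∧ (∀ j' ≤ nf i Na.1,
        δ j' = (if j' = nf i Na.1 then 0 else if j' < Na.1 then Na.2 j' else 0)) ∧ P i δ
     then (1:ℤ) else 0)
    else if j < Na.1 then Na.2 j else 0)

noncomputable def diagF (P : ℕ → (ℕ → ℤ) → Prop) (nf : ℕ → ℕ → ℕ) : ℕ → ℕ × (ℕ → ℤ)
  | 0 => (0, fun _ => 0)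
  | i + 1 => diagStep P nf i (diagF P nf i)

lemma diagonal (P : ℕ → (ℕ → ℤ) → Prop) (A : ℕ → ℕ → Prop)
    (hA : ∀ i N, ∃ n, N ≤ n ∧ A i n)
    (hkill : ∀ i n, A i n → ∀ ε ε' : ℕ → ℤ, Z01 ε → Z01 ε' → (∀ j < n, ε j = ε' j) →
      ε n ≠ ε' n → ¬ (P i ε ∧ P i ε')) :
    ∃ ε : ℕ → ℤ, Z01 ε ∧ ∀ i, ¬ P i ε := by
  classical
  choose nf hnf1 hnf2 using hA
  set F := diagF P nf with hF
  have hlen1 : ∀ i, (F (i+1)).1 = nf i (F i).1 + 1 := fun i => rfl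
  have hunf : ∀ i, (F (i+1)).2 = fun j => if j = nf i (F i).1 then
      (if ∃ δ : ℕ → ℤ, Z01 δ ∧ (∀ j' ≤ nf i (F i).1,
          δ j' = (if j' = nf i (F i).1 then 0 else if j' < (F i).1 then (F i).2 j' else 0)) ∧ P i δ
       then (1:ℤ) else 0)
      else if j < (F i).1 then (F i).2 j else 0 := fun i => rfl
  have hlen : ∀ i, (F i).1 < (F (i+1)).1 := by
    intro i
    rw [hlen1]
    exact Nat.lt_succ_of_le (hnf1 i (F i).1)
  have hge : ∀ i, i ≤ (F i).1 := by
    intro i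
    induction i with
    | zero => exact Nat.zero_le _
    | succ i ih => exact Nat.lt_of_le_of_lt ih (hlen i)
  have hmono : ∀ i k, i ≤ k → (F i).1 ≤ (F k).1 := by
    intro i k
    induction k with
    | zero => intro h; rw [Nat.le_zero.mp h]
    | succ k ih =>
      intro h
      by_cases h' : i ≤ k
      · exact (ih h').trans (hlen k).le
      · have : i = k + 1 := by omega
        rw [this]
  have hpre : ∀ i, ∀ j < (F i).1, (F (i+1)).2 j = (F i).2 j := by
    intro i j hj
    rw [hunf]
    have h1 : j ≠ nf i (F i).1 := by have := hnf1 i (F i).1; omega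
    simp only [if_neg h1, if_pos hj]
  have hstab : ∀ i k, i ≤ k → ∀ j < (F i).1, (F k).2 j = (F i).2 j := by
    intro i k
    induction k with
    | zero => intro h j hj; rw [Nat.le_zero.mp h]
    | succ k ih =>
      intro h j hj
      by_cases h' : i ≤ k
      · rw [hpre k j (Nat.lt_of_lt_of_le hj (hmono i k h')), ih h' j hj]
      · have : i = k + 1 := by omega
        rw [this]
  have h01 : ∀ i j, (F i).2 j = 0 ∨ (F i).2 j = 1 := by
    intro i
    induction i with
    | zero => intro j; left; rfl
    | succ i ih =>
      intro j
      rw [hunf]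
      dsimp only
      by_cases h1 : j = nf i (F i).1
      · rw [if_pos h1]
        split
        · right; rfl
        · left; rfl
      · rw [if_neg h1]
        by_cases h2 : j < (F i).1
        · rw [if_pos h2]; exact ih j
        · rw [if_neg h2]; left; rfl
  set ε : ℕ → ℤ := fun j => (F (j+1)).2 j with hε
  have hεval : ∀ i, ∀ j < (F i).1, ε j = (F i).2 j := by
    intro i j hj
    rcases Nat.le_total i (j+1) with h | h
    · exact hstab i (j+1) h j hj
    · have hj' : j < (F (j+1)).1 := Nat.lt_of_lt_of_le (Nat.lt_succ_self j) (hge (j+1))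
      exact (hstab (j+1) i h j hj').symm
  have hZ : Z01 ε := fun j => h01 (j+1) j
  refine ⟨ε, hZ, ?_⟩
  intro i hP
  have hεn1 : ∀ j < nf i (F i).1 + 1, ε j = (F (i+1)).2 j := by
    intro j hj
    apply hεval (i+1)
    rw [hlen1]
    exact hj
  by_cases hex : ∃ δ : ℕ → ℤ, Z01 δ ∧ (∀ j' ≤ nf i (F i).1,
      δ j' = (if j' = nf i (F i).1 then 0 else if j' < (F i).1 then (F i).2 j' else 0)) ∧ P i δ
  · obtain ⟨δ, hδ01, hδag, hδP⟩ := id hex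
    apply hkill i (nf i (F i).1) (hnf2 i (F i).1) ε δ hZ hδ01 ?_ ?_ ⟨hP, hδP⟩
    · intro j hj
      rw [hεn1 j (by omega), hunf, hδag j (le_of_lt hj)]
      simp only [if_neg (Nat.ne_of_lt hj)]
    · rw [hεn1 _ (by omega), hunf, hδag _ le_rfl]
      simp only [if_pos rfl, if_pos hex]
      norm_num
  · apply hex
    refine ⟨ε, hZ, ?_, hP⟩
    intro j hj
    rw [hεn1 j (by omega), hunf]
    dsimp only
    by_cases h1 : j = nf i (F i).1
    · rw [if_pos h1, if_pos h1, if_neg hex]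
    · rw [if_neg h1, if_neg h1]
end diag

section Hgroup
open Nat

def Ssub (ε : ℕ → ℤ) (n : ℕ) : Set (ℚ × ℚ) :=
  {x | (∃ a : ℤ, (a:ℚ) = x.1 - sfun ε n * x.2) ∧ (∃ d : ℤ, (d:ℚ) = (n ! : ℚ) * x.2)}

lemma Smono (ε : ℕ → ℤ) {n m : ℕ} (h : n ≤ m) {x : ℚ × ℚ} (hx : x ∈ Ssub ε n) :
    x ∈ Ssub ε m := by
  obtain ⟨⟨a, ha⟩, ⟨d, hd⟩⟩ := hx
  obtain ⟨c, hc⟩ := sfun_coh ε h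
  obtain ⟨r, hr⟩ := Nat.factorial_dvd_factorial h
  have hn0 : ((n ! : ℕ) : ℚ) ≠ 0 := by exact_mod_cast (Nat.factorial_pos n).ne'
  constructor
  · refine ⟨a - c * d, ?_⟩
    have hcq : ((sfun ε m : ℤ) : ℚ) - ((sfun ε n : ℤ) : ℚ) = ((n ! : ℕ) : ℚ) * (c : ℚ) := by
      exact_mod_cast congrArg (fun z : ℤ => (z : ℚ)) hc
    push_cast
    rw [ha, hd]
    linear_combination x.2 * hcq
  · refine ⟨r * d, ?_⟩
    have hrq : ((m ! : ℕ) : ℚ) = ((n ! : ℕ) : ℚ) * (r : ℚ) := by exact_mod_cast hr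
    push_cast
    rw [hd, hrq]
    ring

def Hsub (ε : ℕ → ℤ) : AddSubgroup (ℚ × ℚ) where
  carrier := {x | ∃ n, x ∈ Ssub ε n}
  zero_mem' := ⟨0, ⟨0, by norm_num⟩, ⟨0, by norm_num⟩⟩
  add_mem' := by
    rintro x y ⟨n, hx⟩ ⟨m, hy⟩
    refine ⟨max n m, ?_⟩
    obtain ⟨⟨a, ha⟩, ⟨d, hd⟩⟩ := Smono ε (le_max_left n m) hx
    obtain ⟨⟨b, hb⟩, ⟨e, he⟩⟩ := Smono ε (le_max_right n m) hy
    exact ⟨⟨a + b, by push_cast; rw [Prod.fst_add, Prod.snd_add, ha, hb]; ring⟩,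
      ⟨d + e, by push_cast; rw [Prod.snd_add, hd, he]; ring⟩⟩
  neg_mem' := by
    rintro x ⟨n, ⟨a, ha⟩, ⟨d, hd⟩⟩
    exact ⟨n, ⟨-a, by push_cast; rw [Prod.fst_neg, Prod.snd_neg, ha]; ring⟩,
      ⟨-d, by push_cast; rw [Prod.snd_neg, hd]; ring⟩⟩

lemma e1_mem (ε : ℕ → ℤ) : ((1:ℚ), (0:ℚ)) ∈ Hsub ε := by
  refine ⟨0, ⟨1, ?_⟩, ⟨0, ?_⟩⟩ <;> norm_num [sfun]

lemma e2_mem (ε : ℕ → ℤ) : ((0:ℚ), (1:ℚ)) ∈ Hsub ε := by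
  refine ⟨0, ⟨0, ?_⟩, ⟨1, ?_⟩⟩ <;> norm_num [sfun]

lemma tm_mem (ε : ℕ → ℤ) (m : ℕ) :
    ((sfun ε m / (m ! : ℚ)), (1 / (m ! : ℚ))) ∈ Hsub ε := by
  have hm0 : ((m ! : ℕ) : ℚ) ≠ 0 := by exact_mod_cast (Nat.factorial_pos m).ne'
  refine ⟨m, ⟨0, ?_⟩, ⟨1, ?_⟩⟩ <;> field_simp <;> simp

lemma H_torsionfree (ε : ℕ → ℤ) : IsTorsionFreeAb ↥(Hsub ε) := by
  intro n x h
  by_cases hn : n = 0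
  · left; exact hn
  · right
    have hx : n • (x : ℚ × ℚ) = 0 := by
      have h' := congrArg Subtype.val h
      rw [AddSubgroup.coe_zsmul] at h'
      simpa using h'
    apply Subtype.ext
    have h1 : n • (x : ℚ × ℚ).1 = 0 := by
      have := congrArg Prod.fst hx
      simpa only [Prod.smul_fst, Prod.fst_zero] using this
    have h2 : n • (x : ℚ × ℚ).2 = 0 := by
      have := congrArg Prod.snd hx
      simpa only [Prod.smul_snd, Prod.snd_zero] using this
    rw [zsmul_eq_mul] at h1 h2
    have hnq : (n : ℚ) ≠ 0 := Int.cast_ne_zero.mpr hn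
    have e1 : (x : ℚ × ℚ).1 = 0 := by
      rcases mul_eq_zero.mp h1 with h | h
      · exact absurd h hnq
      · exact h
    have e2 : (x : ℚ × ℚ).2 = 0 := by
      rcases mul_eq_zero.mp h2 with h | h
      · exact absurd h hnq
      · exact h
    show (x : ℚ × ℚ) = 0
    exact Prod.ext e1 e2

lemma H_reduced (ε : ℕ → ℤ)
    (hbad2 : ∀ (n₀ : ℕ) (a d : ℤ), d ≠ 0 → ¬ Bad2 ε n₀ a d) :
    IsReducedAb ↥(Hsub ε) := by
  rintro ⟨f, hf⟩
  obtain ⟨hne, hdiv⟩ := div_of_embed hf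
  set x : ↥(Hsub ε) := f 1 with hx
  obtain ⟨n₀, ⟨a, ha⟩, ⟨d, hd⟩⟩ := x.2
  have hn₀0 : ((n₀ ! : ℕ) : ℚ) ≠ 0 := by exact_mod_cast (Nat.factorial_pos n₀).ne'
  by_cases hdz : d = 0
  · -- second coordinate vanishes, x = integer multiple of e1
    have hx2 : (x : ℚ × ℚ).2 = 0 := by
      rw [hdz] at hd
      push_cast at hd
      rcases mul_eq_zero.mp hd.symm with h | h
      · exact absurd h hn₀0
      · exact h
    have hx1 : (a : ℚ) = (x : ℚ × ℚ).1 := by rw [ha, hx2]; ring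
    have haz : a ≠ 0 := by
      intro h0
      apply hne
      have : (x : ℚ × ℚ) = 0 := by
        apply Prod.ext
        · rw [← hx1, h0]; simp
        · simpa using hx2
      exact Subtype.ext this
    obtain ⟨y, hy⟩ := hdiv (a.natAbs + 1) (by omega)
    set M : ℤ := ((a.natAbs + 1 : ℕ) : ℤ) with hM
    have hyc : M • (y : ℚ × ℚ) = (x : ℚ × ℚ) := by
      rw [← hy]
      exact (AddSubgroup.coe_zsmul _ _ _)
    have hy2 : (y : ℚ × ℚ).2 = 0 := by
      have h2 : (M : ℚ) * (y : ℚ × ℚ).2 = 0 := by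
        have := congrArg Prod.snd hyc
        simp only [Prod.smul_snd] at this
        simp only [zsmul_eq_mul] at this
        rw [this, hx2]
      rcases mul_eq_zero.mp h2 with h | h
      · exfalso; revert h; push_cast; intro h; exact absurd h (by positivity)
      · exact h
    obtain ⟨k, ⟨b, hb⟩, -⟩ := y.2
    have hb1 : (b : ℚ) = (y : ℚ × ℚ).1 := by rw [hb, hy2]; ring
    have h1 : (M : ℚ) * (y : ℚ × ℚ).1 = (x : ℚ × ℚ).1 := by
      have := congrArg Prod.fst hyc
      simp only [Prod.smul_fst] at this
      simpa only [zsmul_eq_mul] using this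
    have hab : a = M * b := by
      have : (a : ℚ) = (M : ℚ) * (b : ℚ) := by rw [hx1, hb1, h1]
      exact_mod_cast this
    have : M ∣ a := ⟨b, hab⟩
    have h9 := Int.le_of_dvd (abs_pos.mpr haz) ((dvd_abs _ _).mpr this)
    rw [Int.abs_eq_natAbs] at h9
    omega
  · -- second coordinate nonzero: Bad2 holds, contradiction
    apply hbad2 n₀ a d hdz
    intro m hm K
    obtain ⟨y, hy⟩ := hdiv m hm
    obtain ⟨k₀, hk₀⟩ := y.2
    set k : ℕ := max k₀ (max K n₀) with hk
    have hyk : (y : ℚ × ℚ) ∈ Ssub ε k := Smono ε (le_max_left _ _) hk₀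
    obtain ⟨⟨b, hb⟩, -⟩ := hyk
    refine ⟨k, le_trans (le_max_left _ _) (le_max_right _ _), le_trans (le_max_right _ _) (le_max_right _ _), b, ?_⟩
    have hyc : ((m : ℤ)) • (y : ℚ × ℚ) = (x : ℚ × ℚ) := by
      rw [← hy]
      exact (AddSubgroup.coe_zsmul _ _ _)
    have h1 : (m : ℚ) * (y : ℚ × ℚ).1 = (x : ℚ × ℚ).1 := by
      have := congrArg Prod.fst hyc
      simp only [Prod.smul_fst] at this
      simpa only [zsmul_eq_mul, Int.cast_natCast] using this
    have h2 : (m : ℚ) * (y : ℚ × ℚ).2 = (x : ℚ × ℚ).2 := by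
      have := congrArg Prod.snd hyc
      simp only [Prod.smul_snd] at this
      simpa only [zsmul_eq_mul, Int.cast_natCast] using this
    have key : ((a * (n₀ ! : ℤ) - d * (sfun ε k - sfun ε n₀) : ℤ) : ℚ)
        = ((m : ℤ) * (n₀ ! : ℤ) * b : ℤ) := by
      push_cast
      rw [ha, hd, hb, ← h1, ← h2]
      ring
    exact_mod_cast key
end Hgroup


open Nat in
/-- There is no universal countable reduced torsion-free abelian group: for every countable
reduced torsion-free abelian group `G` there is a countable reduced torsion-free abelian
group `H` which does not embed into `G`. -/
theorem no_universal_countable_rtf (G : Type) [AddCommGroup G] [Countable G]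
    (hGtf : IsTorsionFreeAb G) (hGred : IsReducedAb G) :
    ∃ H : AddCommGrpCat.{0}, Countable H ∧ IsTorsionFreeAb H ∧ IsReducedAb H ∧
      ¬ ∃ f : H →+ G, Function.Injective f := by
  classical
  have hP' : ∀ u : G, ∃ p c : ℕ, 0 < p ∧
      (u ≠ 0 → (p.Prime ∧ ¬∃ g : G, ((p:ℤ)^c) • g = u)) := by
    intro u
    by_cases h : u = 0
    · exact ⟨2, 0, by norm_num, fun h' => absurd h h'⟩
    · obtain ⟨p, hp, c, hc⟩ := exists_prime_bound hGtf hGred h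
      exact ⟨p, c, hp.pos, fun _ => ⟨hp, hc⟩⟩
  choose pf cf hpos hspec using hP'
  obtain ⟨e, he⟩ := exists_surjective_nat ((G × G) ⊕ (ℕ × ℤ × ℤ))
  set P : ℕ → (ℕ → ℤ) → Prop := fun i ε =>
    Sum.elim (fun uv : G × G => uv.1 ≠ 0 ∧ Bad1 ε uv.1 uv.2)
      (fun t : ℕ × ℤ × ℤ => t.2.2 ≠ 0 ∧ Bad2 ε t.1 t.2.1 t.2.2) (e i) with hPdef
  set A : ℕ → ℕ → Prop := fun i n =>
    Sum.elim (fun uv : G × G => 1 ≤ n ∧ pf uv.1 ∣ n + 1)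
      (fun t : ℕ × ℤ × ℤ => 1 ≤ n ∧ t.1 ≤ n ∧ (t.2.2).natAbs ≤ n) (e i) with hAdef
  have hA : ∀ i N, ∃ n, N ≤ n ∧ A i n := by
    intro i N
    rw [hAdef]
    rcases hei : e i with ⟨u, v⟩ | ⟨n₀, a, d⟩
    · refine ⟨pf u * (N + 2) - 1, ?_, ?_⟩
      · have h1 : 1 ≤ pf u := hpos u
        have h2 : N + 2 ≤ pf u * (N + 2) := Nat.le_mul_of_pos_left _ h1
        omega
      · simp only [hei, Sum.elim_inl]
        have h1 : 1 ≤ pf u := hpos u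
        have h2 : N + 2 ≤ pf u * (N + 2) := Nat.le_mul_of_pos_left _ h1
        constructor
        · omega
        · have : pf u * (N + 2) - 1 + 1 = pf u * (N + 2) := by omega
          rw [this]
          exact Dvd.intro _ rfl
    · refine ⟨N + n₀ + d.natAbs + 1, by omega, ?_⟩
      simp only [hei, Sum.elim_inr]
      omega
  have hkill : ∀ i n, A i n → ∀ ε ε' : ℕ → ℤ, Z01 ε → Z01 ε' →
      (∀ j < n, ε j = ε' j) → ε n ≠ ε' n → ¬ (P i ε ∧ P i ε') := by
    intro i n hAn ε ε' hε hε' hag hne hPP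
    rw [hAdef] at hAn
    rw [hPdef] at hPP
    rcases hei : e i with ⟨u, v⟩ | ⟨n₀, a, d⟩
    · simp only [hei, Sum.elim_inl] at hAn hPP
      obtain ⟨⟨hu, hB⟩, ⟨-, hB'⟩⟩ := hPP
      obtain ⟨hsp, hsc⟩ := hspec u hu
      exact kill1 hGtf hsp hsc hAn.1 hAn.2 hε hε' hag hne ⟨hB, hB'⟩
    · simp only [hei, Sum.elim_inr] at hAn hPP
      obtain ⟨⟨hd, hB⟩, ⟨-, hB'⟩⟩ := hPP
      exact kill2 hd hAn.1 hAn.2.1 hAn.2.2 hε hε' hag hne ⟨hB, hB'⟩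
  obtain ⟨ε, hZ, hgood⟩ := diagonal P A hA hkill
  refine ⟨AddCommGrpCat.of ↥(Hsub ε), ?_, ?_, ?_, ?_⟩
  · exact inferInstanceAs (Countable ↥(Hsub ε))
  · exact H_torsionfree ε
  · apply H_reduced ε
    intro n₀ a d hd hB
    obtain ⟨i, hi⟩ := he (Sum.inr (n₀, a, d))
    apply hgood i
    rw [hPdef]
    simp only [hi, Sum.elim_inr]
    exact ⟨hd, hB⟩
  · rintro ⟨f, hf⟩
    set e1H : ↥(Hsub ε) := ⟨((1:ℚ), (0:ℚ)), e1_mem ε⟩ with he1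
    set e2H : ↥(Hsub ε) := ⟨((0:ℚ), (1:ℚ)), e2_mem ε⟩ with he2
    set u : G := f e1H with hu
    set v : G := f e2H with hv
    have hune : u ≠ 0 := by
      intro h0
      have h1 : e1H = 0 := hf (by rw [map_zero]; exact h0)
      have h2 := congrArg Subtype.val h1
      simp only [he1] at h2
      have := congrArg Prod.fst h2
      norm_num at this
    have hB : Bad1 ε u v := by
      intro m
      have hm0 : ((m ! : ℕ) : ℚ) ≠ 0 := by exact_mod_cast (Nat.factorial_pos m).ne'
      set tmH : ↥(Hsub ε) := ⟨((sfun ε m / (m ! : ℚ)), (1 / (m ! : ℚ))), tm_mem ε m⟩ with htm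
      refine ⟨f tmH, ?_⟩
      have hid : ((m ! : ℕ) : ℤ) • tmH = (sfun ε m) • e1H + e2H := by
        apply Subtype.ext
        rw [AddSubgroup.coe_add, AddSubgroup.coe_zsmul, AddSubgroup.coe_zsmul]
        simp only [he1, he2, htm]
        apply Prod.ext
        · simp only [Prod.smul_fst, Prod.fst_add, zsmul_eq_mul, Prod.fst_mul, Prod.fst_intCast, mul_one, mul_zero, add_zero, zero_add]
          push_cast
          field_simp
        · simp only [Prod.smul_snd, Prod.snd_add, zsmul_eq_mul, Prod.snd_mul, Prod.snd_intCast, mul_one, mul_zero, add_zero, zero_add]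
          push_cast
          field_simp
      rw [← map_zsmul, hid, map_add, map_zsmul]
    obtain ⟨i, hi⟩ := he (Sum.inl (u, v))
    apply hgood i
    rw [hPdef]
    simp only [hi, Sum.elim_inl]
    exact ⟨hune, hB⟩
end
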